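/- arXiv:2303.04127 — 3 statements merged into one kernel-verified Lean document; each statement's English description precedes it below -/
import Mathlib

section
/- Under the ergodic environment assumption and the quenched weak-convergence assumption, for Q-almost every ω ∈ Ω the following holds: for every compact set A ⊂ ℝ^d and every bounded uniformly continuous function G : E → ℝ, one has (1/n^d) · Σ_{x ∈ ℤ^d} 1_A(x/n) · 1_{Ω₀}(τ_x ω) · | ∫_E G(T_{x/n} z) dμ_n^{τ_x ω}(z) − ∫_E G(T_{x/n} z) dP(z) | → 0 as n → ∞. -/
set_option linter.unusedSectionVars false
set_option linter.unusedVariables false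
set_option maxHeartbeats 2000000

open MeasureTheory Filter Topology ProbabilityTheory Metric BoundedContinuousFunction NNReal ENNReal Finset

namespace Stmt0Aux


variable {d : ℕ}

noncomputable def cube (c : Fin d → ℤ) (m : ℕ) : Finset (Fin d → ℤ) :=
  Finset.Icc (fun i => c i - m) (fun i => c i + m)

lemma mem_cube {c x : Fin d → ℤ} {m : ℕ} :
    x ∈ cube c m ↔ ∀ i, |x i - c i| ≤ (m : ℤ) := by
  simp only [cube, Finset.mem_Icc, Pi.le_def]
  constructor
  · rintro ⟨h1, h2⟩ i
    rw [abs_le]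
    exact ⟨by linarith [h1 i], by linarith [h2 i]⟩
  · intro h
    constructor <;> intro i <;> have := abs_le.mp (h i) <;> [linarith [this.1]; linarith [this.2]]

lemma card_cube (c : Fin d → ℤ) (m : ℕ) : (cube c m).card = (2 * m + 1) ^ d := by
  rw [cube, Pi.card_Icc]
  have : ∀ i : Fin d, (Finset.Icc (c i - (m:ℤ)) (c i + m)).card = 2 * m + 1 := by
    intro i
    rw [Int.card_Icc]
    have : (c i + (m:ℤ) + 1 - (c i - m)) = 2 * m + 1 := by ring
    rw [this]
    omega
  simp only [this, Finset.prod_const, Finset.card_univ, Fintype.card_fin]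

lemma self_mem_cube (c : Fin d → ℤ) (m : ℕ) : c ∈ cube c m := by
  rw [mem_cube]; intro i; simp

/-- Greedy Vitali selection for cubes. -/
lemma exists_selection (w : (Fin d → ℤ) → ℕ) :
    ∀ (B : Finset (Fin d → ℤ)),
    ∃ sel : Finset (Fin d → ℤ), sel ⊆ B ∧
      (∀ a ∈ sel, ∀ b ∈ sel, a ≠ b → Disjoint (cube a (w a)) (cube b (w b))) ∧
      (∀ x ∈ B, ∃ c ∈ sel, w x ≤ w c ∧ x ∈ cube c (2 * w c)) := by
  intro B
  induction B using Finset.strongInduction with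
  | _ B ih =>
    rcases B.eq_empty_or_nonempty with rfl | hBne
    · exact ⟨∅, by simp⟩
    · obtain ⟨c, hcB, hcmax⟩ := B.exists_max_image w hBne
      set B' := B.filter (fun x => Disjoint (cube x (w x)) (cube c (w c))) with hB'
      have hcB' : c ∉ B' := by
        simp only [hB', Finset.mem_filter]
        rintro ⟨-, hdisj⟩
        have := (Finset.disjoint_self_iff_empty _).mp hdisj
        have hm := self_mem_cube c (w c)
        rw [this] at hm
        exact absurd hm (Finset.notMem_empty _)
      have hB'ss : B' ⊂ B := Finset.ssubset_iff_of_subset (Finset.filter_subset _ _) |>.mpr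
        ⟨c, hcB, hcB'⟩
      obtain ⟨sel', hsub', hdisj', hcov'⟩ := ih B' hB'ss
      refine ⟨insert c sel', ?_, ?_, ?_⟩
      · exact Finset.insert_subset hcB (hsub'.trans (Finset.filter_subset _ _))
      · intro a ha b hb hab
        rcases Finset.mem_insert.mp ha with rfl | ha' <;>
          rcases Finset.mem_insert.mp hb with rfl | hb'
        · exact absurd rfl hab
        · exact ((Finset.mem_filter.mp (hsub' hb')).2).symm
        · exact (Finset.mem_filter.mp (hsub' ha')).2
        · exact hdisj' a ha' b hb' hab
      · intro x hxB
        by_cases hx : x ∈ B'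
        · obtain ⟨c', hc', hwc', hxc'⟩ := hcov' x hx
          exact ⟨c', Finset.mem_insert_of_mem hc', hwc', hxc'⟩
        · refine ⟨c, Finset.mem_insert_self _ _, hcmax x hxB, ?_⟩
          have hndisj : ¬ Disjoint (cube x (w x)) (cube c (w c)) := by
            simp only [hB', Finset.mem_filter] at hx
            tauto
          obtain ⟨y, hy1, hy2⟩ := Finset.not_disjoint_iff.mp hndisj
          rw [mem_cube] at hy1 hy2 ⊢
          intro i
          have h1 := hy1 i
          have h2 := hy2 i
          have hw := hcmax x hxB
          have : |x i - c i| ≤ |x i - y i| + |y i - c i| := by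
            have := abs_sub_abs_le_abs_sub (x i - c i) 0
            calc |x i - c i| = |(x i - y i) + (y i - c i)| := by ring_nf
              _ ≤ |x i - y i| + |y i - c i| := abs_add_le _ _
          have hxy : |x i - y i| = |y i - x i| := abs_sub_comm _ _
          push_cast
          rw [hxy] at this
          calc (|x i - c i| : ℤ) ≤ |y i - x i| + |y i - c i| := this
            _ ≤ (w x : ℤ) + w c := add_le_add h1 h2
            _ ≤ (w c : ℤ) + w c := add_le_add_left (Int.ofNat_le.mpr hw) _
            _ = 2 * (w c : ℤ) := by ring

/-- Counting consequence: the covering bound. -/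
lemma covering_bound (lam : ℝ) (hlam : 0 < lam) (f : (Fin d → ℤ) → ℝ) (hf : ∀ y, 0 ≤ f y)
    (K L : ℕ) (B : Finset (Fin d → ℤ)) (hBsub : B ⊆ cube 0 K)
    (w : (Fin d → ℤ) → ℕ) (hwL : ∀ x ∈ B, w x ≤ L)
    (hw : ∀ x ∈ B, lam * (2 * w x + 1) ^ d ≤ ∑ y ∈ cube x (w x), f y) :
    lam * B.card ≤ 2 ^ d * ∑ y ∈ cube 0 (K + L), f y := by
  obtain ⟨sel, hsel_sub, hsel_disj, hsel_cov⟩ := exists_selection w B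
  -- cubes of selected points are inside the big cube
  have hinside : ∀ c ∈ sel, cube c (w c) ⊆ cube 0 (K + L) := by
    intro c hc y hy
    rw [mem_cube] at hy ⊢
    intro i
    have h1 := hy i
    have h2 := (mem_cube.mp (hBsub (hsel_sub hc))) i
    simp only [Pi.zero_apply, sub_zero] at h2 ⊢
    have h3 : (w c : ℤ) ≤ L := Int.ofNat_le.mpr (hwL c (hsel_sub hc))
    calc |y i| = |(y i - c i) + c i| := by ring_nf
      _ ≤ |y i - c i| + |c i| := abs_add_le _ _
      _ ≤ (w c : ℤ) + K := add_le_add h1 h2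
      _ ≤ (L : ℤ) + K := add_le_add_left h3 _
      _ = ((K + L : ℕ) : ℤ) := by push_cast; ring
  -- card bound
  have hcard : (B.card : ℝ) ≤ ∑ c ∈ sel, ((4 * w c + 1 : ℕ) : ℝ) ^ d := by
    have hBsub2 : B ⊆ sel.biUnion (fun c => cube c (2 * w c)) := by
      intro x hx
      obtain ⟨c, hc, -, hxc⟩ := hsel_cov x hx
      exact Finset.mem_biUnion.mpr ⟨c, hc, hxc⟩
    calc (B.card : ℝ) ≤ ((sel.biUnion (fun c => cube c (2 * w c))).card : ℝ) := by
          exact_mod_cast Finset.card_le_card hBsub2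
      _ ≤ ∑ c ∈ sel, ((cube c (2 * w c)).card : ℝ) := by
          exact_mod_cast Finset.card_biUnion_le
      _ = ∑ c ∈ sel, ((4 * w c + 1 : ℕ) : ℝ) ^ d := by
          refine Finset.sum_congr rfl fun c _ => ?_
          rw [card_cube]
          push_cast
          ring_nf
  -- sum over disjoint selected cubes
  have hdisjsum : ∑ c ∈ sel, ∑ y ∈ cube c (w c), f y ≤ ∑ y ∈ cube 0 (K + L), f y := by
    rw [← Finset.sum_biUnion hsel_disj]
    apply Finset.sum_le_sum_of_subset_of_nonneg
    · intro y hy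
      obtain ⟨c, hc, hyc⟩ := Finset.mem_biUnion.mp hy
      exact hinside c hc hyc
    · intro y _ _; exact hf y
  calc lam * B.card ≤ lam * ∑ c ∈ sel, ((4 * w c + 1 : ℕ) : ℝ) ^ d := by
        nlinarith [hcard]
    _ ≤ 2 ^ d * ∑ c ∈ sel, lam * ((2 * w c + 1 : ℕ) : ℝ) ^ d := by
        rw [Finset.mul_sum, Finset.mul_sum]
        apply Finset.sum_le_sum
        intro c _
        have h1 : ((4 * w c + 1 : ℕ) : ℝ) ≤ 2 * ((2 * w c + 1 : ℕ) : ℝ) := by push_cast; linarith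
        have h2 : ((4 * w c + 1 : ℕ) : ℝ) ^ d ≤ (2 * ((2 * w c + 1 : ℕ) : ℝ)) ^ d := by
          apply pow_le_pow_left₀ (by positivity) h1
        rw [mul_pow] at h2
        calc lam * ((4 * w c + 1 : ℕ) : ℝ) ^ d ≤ lam * (2 ^ d * ((2 * w c + 1 : ℕ):ℝ) ^ d) := by
              nlinarith
          _ = 2 ^ d * (lam * ((2 * w c + 1 : ℕ) : ℝ) ^ d) := by ring
    _ ≤ 2 ^ d * ∑ c ∈ sel, ∑ y ∈ cube c (w c), f y := by
        apply mul_le_mul_of_nonneg_left _ (by positivity)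
        apply Finset.sum_le_sum
        intro c hc
        have := hw c (hsel_sub hc)
        calc lam * ((2 * w c + 1 : ℕ) : ℝ) ^ d = lam * ((2 * (w c) + 1 : ℝ)) ^ d := by push_cast; ring_nf
          _ ≤ _ := this
    _ ≤ 2 ^ d * ∑ y ∈ cube 0 (K + L), f y := by
        apply mul_le_mul_of_nonneg_left hdisjsum (by positivity)





variable {d : ℕ} {Ω : Type*} [MeasurableSpace Ω]

/-- count of visits to `S` in the centered cube of radius `m`. -/
noncomputable def cnt (τ : (Fin d → ℤ) → Ω → Ω) (S : Set Ω) (m : ℕ) (ω : Ω) : ℝ :=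
  ∑ y ∈ cube (0 : Fin d → ℤ) m, S.indicator 1 (τ y ω)

lemma measurable_cnt (τ : (Fin d → ℤ) → Ω → Ω) (hτ_meas : ∀ z, Measurable (τ z))
    {S : Set Ω} (hS : MeasurableSet S) (m : ℕ) : Measurable (cnt τ S m) := by
  apply Finset.measurable_sum
  intro y _
  exact (measurable_const.indicator hS).comp (hτ_meas y)

lemma cnt_nonneg (τ : (Fin d → ℤ) → Ω → Ω) (S : Set Ω) (m : ℕ) (ω : Ω) :
    0 ≤ cnt τ S m ω :=
  Finset.sum_nonneg fun y _ => Set.indicator_nonneg (fun _ _ => zero_le_one) _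

lemma measurableSet_DL (τ : (Fin d → ℤ) → Ω → Ω) (hτ_meas : ∀ z, Measurable (τ z))
    {S : Set Ω} (hS : MeasurableSet S) (lam : ℝ) (L : ℕ) :
    MeasurableSet {ω | ∃ m : ℕ, 1 ≤ m ∧ m ≤ L ∧ lam * (2 * (m:ℝ) + 1) ^ d ≤ cnt τ S m ω} := by
  have : {ω | ∃ m : ℕ, 1 ≤ m ∧ m ≤ L ∧ lam * (2 * (m:ℝ) + 1) ^ d ≤ cnt τ S m ω}
      = ⋃ m : ℕ, ⋃ (_ : 1 ≤ m ∧ m ≤ L), {ω | lam * (2 * (m:ℝ) + 1) ^ d ≤ cnt τ S m ω} := by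
    ext ω; simp only [Set.mem_setOf_eq, Set.mem_iUnion]; tauto
  rw [this]
  refine MeasurableSet.iUnion fun m => MeasurableSet.iUnion fun _ => ?_
  exact measurableSet_le measurable_const (measurable_cnt τ hτ_meas hS m)





section Max

variable {d : ℕ} {Ω : Type*} [MeasurableSpace Ω] (Q : Measure Ω) [IsProbabilityMeasure Q]
  (τ : (Fin d → ℤ) → Ω → Ω)

-- reindexing: counting visits around the shifted point
lemma cnt_shift (hτ_add : ∀ z w, τ (z + w) = τ z ∘ τ w) (S : Set Ω) (m : ℕ)
    (x : Fin d → ℤ) (ω : Ω) :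
    cnt τ S m (τ x ω) = ∑ y ∈ cube x m, S.indicator 1 (τ y ω) := by
  unfold cnt
  refine Finset.sum_bij' (fun y _ => y + x) (fun z _ => z - x) ?_ ?_ ?_ ?_ ?_
  · intro y hy
    simp only [cube, Finset.mem_Icc, Pi.le_def] at hy ⊢
    constructor <;> intro i <;>
      [ (have := hy.1 i; simp only [Pi.zero_apply, zero_sub] at this;
         simp only [Pi.add_apply]; linarith);
        (have := hy.2 i; simp only [Pi.zero_apply, zero_add] at this;
         simp only [Pi.add_apply]; linarith) ]
  · intro z hz
    simp only [cube, Finset.mem_Icc, Pi.le_def] at hz ⊢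
    constructor <;> intro i <;>
      [ (have := hz.1 i; simp only [Pi.zero_apply, zero_sub, Pi.sub_apply]; linarith);
        (have := hz.2 i; simp only [Pi.zero_apply, zero_add, Pi.sub_apply]; linarith) ]
  · intro y _; simp
  · intro z _; simp
  · intro y _
    have : τ y (τ x ω) = τ (y + x) ω := by
      rw [hτ_add y x]; rfl
    rw [this]

-- the deterministic bound, specialized per ω
lemma pointwise_bound (hτ_add : ∀ z w, τ (z + w) = τ z ∘ τ w)
    (S : Set Ω) {lam : ℝ} (hlam : 0 < lam) (L K : ℕ) (ω : Ω) :
    lam * ∑ x ∈ cube (0 : Fin d → ℤ) K,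
        ({ω' | ∃ m : ℕ, 1 ≤ m ∧ m ≤ L ∧ lam * (2 * (m:ℝ) + 1) ^ d ≤ cnt τ S m ω'} : Set Ω).indicator 1 (τ x ω)
      ≤ 2 ^ d * ∑ y ∈ cube (0 : Fin d → ℤ) (K + L), S.indicator 1 (τ y ω) := by
  classical
  set DL : Set Ω := {ω' | ∃ m : ℕ, 1 ≤ m ∧ m ≤ L ∧ lam * (2 * (m:ℝ) + 1) ^ d ≤ cnt τ S m ω'}
  set B : Finset (Fin d → ℤ) := (cube (0 : Fin d → ℤ) K).filter (fun x => τ x ω ∈ DL) with hB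
  have hsum_card : ∑ x ∈ cube (0 : Fin d → ℤ) K, DL.indicator (1 : Ω → ℝ) (τ x ω) = B.card := by
    rw [hB, Finset.card_filter]
    push_cast
    refine Finset.sum_congr rfl fun x _ => ?_
    by_cases h : τ x ω ∈ DL <;> simp [h]
  rw [hsum_card]
  set w : (Fin d → ℤ) → ℕ := fun x =>
    if h : ∃ m : ℕ, 1 ≤ m ∧ m ≤ L ∧ lam * (2 * (m:ℝ) + 1) ^ d ≤ cnt τ S m (τ x ω)
    then h.choose else 0 with hwdef
  have hwspec : ∀ x ∈ B, 1 ≤ w x ∧ w x ≤ L ∧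
      lam * (2 * (w x : ℝ) + 1) ^ d ≤ cnt τ S (w x) (τ x ω) := by
    intro x hx
    have hmem : τ x ω ∈ DL := (Finset.mem_filter.mp hx).2
    have h : ∃ m : ℕ, 1 ≤ m ∧ m ≤ L ∧ lam * (2 * (m:ℝ) + 1) ^ d ≤ cnt τ S m (τ x ω) := hmem
    rw [hwdef]
    simp only [dif_pos h]
    exact h.choose_spec
  apply covering_bound lam hlam (fun y => S.indicator 1 (τ y ω))
    (fun y => Set.indicator_nonneg (fun _ _ => zero_le_one) _) K L B
    (Finset.filter_subset _ _) w (fun x hx => (hwspec x hx).2.1)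
  intro x hx
  have := (hwspec x hx).2.2
  rw [cnt_shift τ hτ_add S (w x) x ω] at this
  calc lam * (2 * (w x : ℝ) + 1) ^ d ≤ _ := this

lemma maximal_ineq (hτ_meas : ∀ z, Measurable (τ z))
    (hτ_add : ∀ z w, τ (z + w) = τ z ∘ τ w)
    (hτ_pres : ∀ z, MeasurePreserving (τ z) Q Q)
    {S : Set Ω} (hS : MeasurableSet S) {lam : ℝ} (hlam : 0 < lam) :
    Q {ω | ∃ m : ℕ, 1 ≤ m ∧ lam * (2 * (m:ℝ) + 1) ^ d ≤ cnt τ S m ω}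
      ≤ ENNReal.ofReal (2 ^ d * (Q S).toReal / lam) := by
  classical
  set DL : ℕ → Set Ω := fun L =>
    {ω | ∃ m : ℕ, 1 ≤ m ∧ m ≤ L ∧ lam * (2 * (m:ℝ) + 1) ^ d ≤ cnt τ S m ω} with hDL
  have hDLmeas : ∀ L, MeasurableSet (DL L) := fun L => measurableSet_DL τ hτ_meas hS lam L
  have hmono : Monotone DL := by
    intro L L' hLL ω
    rintro ⟨m, h1, h2, h3⟩
    exact ⟨m, h1, h2.trans hLL, h3⟩
  have hunion : {ω | ∃ m : ℕ, 1 ≤ m ∧ lam * (2 * (m:ℝ) + 1) ^ d ≤ cnt τ S m ω} = ⋃ L, DL L := by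
    ext ω
    simp only [Set.mem_setOf_eq, Set.mem_iUnion, hDL]
    constructor
    · rintro ⟨m, h1, h3⟩; exact ⟨m, m, h1, le_refl _, h3⟩
    · rintro ⟨L, m, h1, _, h3⟩; exact ⟨m, h1, h3⟩
  rw [hunion]
  rw [Monotone.measure_iUnion hmono]
  refine iSup_le fun L => ?_
  -- fixed L: bound via integrating the pointwise bound over ω for each K, then K → ∞
  have keyK : ∀ K : ℕ,
      lam * ((2 * (K:ℝ) + 1) ^ d * (Q (DL L)).toReal)
        ≤ 2 ^ d * ((2 * ((K:ℝ) + L) + 1) ^ d * (Q S).toReal) := by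
    intro K
    have hint : ∀ (A : Set Ω), MeasurableSet A → ∀ x : Fin d → ℤ,
        ∫ ω, A.indicator (1 : Ω → ℝ) (τ x ω) ∂Q = (Q A).toReal := by
      intro A hA x
      have hrw : (fun ω => A.indicator (1 : Ω → ℝ) (τ x ω))
          = (τ x ⁻¹' A).indicator (1 : Ω → ℝ) := by
        ext ω
        simp only [Set.indicator_apply, Set.mem_preimage, Pi.one_apply]
      rw [hrw, integral_indicator_one (hA.preimage (hτ_meas x)), measureReal_def,
        (hτ_pres x).measure_preimage hA.nullMeasurableSet]
    have hints : ∀ (A : Set Ω), MeasurableSet A → ∀ x : Fin d → ℤ,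
        Integrable (fun ω => A.indicator (1 : Ω → ℝ) (τ x ω)) Q := by
      intro A hA x
      have hrw : (fun ω => A.indicator (1 : Ω → ℝ) (τ x ω))
          = (τ x ⁻¹' A).indicator (1 : Ω → ℝ) := by
        ext ω
        simp only [Set.indicator_apply, Set.mem_preimage, Pi.one_apply]
      rw [hrw]
      exact (integrable_const (1:ℝ)).indicator (hA.preimage (hτ_meas x))
    have hcard1 : ((cube (0 : Fin d → ℤ) K).card : ℝ) = (2 * (K:ℝ) + 1) ^ d := by
      rw [card_cube]; push_cast; ring
    have hcard2 : ((cube (0 : Fin d → ℤ) (K + L)).card : ℝ) = (2 * ((K:ℝ) + L) + 1) ^ d := by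
      rw [card_cube]; push_cast; ring
    have hIleft : ∫ ω, (lam * ∑ x ∈ cube (0 : Fin d → ℤ) K, (DL L).indicator 1 (τ x ω)) ∂Q
        = lam * ((2 * (K:ℝ) + 1) ^ d * (Q (DL L)).toReal) := by
      rw [integral_const_mul, integral_finset_sum _ (fun x _ => hints _ (hDLmeas L) x)]
      simp_rw [hint _ (hDLmeas L)]
      rw [Finset.sum_const, nsmul_eq_mul, hcard1]
    have hIright : ∫ ω, ((2:ℝ) ^ d * ∑ y ∈ cube (0 : Fin d → ℤ) (K + L), S.indicator 1 (τ y ω)) ∂Q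
        = 2 ^ d * ((2 * ((K:ℝ) + L) + 1) ^ d * (Q S).toReal) := by
      rw [integral_const_mul, integral_finset_sum _ (fun x _ => hints _ hS x)]
      simp_rw [hint _ hS]
      rw [Finset.sum_const, nsmul_eq_mul, hcard2]
    rw [← hIleft, ← hIright]
    apply integral_mono
    · exact (Integrable.const_mul (integrable_finset_sum _ (fun x _ => hints _ (hDLmeas L) x)) lam)
    · exact (Integrable.const_mul (integrable_finset_sum _ (fun x _ => hints _ hS x)) (2^d))
    · intro ω
      exact pointwise_bound τ hτ_add S hlam L K ω
  -- now pass to the limit in K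
  have hKbound : ∀ K : ℕ, (Q (DL L)).toReal
      ≤ (2 ^ d * (Q S).toReal / lam) * ((2 * ((K:ℝ) + L) + 1) / (2 * K + 1)) ^ d := by
    intro K
    have h1 : (0:ℝ) < 2 * (K:ℝ) + 1 := by positivity
    have h2 := keyK K
    rw [div_pow]
    rw [← sub_nonneg] at h2 ⊢
    calc (0:ℝ) ≤ (2 ^ d * ((2 * ((K:ℝ) + L) + 1) ^ d * (Q S).toReal)
          - lam * ((2 * (K:ℝ) + 1) ^ d * (Q (DL L)).toReal)) / (lam * (2 * (K:ℝ) + 1) ^ d) := by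
          apply div_nonneg (by linarith) (by positivity)
      _ = 2 ^ d * (Q S).toReal / lam * ((2 * ((K:ℝ) + L) + 1) ^ d / (2 * (K:ℝ) + 1) ^ d)
          - (Q (DL L)).toReal := by
          field_simp
  have hlim : Tendsto (fun K : ℕ =>
      (2 ^ d * (Q S).toReal / lam) * ((2 * ((K:ℝ) + L) + 1) / (2 * K + 1)) ^ d) atTop
      (𝓝 (2 ^ d * (Q S).toReal / lam)) := by
    have hratio : Tendsto (fun K : ℕ => ((2 * ((K:ℝ) + L) + 1) / (2 * K + 1))) atTop (𝓝 1) := by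
      have : ∀ K : ℕ, ((2 * ((K:ℝ) + L) + 1) / (2 * K + 1)) = 1 + (2 * L) / (2 * K + 1) := by
        intro K
        have h1 : (0:ℝ) < 2 * (K:ℝ) + 1 := by positivity
        field_simp
        ring
      simp_rw [this]
      have h0 : Tendsto (fun K : ℕ => (2 * (L:ℝ)) / (2 * K + 1)) atTop (𝓝 0) := by
        apply Tendsto.div_atTop tendsto_const_nhds
        apply Filter.Tendsto.atTop_add _ tendsto_const_nhds
        exact (tendsto_natCast_atTop_atTop (R := ℝ)).const_mul_atTop (by norm_num)
      have := h0.const_add (1:ℝ)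
      simpa using this
    have hpow : Tendsto (fun K : ℕ => ((2 * ((K:ℝ) + L) + 1) / (2 * K + 1)) ^ d) atTop (𝓝 1) := by
      have := hratio.pow d
      simpa using this
    have := hpow.const_mul (2 ^ d * (Q S).toReal / lam)
    simpa using this
  have hfinal : (Q (DL L)).toReal ≤ 2 ^ d * (Q S).toReal / lam :=
    ge_of_tendsto hlim (Filter.Eventually.of_forall hKbound)
  rw [ENNReal.le_ofReal_iff_toReal_le (measure_ne_top Q _)]
  · exact hfinal
  · positivity

end Max



section TestFamily

variable {E : Type*} [MetricSpace E] [TopologicalSpace.SeparableSpace E]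
  [MeasurableSpace E] [BorelSpace E]

lemma testAgainstNN_coe_eq (m : Measure E) [IsProbabilityMeasure m] (g : E →ᵇ ℝ≥0) :
    ((∫⁻ z, (g z : ℝ≥0∞) ∂m).toNNReal : ℝ) = ∫ z, (g z : ℝ) ∂m := by
  rw [integral_eq_lintegral_of_nonneg_ae (Filter.Eventually.of_forall (fun z => (g z).coe_nonneg))
    ((NNReal.continuous_coe.comp g.continuous).measurable.aestronglyMeasurable)]
  simp_rw [ENNReal.ofReal_coe_nnreal]
  rfl

lemma exists_test_family (P : Measure E) [IsProbabilityMeasure P] {η : ℝ} (hη : 0 < η) :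
    ∃ (J : Finset (E →ᵇ ℝ≥0)) (δ : ℝ), 0 < δ ∧
      ∀ (ν : Measure E), IsProbabilityMeasure ν →
        ((∀ g ∈ J, |(∫ z, (g z : ℝ) ∂ν) - ∫ z, (g z : ℝ) ∂P| ≤ δ) →
        levyProkhorovEDist ν P < ENNReal.ofReal η) := by
  classical
  set P' : ProbabilityMeasure E := ⟨P, inferInstance⟩ with hP'
  set Φ := (LevyProkhorov.probabilityMeasureHomeomorph (Ω := E))
  set U : Set (ProbabilityMeasure E) := Φ ⁻¹' (Metric.ball (Φ P') (η / 2)) with hUdef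
  have hU : U ∈ 𝓝 P' :=
    Φ.continuous.continuousAt.preimage_mem_nhds (Metric.ball_mem_nhds _ (by linarith))
  have ind1 : IsInducing (ProbabilityMeasure.toFiniteMeasure :
      ProbabilityMeasure E → FiniteMeasure E) := ⟨rfl⟩
  have ind2 : IsInducing (FiniteMeasure.toWeakDualBCNN :
      FiniteMeasure E → WeakDual ℝ≥0 (E →ᵇ ℝ≥0)) := ⟨rfl⟩
  have ind3 : IsInducing (fun (φ : WeakDual ℝ≥0 (E →ᵇ ℝ≥0)) => (fun g => φ g :
      (E →ᵇ ℝ≥0) → ℝ≥0)) := ⟨rfl⟩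
  rw [ind1.nhds_eq_comap, ind2.nhds_eq_comap, ind3.nhds_eq_comap, nhds_pi] at hU
  obtain ⟨t3, ht3, hsub3⟩ := Filter.mem_comap.mp hU
  obtain ⟨t2, ht2, hsub2⟩ := Filter.mem_comap.mp ht3
  obtain ⟨t1, ht1, hsub1⟩ := Filter.mem_comap.mp ht2
  obtain ⟨I, hIfin, V, hV, hpi⟩ := Filter.mem_pi.mp ht1
  -- choose balls
  have hball : ∀ g : E →ᵇ ℝ≥0, ∃ e : ℝ, 0 < e ∧
      Metric.ball ((P'.toFiniteMeasure.toWeakDualBCNN : (E →ᵇ ℝ≥0) → ℝ≥0) g) e ⊆ V g := by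
    intro g
    exact Metric.mem_nhds_iff.mp (hV g)
  choose e he hesub using hball
  set J : Finset (E →ᵇ ℝ≥0) := hIfin.toFinset with hJ
  set δ : ℝ := if hne : J.Nonempty then (J.inf' hne e) / 2 else 1 with hδ
  have hδpos : 0 < δ := by
    rw [hδ]
    split_ifs with hne
    · obtain ⟨g, hg, hge⟩ := Finset.exists_mem_eq_inf' hne e
      rw [hge]
      have := he g
      positivity
    · norm_num
  refine ⟨J, δ, hδpos, ?_⟩
  intro ν hν hclose
  haveI := hν
  set ν' : ProbabilityMeasure E := ⟨ν, hν⟩ with hν'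
  -- show ν' ∈ U
  have hmemU : ν' ∈ U := by
    apply hsub3
    apply hsub2
    apply hsub1
    apply hpi
    intro g hgI
    apply hesub g
    rw [Metric.mem_ball]
    show dist ((ν'.toFiniteMeasure.toWeakDualBCNN : (E →ᵇ ℝ≥0) → ℝ≥0) g)
      ((P'.toFiniteMeasure.toWeakDualBCNN : (E →ᵇ ℝ≥0) → ℝ≥0) g) < e g
    have hgJ : g ∈ J := hIfin.mem_toFinset.mpr hgI
    have hval : ∀ (m' : ProbabilityMeasure E),
        ((m'.toFiniteMeasure.toWeakDualBCNN : (E →ᵇ ℝ≥0) → ℝ≥0) g : ℝ)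
          = ∫ z, (g z : ℝ) ∂(m' : Measure E) := by
      intro m'
      have : (m'.toFiniteMeasure.toWeakDualBCNN : (E →ᵇ ℝ≥0) → ℝ≥0) g
          = (∫⁻ z, (g z : ℝ≥0∞) ∂(m' : Measure E)).toNNReal := rfl
      rw [this]
      exact testAgainstNN_coe_eq (m' : Measure E) g
    have hd : dist ((ν'.toFiniteMeasure.toWeakDualBCNN : (E →ᵇ ℝ≥0) → ℝ≥0) g)
        ((P'.toFiniteMeasure.toWeakDualBCNN : (E →ᵇ ℝ≥0) → ℝ≥0) g)
        = |(∫ z, (g z : ℝ) ∂ν) - ∫ z, (g z : ℝ) ∂P| := by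
      rw [NNReal.dist_eq, hval ν', hval P']
      rfl
    rw [hd]
    have hJle : δ < e g := by
      rw [hδ]
      have hne : J.Nonempty := ⟨g, hgJ⟩
      rw [dif_pos hne]
      have h1 : J.inf' hne e ≤ e g := Finset.inf'_le e hgJ
      have h2 : 0 < J.inf' hne e := by
        obtain ⟨g', hg', hge⟩ := Finset.exists_mem_eq_inf' hne e
        rw [hge]; exact he g'
      linarith
    exact lt_of_le_of_lt (hclose g hgJ) hJle
  -- from U to LP edist
  have hdist : dist (Φ ν') (Φ P') < η / 2 := hmemU
  have hlpdist : levyProkhorovDist (ν : Measure E) P < η / 2 := by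
    have : dist (Φ ν') (Φ P') = levyProkhorovDist (ν : Measure E) P := rfl
    rwa [this] at hdist
  have hnetop : levyProkhorovEDist (ν : Measure E) P ≠ ⊤ := levyProkhorovEDist_ne_top _ _
  calc levyProkhorovEDist (ν : Measure E) P
      = ENNReal.ofReal (levyProkhorovDist (ν : Measure E) P) := by
        rw [levyProkhorovDist, ENNReal.ofReal_toReal hnetop]
    _ < ENNReal.ofReal η := by
        rw [ENNReal.ofReal_lt_ofReal_iff hη]
        linarith

end TestFamily



section LPbound

variable {E : Type*} [MetricSpace E] [MeasurableSpace E] [BorelSpace E]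

lemma integral_le_add_of_lp (ν P : Measure E) [IsProbabilityMeasure ν] [IsProbabilityMeasure P]
    {H : E → ℝ} (H_cont : Continuous H) {M : ℝ} (hM : 0 ≤ M) (hb : ∀ z, |H z| ≤ M)
    {δ₀ η : ℝ} (hδ₀ : 0 < δ₀) (hη : 0 < η)
    (hmod : ∀ z w : E, dist z w < δ₀ → |H z - H w| ≤ η)
    {ε : ℝ} (hε : 0 < ε) (hεδ : ε ≤ δ₀)
    (hLP : levyProkhorovEDist ν P < ENNReal.ofReal ε) :
    ∫ z, H z ∂ν ≤ (∫ z, H z ∂P) + η + ε * (2 * M + 1) := by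
  have hbound : ∀ z, ‖H z + (M + 1)‖ ≤ 2 * M + 1 := by
    intro z
    rw [Real.norm_eq_abs, abs_le]
    have h1 := (abs_le.mp (hb z)).1
    have h2 := (abs_le.mp (hb z)).2
    constructor <;> linarith
  set f : E →ᵇ ℝ := BoundedContinuousFunction.ofNormedAddCommGroup
    (fun z => H z + (M + 1)) (H_cont.add continuous_const) (2 * M + 1) hbound with hf
  have hfapply : ∀ z, f z = H z + (M + 1) := fun z => rfl
  have hfnn : ∀ z, 0 ≤ f z := by
    intro z
    rw [hfapply]
    linarith [abs_le.mp (hb z) |>.1]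
  have hfnorm : ‖f‖ ≤ 2 * M + 1 :=
    BoundedContinuousFunction.norm_ofNormedAddCommGroup_le _ (by linarith) _
  have hBnn : 0 ≤ ‖f‖ := norm_nonneg f
  set B := ‖f‖
  set g : ℝ → ℝ := fun s => (P {a | s ≤ f a}).toReal with hg
  have g_anti : Antitone g := by
    intro s t hst
    apply ENNReal.toReal_mono (measure_ne_top _ _)
    exact measure_mono (fun a (ha : t ≤ f a) => le_trans hst ha)
  have g_meas : Measurable g := g_anti.measurable
  have g_nonneg : ∀ t, 0 ≤ g t := fun t => ENNReal.toReal_nonneg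
  have g_le_one : ∀ t, g t ≤ 1 := by
    intro t
    rw [hg]
    apply ENNReal.toReal_le_of_le_ofReal zero_le_one
    rw [ENNReal.ofReal_one]
    calc P {a | t ≤ f a} ≤ P Set.univ := measure_mono (Set.subset_univ _)
      _ = 1 := measure_univ
  have g_int : ∀ s : Set ℝ, MeasurableSet s → volume s ≠ ⊤ → IntegrableOn g s := by
    intro s hs hsvol
    apply Measure.integrableOn_of_bounded hsvol g_meas.aestronglyMeasurable
    filter_upwards with t
    rw [Real.norm_eq_abs, abs_of_nonneg (g_nonneg t)]
    exact g_le_one t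
  -- main LP estimate from mathlib
  have key := BoundedContinuousFunction.integral_le_of_levyProkhorovEDist_lt ν P hε hLP f
    (Filter.Eventually.of_forall hfnn)
  -- pointwise: thickening is inside a sublevel shift
  have hthick : ∀ t : ℝ, (P (thickening ε {a | t ≤ f a})).toReal ≤ g (t - η) := by
    intro t
    apply ENNReal.toReal_mono (measure_ne_top _ _)
    apply measure_mono
    intro a ha
    rw [Metric.mem_thickening_iff] at ha
    obtain ⟨b, hb', hab⟩ := ha
    have : |f a - f b| ≤ η := by
      rw [hfapply, hfapply]
      have : H a + (M+1) - (H b + (M+1)) = H a - H b := by ring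
      rw [this]
      exact hmod a b (lt_of_lt_of_le hab hεδ)
    have hfb : t ≤ f b := hb'
    show t - η ≤ f a
    have := abs_le.mp this
    linarith [this.1]
  -- integrate the pointwise bound
  have thick_meas : Measurable (fun t => (P (thickening ε {a | t ≤ f a})).toReal) := by
    apply Measurable.ennreal_toReal
    apply Antitone.measurable
    intro s t hst
    apply measure_mono
    apply thickening_subset_of_subset
    exact fun a (ha : t ≤ f a) => le_trans hst ha
  have thick_int : IntegrableOn (fun t => (P (thickening ε {a | t ≤ f a})).toReal) (Set.Ioc 0 B) := by
    apply Measure.integrableOn_of_bounded measure_Ioc_lt_top.ne thick_meas.aestronglyMeasurable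
    · filter_upwards with t
      rw [Real.norm_eq_abs, abs_of_nonneg ENNReal.toReal_nonneg]
      apply ENNReal.toReal_le_of_le_ofReal zero_le_one
      rw [ENNReal.ofReal_one]
      calc P (thickening ε {a | t ≤ f a}) ≤ P Set.univ := measure_mono (Set.subset_univ _)
        _ = 1 := measure_univ
  have gshift_int : IntegrableOn (fun t => g (t - η)) (Set.Ioc 0 B) := by
    apply Measure.integrableOn_of_bounded measure_Ioc_lt_top.ne
      ((g_meas.comp (measurable_id.sub measurable_const)).aestronglyMeasurable)
    filter_upwards with t
    show ‖g (t - η)‖ ≤ 1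
    rw [Real.norm_eq_abs, abs_of_nonneg (g_nonneg _)]
    exact g_le_one _
  have I1 : ∫ t in Set.Ioc 0 B, (P (thickening ε {a | t ≤ f a})).toReal
      ≤ ∫ t in Set.Ioc 0 B, g (t - η) :=
    setIntegral_mono thick_int gshift_int hthick
  have I2 : ∫ t in Set.Ioc 0 B, g (t - η) = ∫ t in Set.Ioc (-η) (B - η), g t := by
    rw [← integral_indicator measurableSet_Ioc, ← integral_indicator measurableSet_Ioc]
    have hind : (Set.Ioc (0:ℝ) B).indicator (fun t => g (t - η))
        = fun t => (Set.Ioc (-η) (B - η)).indicator g (t - η) := by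
      ext t
      by_cases ht : t ∈ Set.Ioc (0:ℝ) B
      · rw [Set.indicator_of_mem ht, Set.indicator_of_mem]
        simp only [Set.mem_Ioc] at ht ⊢
        constructor <;> linarith [ht.1, ht.2]
      · rw [Set.indicator_of_notMem ht, Set.indicator_of_notMem]
        intro hmem
        apply ht
        simp only [Set.mem_Ioc] at hmem ⊢
        constructor <;> linarith [hmem.1, hmem.2]
    rw [hind]
    exact integral_sub_right_eq_self ((Set.Ioc (-η) (B - η)).indicator g) η
  have I3 : ∫ t in Set.Ioc (-η) (B - η), g t
      ≤ (∫ t in Set.Ioc (-η) 0, g t) + ∫ t in Set.Ioc 0 B, g t := by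
    have hsub : Set.Ioc (-η) (B - η) ⊆ Set.Ioc (-η) B :=
      Set.Ioc_subset_Ioc_right (by linarith)
    have hu : Set.Ioc (-η) 0 ∪ Set.Ioc 0 B = Set.Ioc (-η) B :=
      Set.Ioc_union_Ioc_eq_Ioc (by linarith) hBnn
    have h1 : ∫ t in Set.Ioc (-η) (B - η), g t ≤ ∫ t in Set.Ioc (-η) B, g t := by
      apply setIntegral_mono_set (g_int _ measurableSet_Ioc measure_Ioc_lt_top.ne)
        (Filter.Eventually.of_forall (fun t => g_nonneg t))
        (HasSubset.Subset.eventuallyLE hsub)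
    have h2 : ∫ t in Set.Ioc (-η) B, g t
        = (∫ t in Set.Ioc (-η) 0, g t) + ∫ t in Set.Ioc 0 B, g t := by
      rw [← hu, setIntegral_union (Set.Ioc_disjoint_Ioc_of_le le_rfl) measurableSet_Ioc
        (g_int _ measurableSet_Ioc measure_Ioc_lt_top.ne)
        (g_int _ measurableSet_Ioc measure_Ioc_lt_top.ne)]
    rw [← h2]
    exact h1
  have I4 : ∫ t in Set.Ioc (-η) 0, g t ≤ η := by
    calc ∫ t in Set.Ioc (-η) 0, g t ≤ ∫ _t in Set.Ioc (-η) 0, (1:ℝ) :=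
          setIntegral_mono (g_int _ measurableSet_Ioc measure_Ioc_lt_top.ne)
            (integrableOn_const measure_Ioc_lt_top.ne) g_le_one
      _ = (volume (Set.Ioc (-η) 0)).toReal := by rw [setIntegral_const, smul_eq_mul, mul_one]; rfl
      _ = η := by
          rw [Real.volume_Ioc, ENNReal.toReal_ofReal (by linarith)]
          ring
  have I5 : ∫ t in Set.Ioc 0 B, g t = ∫ z, f z ∂P :=
    (BoundedContinuousFunction.integral_eq_integral_meas_le f P
      (Filter.Eventually.of_forall hfnn)).symm
  -- integrability of H
  set HB : E →ᵇ ℝ := BoundedContinuousFunction.ofNormedAddCommGroup H H_cont M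
    (fun z => by rw [Real.norm_eq_abs]; exact hb z) with hHB
  have hHint : ∀ (m : Measure E) [IsProbabilityMeasure m], Integrable H m := by
    intro m _
    have := HB.integrable m
    exact this
  have hsplit : ∀ (m : Measure E) [IsProbabilityMeasure m],
      ∫ z, f z ∂m = (∫ z, H z ∂m) + (M + 1) := by
    intro m _
    have : ∫ z, f z ∂m = ∫ z, (H z + (M + 1)) ∂m := by rfl
    rw [this, integral_add (hHint m) (integrable_const _), integral_const]
    simp
  have hεf : ε * B ≤ ε * (2 * M + 1) := mul_le_mul_of_nonneg_left hfnorm hε.le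
  have chain : ∫ z, f z ∂ν ≤ (∫ z, f z ∂P) + η + ε * (2 * M + 1) := by
    calc ∫ z, f z ∂ν ≤ (∫ t in Set.Ioc 0 B, (P (thickening ε {a | t ≤ f a})).toReal) + ε * B :=
          key
      _ ≤ (∫ t in Set.Ioc 0 B, g (t - η)) + ε * B := by linarith
      _ = (∫ t in Set.Ioc (-η) (B - η), g t) + ε * B := by rw [I2]
      _ ≤ ((∫ t in Set.Ioc (-η) 0, g t) + ∫ t in Set.Ioc 0 B, g t) + ε * B := by linarith
      _ ≤ (η + ∫ z, f z ∂P) + ε * (2 * M + 1) := by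
          rw [← I5]
          linarith
      _ = (∫ z, f z ∂P) + η + ε * (2 * M + 1) := by ring
  rw [hsplit ν, hsplit P] at chain
  linarith

lemma abs_integral_diff_le_of_lp (ν P : Measure E)
    [IsProbabilityMeasure ν] [IsProbabilityMeasure P]
    {H : E → ℝ} (H_cont : Continuous H) {M : ℝ} (hM : 0 ≤ M) (hb : ∀ z, |H z| ≤ M)
    {δ₀ η : ℝ} (hδ₀ : 0 < δ₀) (hη : 0 < η)
    (hmod : ∀ z w : E, dist z w < δ₀ → |H z - H w| ≤ η)
    {ε : ℝ} (hε : 0 < ε) (hεδ : ε ≤ δ₀)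
    (hLP : levyProkhorovEDist ν P < ENNReal.ofReal ε) :
    |(∫ z, H z ∂ν) - ∫ z, H z ∂P| ≤ η + ε * (2 * M + 1) := by
  have h1 := integral_le_add_of_lp ν P H_cont hM hb hδ₀ hη hmod hε hεδ hLP
  have hLP' : levyProkhorovEDist P ν < ENNReal.ofReal ε := by
    rwa [levyProkhorovEDist_comm]
  have h2 := integral_le_add_of_lp P ν H_cont hM hb hδ₀ hη hmod hε hεδ hLP'
  rw [abs_le]
  constructor <;> linarith

end LPbound


end Stmt0Aux

open Stmt0Aux

-- coordinate bound in Euclidean space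
lemma euclid_coord_le {d : ℕ} (v : EuclideanSpace ℝ (Fin d)) (i : Fin d) : |v i| ≤ ‖v‖ := by
  rw [EuclideanSpace.norm_eq]
  rw [← Real.sqrt_sq_eq_abs (v i)]
  apply Real.sqrt_le_sqrt
  have h : v i ^ 2 = ‖v i‖ ^ 2 := by rw [Real.norm_eq_abs, sq_abs]
  rw [h]
  exact Finset.single_le_sum (fun j _ => sq_nonneg ‖v j‖) (Finset.mem_univ i)

/-- Under the ergodic environment assumption and the quenched
weak-convergence assumption, for `Q`-a.e. `ω`, for every compact `A ⊆ ℝ^d` and every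
bounded uniformly continuous `G : E → ℝ`,
`(1/n^d) ∑_{x∈ℤ^d} 1_A(x/n) 1_{Ω₀}(τ_x ω) |∫ G(T_{x/n} z) dμ_n^{τ_x ω} − ∫ G(T_{x/n} z) dP| → 0`. -/
theorem stmt0
    (d : ℕ) (hd : 1 ≤ d)
    {Ω : Type*} [MeasurableSpace Ω] (Q : Measure Ω) [IsProbabilityMeasure Q]
    (τ : (Fin d → ℤ) → Ω → Ω)
    (hτ_meas : ∀ z, Measurable (τ z))
    (hτ_zero : τ 0 = id)
    (hτ_add : ∀ z w, τ (z + w) = τ z ∘ τ w)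
    (hτ_pres : ∀ z, MeasurePreserving (τ z) Q Q)
    (hτ_erg : ∀ A : Set Ω, MeasurableSet A → (∀ z, τ z ⁻¹' A = A) → Q A = 0 ∨ Q A = 1)
    {E : Type*} [MetricSpace E] [CompleteSpace E] [TopologicalSpace.SeparableSpace E]
    [MeasurableSpace E] [BorelSpace E]
    (T : EuclideanSpace ℝ (Fin d) → E → E)
    (hT_isom : ∀ v, Isometry (T v))
    (hT_zero : T 0 = id)
    (hT_add : ∀ v w, T (v + w) = T v ∘ T w)
    (Ω₀ : Set Ω) (hΩ₀_meas : MeasurableSet Ω₀) (hΩ₀_pos : 0 < Q Ω₀)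
    (μ : ℕ → Kernel Ω E) (hμ : ∀ n, IsMarkovKernel (μ n))
    (P : Measure E) [IsProbabilityMeasure P]
    (hweak : ∀ᵐ ω ∂Q, ω ∈ Ω₀ → ∀ G : E → ℝ, Continuous G → (∃ M, ∀ z, |G z| ≤ M) →
      Tendsto (fun n => ∫ z, G z ∂(μ n ω)) atTop (𝓝 (∫ z, G z ∂P))) :
    ∀ᵐ ω ∂Q, ∀ A : Set (EuclideanSpace ℝ (Fin d)), IsCompact A →
      ∀ G : E → ℝ, UniformContinuous G → (∃ M, ∀ z, |G z| ≤ M) →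
      Tendsto (fun n : ℕ =>
        (1 / (n : ℝ) ^ d) * ∑' x : Fin d → ℤ,
          (A.indicator (fun _ => (1 : ℝ)) (WithLp.toLp 2 (fun i => (x i : ℝ) / n)) *
            Ω₀.indicator (fun _ => (1 : ℝ)) (τ x ω)) *
          |(∫ z, G (T (WithLp.toLp 2 (fun i => (x i : ℝ) / n)) z) ∂(μ n (τ x ω))) -
            ∫ z, G (T (WithLp.toLp 2 (fun i => (x i : ℝ) / n)) z) ∂P|)
        atTop (𝓝 0) := by
  classical
  have hEne : Nonempty E := by
    by_contra h
    rw [not_nonempty_iff] at h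
    have h1 : P Set.univ = 1 := measure_univ
    rw [Set.univ_eq_empty_iff.mpr h] at h1
    simp at h1
  -- Step 1: choose the countable test families
  have hfam : ∀ j : ℕ, ∃ (J : Finset (E →ᵇ ℝ≥0)) (δ : ℝ), 0 < δ ∧
      ∀ (ν : Measure E), IsProbabilityMeasure ν →
        ((∀ g ∈ J, |(∫ z, (g z : ℝ) ∂ν) - ∫ z, (g z : ℝ) ∂P| ≤ δ) →
        levyProkhorovEDist ν P < ENNReal.ofReal (1 / (j + 1))) :=
    fun j => exists_test_family P (by positivity)
  choose Jf δf hδf hJf using hfam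
  -- Step 2: measurability of kernel integrals
  have hval_meas : ∀ (n : ℕ) (g : E →ᵇ ℝ≥0), Measurable (fun ω' => ∫ z, (g z : ℝ) ∂(μ n ω')) := by
    intro n g
    haveI := hμ n
    have h1 : Measurable (fun ω' => ∫⁻ z, ((g z : ℝ≥0) : ℝ≥0∞) ∂(μ n ω')) :=
      Measurable.lintegral_kernel_prod_right' (κ := μ n)
        (f := fun p : Ω × E => ((g p.2 : ℝ≥0) : ℝ≥0∞))
        ((measurable_coe_nnreal_ennreal.comp g.continuous.measurable).comp measurable_snd)
    have h2 : (fun ω' => ∫ z, (g z : ℝ) ∂(μ n ω'))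
        = fun ω' => (((∫⁻ z, ((g z : ℝ≥0) : ℝ≥0∞) ∂(μ n ω')).toNNReal : ℝ≥0) : ℝ) := by
      funext ω'
      exact (testAgainstNN_coe_eq (μ n ω') g).symm
    rw [h2]
    exact measurable_coe_nnreal_real.comp h1.ennreal_toNNReal
  -- Step 3: the bad sets
  set bad : ℕ → ℕ → Set Ω := fun j m =>
    {ω' | ∃ g ∈ Jf j, δf j < |(∫ z, (g z : ℝ) ∂(μ m ω')) - ∫ z, (g z : ℝ) ∂P|} with hbaddef
  have hbad_meas : ∀ j m, MeasurableSet (bad j m) := by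
    intro j m
    have : bad j m = ⋃ g ∈ (Jf j : Finset (E →ᵇ ℝ≥0)),
        {ω' | δf j < |(∫ z, (g z : ℝ) ∂(μ m ω')) - ∫ z, (g z : ℝ) ∂P|} := by
      ext ω'; simp [hbaddef]
    rw [this]
    apply MeasurableSet.biUnion (Jf j).countable_toSet
    intro g _
    exact measurableSet_lt measurable_const (((hval_meas m g).sub measurable_const).abs)
  set S : ℕ → ℕ → Set Ω := fun j N => Ω₀ ∩ ⋃ m, ⋃ (_ : N ≤ m), bad j m with hSdef
  have hS_meas : ∀ j N, MeasurableSet (S j N) := by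
    intro j N
    exact hΩ₀_meas.inter (MeasurableSet.iUnion fun m => MeasurableSet.iUnion fun _ => hbad_meas j m)
  have hS_anti : ∀ j, Antitone (S j) := by
    intro j N N' hNN'
    apply Set.inter_subset_inter_right
    intro ω' hω'
    simp only [Set.mem_iUnion] at hω' ⊢
    obtain ⟨m, hm1, hm2⟩ := hω'
    exact ⟨m, le_trans hNN' hm1, hm2⟩
  -- Step 4: intersection is null
  have hSinter : ∀ j, Q (⋂ N, S j N) = 0 := by
    intro j
    rw [measure_eq_zero_iff_ae_notMem]
    filter_upwards [hweak] with ω hω hmem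
    simp only [Set.mem_iInter] at hmem
    have hΩ₀ω : ω ∈ Ω₀ := (hmem 0).1
    -- each test function's integrals converge
    have hconv : ∀ g ∈ Jf j, ∀ᶠ m in atTop,
        |(∫ z, (g z : ℝ) ∂(μ m ω)) - ∫ z, (g z : ℝ) ∂P| ≤ δf j := by
      intro g _
      obtain ⟨z₀⟩ := hEne
      obtain ⟨C, hC⟩ := g.map_bounded'
      have htd := hω hΩ₀ω (fun z => (g z : ℝ))
        (NNReal.continuous_coe.comp g.continuous)
        ⟨(g z₀ : ℝ) + C, fun z => by
          have h1 := hC z z₀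
          rw [NNReal.dist_eq] at h1
          have h2 : ((g z : ℝ≥0) : ℝ) - ((g z₀ : ℝ≥0) : ℝ) ≤ C := (abs_le.mp h1).2
          have h0 : (0:ℝ) ≤ ((g z : ℝ≥0) : ℝ) := (g z).coe_nonneg
          rw [abs_of_nonneg h0]
          linarith⟩
      have := Metric.tendsto_atTop.mp htd
      obtain ⟨N, hN⟩ := this (δf j) (hδf j)
      rw [eventually_atTop]
      exact ⟨N, fun m hm => by
        have := hN m hm
        rw [Real.dist_eq] at this
        exact this.le⟩
    have hall : ∀ᶠ m in atTop, ∀ g ∈ Jf j,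
        |(∫ z, (g z : ℝ) ∂(μ m ω)) - ∫ z, (g z : ℝ) ∂P| ≤ δf j :=
      (Filter.eventually_all_finset (Jf j)).mpr hconv
    rw [eventually_atTop] at hall
    obtain ⟨N, hN⟩ := hall
    obtain ⟨-, hUn⟩ := hmem N
    simp only [Set.mem_iUnion] at hUn
    obtain ⟨m, hm1, g, hg, hgt⟩ := hUn
    exact absurd (hN m hm1 g hg) (not_le.mpr hgt)
  -- Step 5: measures tend to zero
  have hq0 : ∀ j, Tendsto (fun N => Q (S j N)) atTop (𝓝 0) := by
    intro j
    have := tendsto_measure_iInter_atTop (μ := Q) (fun N => (hS_meas j N).nullMeasurableSet)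
      (hS_anti j) ⟨0, measure_ne_top Q _⟩
    rwa [hSinter j] at this
  -- Step 6/7: almost-sure maximal bound
  have hAE : ∀ᵐ ω ∂Q, ∀ j : ℕ, ∀ r : ℚ, 0 < r → ∃ N : ℕ, ∀ m : ℕ, 1 ≤ m →
      cnt τ (S j N) m ω < (r : ℝ) * (2 * (m : ℝ) + 1) ^ d := by
    rw [ae_all_iff]
    intro j
    rw [ae_all_iff]
    intro r
    by_cases hr : 0 < r
    swap
    · filter_upwards with ω hr'; exact absurd hr' hr
    have hrR : (0:ℝ) < (r:ℝ) := by exact_mod_cast hr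
    set Dbig : ℕ → Set Ω := fun N =>
      {ω | ∃ m : ℕ, 1 ≤ m ∧ (r:ℝ) * (2 * (m:ℝ) + 1) ^ d ≤ cnt τ (S j N) m ω} with hDbig
    have hD : ∀ N, Q (Dbig N) ≤ ENNReal.ofReal (2 ^ d * (Q (S j N)).toReal / r) :=
      fun N => maximal_ineq Q τ hτ_meas hτ_add hτ_pres (hS_meas j N) hrR
    have hQi : Q (⋂ N, Dbig N) = 0 := by
      have hb : ∀ N, Q (⋂ N', Dbig N') ≤ ENNReal.ofReal (2 ^ d * (Q (S j N)).toReal / r) :=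
        fun N => le_trans (measure_mono (Set.iInter_subset _ N)) (hD N)
      have hlim : Tendsto (fun N => ENNReal.ofReal (2 ^ d * (Q (S j N)).toReal / r)) atTop
          (𝓝 0) := by
        have h1 : Tendsto (fun N => (Q (S j N)).toReal) atTop (𝓝 0) := by
          have := (ENNReal.tendsto_toReal (a := 0) (by simp)).comp (hq0 j)
          simpa [Function.comp_def] using this
        have h2 : Tendsto (fun N => 2 ^ d * (Q (S j N)).toReal / r) atTop (𝓝 0) := by
          have := (h1.const_mul ((2:ℝ) ^ d)).div_const (r:ℝ)
          simpa using this
        have := ENNReal.tendsto_ofReal h2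
        simpa using this
      have := ge_of_tendsto hlim (Filter.Eventually.of_forall hb)
      exact le_antisymm this zero_le
    have := measure_eq_zero_iff_ae_notMem.mp hQi
    filter_upwards [this] with ω hω
    intro _
    simp only [Set.mem_iInter, not_forall] at hω
    obtain ⟨N, hN⟩ := hω
    refine ⟨N, fun m hm => ?_⟩
    by_contra hcon
    exact hN ⟨m, hm, not_lt.mp hcon⟩
  -- Step 8: main argument

  filter_upwards [hAE] with ω hω
  intro A hA G hG hGb
  obtain ⟨M, hM⟩ := hGb
  have hM0 : 0 ≤ M := le_trans (abs_nonneg _) (hM (Classical.arbitrary E))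
  obtain ⟨C, hC⟩ := (Bornology.IsBounded.exists_norm_le hA.isBounded)
  set R : ℕ := ⌈C⌉₊ + 1 with hR
  have hR1 : 1 ≤ R := Nat.le_add_left 1 _
  have hCR : C ≤ (R : ℝ) := by
    calc C ≤ (⌈C⌉₊ : ℝ) := Nat.le_ceil C
      _ ≤ (R : ℝ) := by rw [hR]; push_cast; linarith
  have hAbox : ∀ v ∈ A, ∀ i, |v i| ≤ (R : ℝ) :=
    fun v hv i => le_trans (euclid_coord_le v i) (le_trans (hC v hv) hCR)
  rw [Metric.tendsto_atTop]
  intro ε hε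
  set C3 : ℝ := (3 * (R : ℝ)) ^ d with hC3
  have hC3pos : 0 < C3 := by
    rw [hC3]
    have : (0:ℝ) < 3 * (R:ℝ) := by
      have : (1:ℝ) ≤ (R:ℝ) := by exact_mod_cast hR1
      linarith
    positivity
  set sδ : ℝ := ε / (4 * C3) with hs
  have hspos : 0 < sδ := by rw [hs]; positivity
  obtain ⟨δ₀, hδ₀pos, hδ₀⟩ := Metric.uniformContinuous_iff.mp hG (sδ / 2) (by positivity)
  set ε₂ : ℝ := min δ₀ (sδ / (2 * (2 * M + 1))) with hε₂
  have hε₂pos : 0 < ε₂ := lt_min hδ₀pos (by positivity)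
  obtain ⟨j, hj⟩ := exists_nat_one_div_lt hε₂pos
  -- per-site estimate
  have hsite : ∀ (ν : Measure E), IsProbabilityMeasure ν →
      (∀ g ∈ Jf j, |(∫ z, (g z : ℝ) ∂ν) - ∫ z, (g z : ℝ) ∂P| ≤ δf j) →
      ∀ w : EuclideanSpace ℝ (Fin d),
        |(∫ z, G (T w z) ∂ν) - ∫ z, G (T w z) ∂P| ≤ sδ := by
    intro ν hν hgs w
    haveI := hν
    have hLP := hJf j ν hν hgs
    have hLP2 : levyProkhorovEDist ν P < ENNReal.ofReal ε₂ := by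
      refine lt_of_lt_of_le hLP (ENNReal.ofReal_le_ofReal ?_)
      have : (1:ℝ) / (j + 1) < ε₂ := hj
      linarith
    have habs := abs_integral_diff_le_of_lp ν P
      (H := fun z => G (T w z))
      (hG.continuous.comp (hT_isom w).continuous) hM0 (fun z => hM _)
      hδ₀pos (by positivity : (0:ℝ) < sδ / 2)
      (fun z z' hzz' => by
        have hd : dist (T w z) (T w z') < δ₀ := by
          rw [(hT_isom w).dist_eq]; exact hzz'
        have := hδ₀ hd
        rw [Real.dist_eq] at this
        exact this.le)
      hε₂pos (min_le_left _ _) hLP2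
    have hεM : ε₂ * (2 * M + 1) ≤ sδ / 2 := by
      have h1 : ε₂ ≤ sδ / (2 * (2 * M + 1)) := min_le_right _ _
      have h2 : (0:ℝ) < 2 * M + 1 := by linarith
      calc ε₂ * (2 * M + 1) ≤ (sδ / (2 * (2 * M + 1))) * (2 * M + 1) := by nlinarith
        _ = sδ / 2 := by field_simp
    linarith [habs]
  -- choose the rational threshold
  obtain ⟨r, hr0, hrlt⟩ := exists_rat_btwn (show (0:ℝ) < ε / (8 * (M + 1) * C3) by positivity)
  have hrQ : 0 < r := by exact_mod_cast hr0
  obtain ⟨N, hN⟩ := hω j r hrQ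
  refine ⟨max N 1, fun n hn => ?_⟩
  have hnN : N ≤ n := le_trans (le_max_left _ _) hn
  have hn1 : 1 ≤ n := le_trans (le_max_right _ _) hn
  have hnR : (0:ℝ) < (n:ℝ) := by exact_mod_cast hn1
  haveI := hμ n
  set F : (Fin d → ℤ) → ℝ := fun x =>
    (A.indicator (fun _ => (1 : ℝ)) (WithLp.toLp 2 (fun i => (x i : ℝ) / n)) *
      Ω₀.indicator (fun _ => (1 : ℝ)) (τ x ω)) *
    |(∫ z, G (T (WithLp.toLp 2 (fun i => (x i : ℝ) / n)) z) ∂(μ n (τ x ω))) -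
      ∫ z, G (T (WithLp.toLp 2 (fun i => (x i : ℝ) / n)) z) ∂P| with hF
  have hF_nonneg : ∀ x, 0 ≤ F x := by
    intro x
    apply mul_nonneg
    · exact mul_nonneg (Set.indicator_nonneg (fun _ _ => zero_le_one) _)
        (Set.indicator_nonneg (fun _ _ => zero_le_one) _)
    · exact abs_nonneg _
  have hsupp : ∀ x : Fin d → ℤ, x ∉ cube (0 : Fin d → ℤ) (R * n) → F x = 0 := by
    intro x hx
    have hAind : A.indicator (fun _ => (1 : ℝ)) (WithLp.toLp 2 (fun i => (x i : ℝ) / n)) = 0 := by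
      apply Set.indicator_of_notMem
      intro hmem
      apply hx
      rw [mem_cube]
      intro i
      have h1 := hAbox _ hmem i
      have h1' : |(x i : ℝ)| / (n:ℝ) ≤ (R:ℝ) := by
        rw [← abs_of_pos hnR, ← abs_div]
        exact h1
      have h2 : |(x i : ℝ)| ≤ (R : ℝ) * n := by
        rw [div_le_iff₀ hnR] at h1'
        exact h1'
      simp only [Pi.zero_apply, sub_zero]
      exact_mod_cast h2
    simp only [hF]
    rw [hAind]
    ring
  have htsum : (∑' x, F x) = ∑ x ∈ cube (0 : Fin d → ℤ) (R * n), F x :=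
    tsum_eq_sum (fun x hx => hsupp x hx)
  -- bound on the difference of integrals, crude
  have hD2M : ∀ x : Fin d → ℤ,
      |(∫ z, G (T (WithLp.toLp 2 (fun i => (x i : ℝ) / n)) z) ∂(μ n (τ x ω))) -
        ∫ z, G (T (WithLp.toLp 2 (fun i => (x i : ℝ) / n)) z) ∂P| ≤ 2 * M := by
    intro x
    have hb : ∀ (m : Measure E), IsProbabilityMeasure m →
        |∫ z, G (T (WithLp.toLp 2 (fun i => (x i : ℝ) / n)) z) ∂m| ≤ M := by
      intro m hm
      haveI := hm
      have := norm_integral_le_of_norm_le_const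
        (μ := m) (f := fun z => G (T (WithLp.toLp 2 (fun i => (x i : ℝ) / n)) z)) (C := M)
        (Filter.Eventually.of_forall (fun z => by rw [Real.norm_eq_abs]; exact hM _))
      rw [Real.norm_eq_abs, measureReal_def, measure_univ, ENNReal.toReal_one, mul_one] at this
      exact this
    have h1 := hb (μ n (τ x ω)) inferInstance
    have h2 := hb P inferInstance
    calc |(∫ z, G (T (WithLp.toLp 2 (fun i => (x i : ℝ) / n)) z) ∂(μ n (τ x ω))) -
        ∫ z, G (T (WithLp.toLp 2 (fun i => (x i : ℝ) / n)) z) ∂P|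
        ≤ |∫ z, G (T (WithLp.toLp 2 (fun i => (x i : ℝ) / n)) z) ∂(μ n (τ x ω))| +
          |∫ z, G (T (WithLp.toLp 2 (fun i => (x i : ℝ) / n)) z) ∂P| := abs_sub _ _
      _ ≤ 2 * M := by linarith
  -- the per-site bound
  have hkey : ∀ x ∈ cube (0 : Fin d → ℤ) (R * n),
      F x ≤ sδ + 2 * M * (S j N).indicator 1 (τ x ω) := by
    intro x _
    have hindA : A.indicator (fun _ => (1 : ℝ)) (WithLp.toLp 2 (fun i => (x i : ℝ) / n)) ≤ 1 := by
      apply Set.indicator_le' (fun _ _ => le_refl _) (fun _ _ => zero_le_one)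
    have hindA0 : 0 ≤ A.indicator (fun _ => (1 : ℝ)) (WithLp.toLp 2 (fun i => (x i : ℝ) / n)) :=
      Set.indicator_nonneg (fun _ _ => zero_le_one) _
    have hindS0 : (0:ℝ) ≤ (S j N).indicator 1 (τ x ω) :=
      Set.indicator_nonneg (fun _ _ => zero_le_one) _
    by_cases h₀ : τ x ω ∈ Ω₀
    · have hindΩ : Ω₀.indicator (fun _ => (1 : ℝ)) (τ x ω) = 1 := Set.indicator_of_mem h₀ _
      by_cases hSx : τ x ω ∈ S j N
      · have hindS : (S j N).indicator (1 : Ω → ℝ) (τ x ω) = 1 := Set.indicator_of_mem hSx _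
        have hFle : F x ≤ 2 * M := by
          simp only [hF]
          rw [hindΩ, mul_one]
          calc A.indicator (fun _ => (1 : ℝ)) (WithLp.toLp 2 (fun i => (x i : ℝ) / n)) *
              |(∫ z, G (T (WithLp.toLp 2 (fun i => (x i : ℝ) / n)) z) ∂(μ n (τ x ω))) -
                ∫ z, G (T (WithLp.toLp 2 (fun i => (x i : ℝ) / n)) z) ∂P|
              ≤ 1 * |(∫ z, G (T (WithLp.toLp 2 (fun i => (x i : ℝ) / n)) z) ∂(μ n (τ x ω))) -
                ∫ z, G (T (WithLp.toLp 2 (fun i => (x i : ℝ) / n)) z) ∂P| :=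
                mul_le_mul_of_nonneg_right hindA (abs_nonneg _)
            _ = _ := one_mul _
            _ ≤ 2 * M := hD2M x
        rw [hindS]
        linarith
      · have hnb : τ x ω ∉ bad j n := by
          intro hbd
          exact hSx ⟨h₀, Set.mem_iUnion.mpr ⟨n, Set.mem_iUnion.mpr ⟨hnN, hbd⟩⟩⟩
        have hgs : ∀ g ∈ Jf j,
            |(∫ z, (g z : ℝ) ∂(μ n (τ x ω))) - ∫ z, (g z : ℝ) ∂P| ≤ δf j := by
          intro g hg
          by_contra hcon
          exact hnb ⟨g, hg, not_le.mp hcon⟩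
        have hD := hsite (μ n (τ x ω)) inferInstance hgs (WithLp.toLp 2 (fun i => (x i : ℝ) / n))
        have hFle : F x ≤ sδ := by
          simp only [hF]
          rw [hindΩ, mul_one]
          calc A.indicator (fun _ => (1 : ℝ)) (WithLp.toLp 2 (fun i => (x i : ℝ) / n)) *
              |(∫ z, G (T (WithLp.toLp 2 (fun i => (x i : ℝ) / n)) z) ∂(μ n (τ x ω))) -
                ∫ z, G (T (WithLp.toLp 2 (fun i => (x i : ℝ) / n)) z) ∂P|
              ≤ 1 * sδ := by
                apply mul_le_mul hindA hD (abs_nonneg _) zero_le_one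
            _ = sδ := one_mul _
        have : (0:ℝ) ≤ 2 * M * (S j N).indicator 1 (τ x ω) := by positivity
        linarith
    · have hindΩ : Ω₀.indicator (fun _ => (1 : ℝ)) (τ x ω) = 0 := Set.indicator_of_notMem h₀ _
      have : F x = 0 := by
        simp only [hF]
        rw [hindΩ]
        ring
      rw [this]
      positivity
  -- sum everything
  have hcnt := hN (R * n) (by
    calc 1 = 1 * 1 := (one_mul 1).symm
    _ ≤ R * n := Nat.mul_le_mul hR1 hn1)
  have hsum : ∑ x ∈ cube (0 : Fin d → ℤ) (R * n), F x
      ≤ (2 * ((R:ℝ) * n) + 1) ^ d * (sδ + 2 * M * (r:ℝ)) := by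
    calc ∑ x ∈ cube (0 : Fin d → ℤ) (R * n), F x
        ≤ ∑ x ∈ cube (0 : Fin d → ℤ) (R * n),
            (sδ + 2 * M * (S j N).indicator 1 (τ x ω)) := Finset.sum_le_sum hkey
      _ = (cube (0 : Fin d → ℤ) (R * n)).card * sδ
          + 2 * M * cnt τ (S j N) (R * n) ω := by
          rw [Finset.sum_add_distrib, Finset.sum_const, nsmul_eq_mul, ← Finset.mul_sum]
          rfl
      _ ≤ (2 * ((R:ℝ) * n) + 1) ^ d * sδ + 2 * M * ((r:ℝ) * (2 * ((R * n : ℕ) : ℝ) + 1) ^ d) := by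
          have hcard : ((cube (0 : Fin d → ℤ) (R * n)).card : ℝ) = (2 * ((R:ℝ) * n) + 1) ^ d := by
            rw [card_cube]
            push_cast
            ring
          rw [hcard]
          have h2M : (0:ℝ) ≤ 2 * M := by linarith
          have := mul_le_mul_of_nonneg_left hcnt.le h2M
          linarith
      _ = (2 * ((R:ℝ) * n) + 1) ^ d * (sδ + 2 * M * (r:ℝ)) := by
          push_cast
          ring
  -- final comparison
  have hpow : (2 * ((R:ℝ) * n) + 1) ^ d ≤ C3 * (n:ℝ) ^ d := by
    have hRn1 : (1:ℝ) ≤ (R:ℝ) * n := by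
      have hR' : (1:ℝ) ≤ (R:ℝ) := by exact_mod_cast hR1
      have hn' : (1:ℝ) ≤ (n:ℝ) := by exact_mod_cast hn1
      nlinarith
    have h1 : 2 * ((R:ℝ) * n) + 1 ≤ 3 * ((R:ℝ) * n) := by linarith
    calc (2 * ((R:ℝ) * n) + 1) ^ d ≤ (3 * ((R:ℝ) * n)) ^ d := by
          apply pow_le_pow_left₀ (by linarith) h1
      _ = C3 * (n:ℝ) ^ d := by
          rw [hC3, ← mul_pow]
          ring_nf
  have hXnn : (0:ℝ) ≤ sδ + 2 * M * (r:ℝ) := by positivity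
  have hnd : (0:ℝ) < (n:ℝ) ^ d := by positivity
  have hfinal : (1 / (n:ℝ) ^ d) * ∑ x ∈ cube (0 : Fin d → ℤ) (R * n), F x
      ≤ C3 * (sδ + 2 * M * (r:ℝ)) := by
    calc (1 / (n:ℝ) ^ d) * ∑ x ∈ cube (0 : Fin d → ℤ) (R * n), F x
        ≤ (1 / (n:ℝ) ^ d) * ((2 * ((R:ℝ) * n) + 1) ^ d * (sδ + 2 * M * (r:ℝ))) := by
          apply mul_le_mul_of_nonneg_left hsum (by positivity)
      _ ≤ (1 / (n:ℝ) ^ d) * ((C3 * (n:ℝ) ^ d) * (sδ + 2 * M * (r:ℝ))) := by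
          apply mul_le_mul_of_nonneg_left
            (mul_le_mul_of_nonneg_right hpow hXnn) (by positivity)
      _ = C3 * (sδ + 2 * M * (r:ℝ)) := by
          field_simp
  have hεbound : C3 * (sδ + 2 * M * (r:ℝ)) < ε := by
    have h1 : C3 * sδ = ε / 4 := by
      rw [hs]
      field_simp
    have h2 : 2 * M * C3 * (r:ℝ) < ε / 4 := by
      have hle : 2 * M * C3 ≤ 2 * (M + 1) * C3 := by nlinarith
      have h3 : 2 * (M + 1) * C3 * (r:ℝ) < 2 * (M + 1) * C3 * (ε / (8 * (M + 1) * C3)) := by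
        apply mul_lt_mul_of_pos_left hrlt (by positivity)
      have h4 : 2 * (M + 1) * C3 * (ε / (8 * (M + 1) * C3)) = ε / 4 := by
        field_simp
        ring
      nlinarith
    nlinarith
  -- wrap up
  rw [Real.dist_eq, sub_zero]
  have htnn : 0 ≤ ∑' x, F x := tsum_nonneg hF_nonneg
  rw [abs_of_nonneg (by positivity)]
  rw [htsum]
  exact lt_of_le_of_lt hfinal hεbound
end

section
/- Under the ergodic environment assumption and the quenched weak-convergence assumption, for all K, L, M > 0 there exists a set Ω^{K,L,M} ∈ 𝓕 with Q(Ω^{K,L,M}) = 1 such that for every ω ∈ Ω^{K,L,M}, every compact set A ⊂ ℝ^d contained in the closed Euclidean ball of radius K centered at the origin, and every function G : E → ℝ that is Lipschitz with Lipschitz constant at most L and satisfies sup_{z∈E} |G(z)| ≤ M, one has (1/n^d) · Σ_{x ∈ ℤ^d} 1_A(x/n) · 1_{Ω₀}(τ_x ω) · | ∫_E G(T_{x/n} z) dμ_n^{τ_x ω}(z) − ∫_E G(T_{x/n} z) dP(z) | → 0 as n → ∞. -/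
open MeasureTheory Filter Topology ProbabilityTheory Set Metric

section Dfam
variable {X : Type*} [MetricSpace X]

/-- Clamp to `[-M, M]`. -/
def clampD (M t : ℝ) : ℝ := max (-M) (min M t)

lemma clampD_mono (M : ℝ) : Monotone (clampD M) := fun s t hst =>
  max_le_max le_rfl (min_le_min le_rfl hst)

lemma clampD_le {M t : ℝ} (h : -M ≤ t) : clampD M t ≤ t :=
  max_le h (min_le_right _ _)

lemma clampD_abs_le {M t : ℝ} (hM : 0 ≤ M) : |clampD M t| ≤ M := by
  rw [abs_le]
  constructor
  · exact le_max_left _ _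
  · exact max_le (by linarith) (min_le_left _ _)

lemma clampD_eq {M t : ℝ} (h : |t| ≤ M) : clampD M t = t := by
  rw [abs_le] at h
  rw [clampD, min_eq_right h.2, max_eq_right h.1]

lemma min_sub_min_le (M s t : ℝ) : min M s - min M t ≤ |s - t| := by
  rcases min_cases M t with ⟨h1, _⟩ | ⟨h1, _⟩
  · rw [h1]; linarith [min_le_left M s, abs_nonneg (s - t)]
  · rw [h1]; linarith [min_le_right M s, le_abs_self (s - t)]

lemma clampD_lip (M s t : ℝ) : |clampD M s - clampD M t| ≤ |s - t| := by
  have h1 : |min M s - min M t| ≤ |s - t| := by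
    rw [abs_sub_le_iff]
    exact ⟨min_sub_min_le M s t, by rw [abs_sub_comm]; exact min_sub_min_le M t s⟩
  calc |clampD M s - clampD M t| = |max (min M s) (-M) - max (min M t) (-M)| := by
        rw [clampD, clampD, max_comm, max_comm (-M)]
  _ ≤ |min M s - min M t| := abs_max_sub_max_le_abs _ _ _
  _ ≤ |s - t| := h1

/-- The countable index for the approximating family. -/
abbrev DIdx : Type := (k : ℕ) × (Fin (k + 1) → ℚ)

noncomputable def premin (e : ℕ → X) (L : ℝ) (i : DIdx) (z : X) : ℝ :=
  Finset.univ.inf' Finset.univ_nonempty (fun j : Fin (i.1 + 1) => (i.2 j : ℝ) + L * dist z (e j))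

noncomputable def Dfun (e : ℕ → X) (L M : ℝ) (i : DIdx) (z : X) : ℝ :=
  clampD M (premin e L i z)

lemma premin_le_add (e : ℕ → X) {L : ℝ} (hL : 0 ≤ L) (i : DIdx) (z w : X) :
    premin e L i z ≤ premin e L i w + L * dist z w := by
  obtain ⟨j₀, _, hj₀⟩ := Finset.exists_mem_eq_inf' Finset.univ_nonempty
    (fun j : Fin (i.1 + 1) => (i.2 j : ℝ) + L * dist w (e j))
  have h1 : premin e L i z ≤ (i.2 j₀ : ℝ) + L * dist z (e j₀) :=
    Finset.inf'_le _ (Finset.mem_univ j₀)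
  have h2 : dist z (e (j₀ : ℕ)) ≤ dist z w + dist w (e (j₀ : ℕ)) := dist_triangle _ _ _
  have h3 : L * dist z (e (j₀ : ℕ)) ≤ L * (dist z w + dist w (e (j₀ : ℕ))) :=
    mul_le_mul_of_nonneg_left h2 hL
  have h4 : premin e L i w = (i.2 j₀ : ℝ) + L * dist w (e (j₀ : ℕ)) := hj₀
  rw [mul_add] at h3
  linarith

lemma premin_lip (e : ℕ → X) {L : ℝ} (hL : 0 ≤ L) (i : DIdx) (z w : X) :
    |premin e L i z - premin e L i w| ≤ L * dist z w := by
  rw [abs_le]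
  constructor
  · have := premin_le_add e hL i w z
    rw [dist_comm w z] at this
    linarith
  · have := premin_le_add e hL i z w
    linarith

lemma Dfun_lip (e : ℕ → X) {L : ℝ} (hL : 0 ≤ L) (M : ℝ) (i : DIdx) (z w : X) :
    |Dfun e L M i z - Dfun e L M i w| ≤ L * dist z w :=
  (clampD_lip M _ _).trans (premin_lip e hL i z w)

lemma Dfun_abs_le (e : ℕ → X) (L : ℝ) {M : ℝ} (hM : 0 ≤ M) (i : DIdx) (z : X) :
    |Dfun e L M i z| ≤ M := clampD_abs_le hM

lemma Dfun_continuous (e : ℕ → X) {L : ℝ} (hL : 0 ≤ L) (M : ℝ) (i : DIdx) :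
    Continuous (Dfun e L M i) := by
  have : LipschitzWith (Real.toNNReal L) (Dfun e L M i) := by
    apply LipschitzWith.of_dist_le_mul
    intro x y
    rw [Real.dist_eq, Real.coe_toNNReal _ hL]
    exact Dfun_lip e hL M i x y
  exact this.continuous

end Dfam


section BL
variable {X : Type*} [MeasurableSpace X] [PseudoMetricSpace X] [OpensMeasurableSpace X]

/-- One-sided bounded-Lipschitz estimate from the Lévy-Prokhorov distance. -/
lemma bl_diff_le (μ ν : Measure X) [IsProbabilityMeasure μ] [IsProbabilityMeasure ν]
    {F : X → ℝ} {L M : ℝ} (hL : 0 ≤ L) (hM : 0 ≤ M)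
    (hLip : ∀ z w, |F z - F w| ≤ L * dist z w) (hbd : ∀ z, |F z| ≤ M)
    {ε : ℝ} (hε : 0 < ε) (hlt : levyProkhorovEDist μ ν < ENNReal.ofReal ε) :
    ∫ z, F z ∂μ - ∫ z, F z ∂ν ≤ (L + 2 * M) * ε := by
  classical
  have hFcont : Continuous F := by
    have : LipschitzWith (Real.toNNReal L) F := by
      apply LipschitzWith.of_dist_le_mul
      intro x y
      rw [Real.dist_eq, Real.coe_toNNReal _ hL]
      exact hLip x y
    exact this.continuous
  set f : BoundedContinuousFunction X ℝ :=
    BoundedContinuousFunction.mkOfBound ⟨fun z => F z + M, by fun_prop⟩ (2 * M)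
      (by
        intro x y
        simp only [ContinuousMap.coe_mk, Real.dist_eq, add_sub_add_right_eq_sub]
        calc |F x - F y| ≤ |F x| + |F y| := abs_sub _ _
        _ ≤ M + M := add_le_add (hbd x) (hbd y)
        _ = 2 * M := by ring) with hf
  have hfz : ∀ z, f z = F z + M := fun z => rfl
  have f_nn : ∀ z, (0:ℝ) ≤ f z := fun z => by
    have := (abs_le.mp (hbd z)).1; rw [hfz]; linarith
  have f_nn' : 0 ≤ᵐ[μ] (f : X → ℝ) := Eventually.of_forall f_nn
  have f_nn'' : 0 ≤ᵐ[ν] (f : X → ℝ) := Eventually.of_forall f_nn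
  have fnorm : ‖f‖ ≤ 2 * M := by
    apply BoundedContinuousFunction.norm_le (by linarith) |>.mpr
    intro z
    rw [hfz, Real.norm_eq_abs, abs_of_nonneg (by have := (abs_le.mp (hbd z)).1; linarith)]
    have := (abs_le.mp (hbd z)).2; linarith
  have hB : (0:ℝ) ≤ ‖f‖ := norm_nonneg f
  set B := ‖f‖ with hBdef
  set g : ℝ → ℝ := fun s => (ν {a | s ≤ F a + M}).toReal with hg
  have hset : ∀ t : ℝ, {a | t ≤ f a} = {a | t ≤ F a + M} := fun t => rfl
  have g_anti : Antitone g := by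
    intro s t hst
    exact ENNReal.toReal_mono (measure_ne_top _ _) (measure_mono (fun a ha => hst.trans ha))
  have g_meas : Measurable g := g_anti.measurable
  have g_nonneg : ∀ s, 0 ≤ g s := fun s => ENNReal.toReal_nonneg
  have g_le_one : ∀ s, g s ≤ 1 := fun s => by
    rw [hg]
    simp only
    rw [show (1:ℝ) = (ν Set.univ).toReal by simp]
    exact ENNReal.toReal_mono (measure_ne_top _ _) (measure_mono (subset_univ _))
  -- step 1 : thickening bound
  have step1 : ∀ t : ℝ, (ν (thickening ε {a | t ≤ f a})).toReal ≤ g (t - L * ε) := by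
    intro t
    apply ENNReal.toReal_mono (measure_ne_top _ _)
    apply measure_mono
    intro z hz
    rw [mem_thickening_iff] at hz
    obtain ⟨w, hw, hdzw⟩ := hz
    rw [hset] at hw
    simp only [Set.mem_setOf_eq]
    have h1 : F w - F z ≤ L * dist z w := by
      have := (abs_le.mp (hLip z w)).1; linarith
    have h2 : L * dist z w ≤ L * ε := mul_le_mul_of_nonneg_left hdzw.le hL
    have hw' : t ≤ F w + M := hw
    linarith
  -- key LP inequality from mathlib
  have key := BoundedContinuousFunction.integral_le_of_levyProkhorovEDist_lt μ ν hε hlt f f_nn'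
  -- integrability facts
  have int_thick : IntegrableOn
      (fun t => (ν (thickening ε {a | t ≤ f a})).toReal) (Ioc 0 B) := by
    apply Measure.integrableOn_of_bounded (M := (ν Set.univ).toReal) measure_Ioc_lt_top.ne
    · apply Measurable.aestronglyMeasurable
      apply Measurable.ennreal_toReal
      apply Antitone.measurable
      intro s t hst
      exact measure_mono <| thickening_subset_of_subset ε (fun a h => hst.trans h)
    · apply Eventually.of_forall fun t => ?_
      rw [Real.norm_eq_abs, abs_of_nonneg ENNReal.toReal_nonneg]
      exact ENNReal.toReal_mono (measure_ne_top _ _) (measure_mono (subset_univ _))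
  have int_g : ∀ a b : ℝ, IntegrableOn g (Ioc a b) := by
    intro a b
    apply Measure.integrableOn_of_bounded (M := 1) measure_Ioc_lt_top.ne
      g_meas.aestronglyMeasurable
    exact Eventually.of_forall fun t => by
      rw [Real.norm_eq_abs, abs_of_nonneg (g_nonneg t)]; exact g_le_one t
  have int_gshift : IntegrableOn (fun t => g (t - L * ε)) (Ioc 0 B) := by
    apply Measure.integrableOn_of_bounded (M := 1) measure_Ioc_lt_top.ne
    · exact (g_meas.comp (measurable_id.sub measurable_const)).aestronglyMeasurable
    · exact Eventually.of_forall fun t => by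
        rw [Real.norm_eq_abs, abs_of_nonneg (g_nonneg _)]; exact g_le_one _
  -- step 2 : compare integrands
  have step2 : ∫ t in Ioc 0 B, (ν (thickening ε {a | t ≤ f a})).toReal
      ≤ ∫ t in Ioc 0 B, g (t - L * ε) :=
    setIntegral_mono_on int_thick int_gshift measurableSet_Ioc (fun t _ => step1 t)
  -- step 3 : change of variables
  have hLε : 0 ≤ L * ε := mul_nonneg hL hε.le
  have gii : ∀ a b : ℝ, IntervalIntegrable g volume a b := by
    intro a b
    exact (g_anti.antitoneOn _).intervalIntegrable
  have step3 : ∫ t in Ioc 0 B, g (t - L * ε) = ∫ s in (-(L*ε))..(B - L*ε), g s := by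
    rw [← intervalIntegral.integral_of_le hB, intervalIntegral.integral_comp_sub_right g (L*ε),
      zero_sub]
  -- step 4 : split and bound
  have step4a : ∫ s in (-(L*ε))..(0:ℝ), g s ≤ L * ε := by
    rw [intervalIntegral.integral_of_le (by linarith)]
    calc ∫ s in Ioc (-(L*ε)) 0, g s ≤ ∫ _ in Ioc (-(L*ε)) (0:ℝ), (1:ℝ) :=
          setIntegral_mono_on (int_g _ _) (integrableOn_const measure_Ioc_lt_top.ne)
            measurableSet_Ioc (fun t _ => g_le_one t)
    _ = L * ε := by
          rw [setIntegral_const]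
          simp [Real.volume_Ioc, ENNReal.toReal_ofReal hLε, hLε]
  have step4b : ∫ s in (0:ℝ)..(B - L*ε), g s ≤ ∫ s in Ioc 0 B, g s := by
    rcases le_or_gt 0 (B - L * ε) with hc | hc
    · rw [intervalIntegral.integral_of_le hc]
      apply setIntegral_mono_set (int_g 0 B)
        (Eventually.of_forall fun t => g_nonneg t)
      exact HasSubset.Subset.eventuallyLE (Ioc_subset_Ioc_right (by linarith))
    · rw [intervalIntegral.integral_symm, intervalIntegral.integral_of_le hc.le]
      have h1 : 0 ≤ ∫ s in Ioc (B - L*ε) 0, g s :=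
        setIntegral_nonneg measurableSet_Ioc (fun t _ => g_nonneg t)
      have h2 : 0 ≤ ∫ s in Ioc 0 B, g s :=
        setIntegral_nonneg measurableSet_Ioc (fun t _ => g_nonneg t)
      linarith
  have step4 : ∫ s in (-(L*ε))..(B - L*ε), g s ≤ L * ε + ∫ s in Ioc 0 B, g s := by
    rw [← intervalIntegral.integral_add_adjacent_intervals (b := (0:ℝ)) (gii _ _) (gii _ _)]
    exact add_le_add step4a step4b
  -- layer cake for ν
  have layer_ν : ∫ z, f z ∂ν = ∫ s in Ioc 0 B, g s :=
    BoundedContinuousFunction.integral_eq_integral_meas_le f ν f_nn''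
  -- assemble for f
  have main_f : ∫ z, f z ∂μ ≤ ∫ z, f z ∂ν + (L + 2*M) * ε := by
    have hnorm : ε * ‖f‖ ≤ ε * (2*M) := mul_le_mul_of_nonneg_left fnorm hε.le
    calc ∫ z, f z ∂μ ≤ (∫ t in Ioc 0 B, (ν (thickening ε {a | t ≤ f a})).toReal) + ε * ‖f‖ := key
    _ ≤ (∫ t in Ioc 0 B, g (t - L * ε)) + ε * (2*M) := add_le_add step2 hnorm
    _ = (∫ s in (-(L*ε))..(B - L*ε), g s) + ε * (2*M) := by rw [step3]
    _ ≤ (L * ε + ∫ s in Ioc 0 B, g s) + ε * (2*M) := add_le_add_left step4 _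
    _ = ∫ z, f z ∂ν + (L + 2*M) * ε := by rw [layer_ν]; ring
  -- translate to F
  have hFint : ∀ (κ : Measure X) [IsProbabilityMeasure κ], ∫ z, f z ∂κ = ∫ z, F z ∂κ + M := by
    intro κ hκ
    have iF : Integrable F κ := by
      refine ((f.integrable κ).sub (integrable_const M)).congr (Eventually.of_forall fun z => ?_)
      simp [hfz]
    have : ∫ z, f z ∂κ = ∫ z, (F z + M) ∂κ := rfl
    rw [this, integral_add iF (integrable_const M), integral_const]
    simp
  rw [hFint μ, hFint ν] at main_f
  linarith
end BL

section Dom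
variable {X : Type*} [MetricSpace X] [MeasurableSpace X] [OpensMeasurableSpace X]

lemma dom_one_sided (μ ν : Measure X) [IsProbabilityMeasure μ] [IsProbabilityMeasure ν]
    {e : ℕ → X} (he : DenseRange e) {F : X → ℝ} {L M : ℝ} (hL : 0 < L) (hM : 0 ≤ M)
    (hLip : ∀ z w, |F z - F w| ≤ L * dist z w) (hbd : ∀ z, |F z| ≤ M) :
    ∫ z, F z ∂μ - ∫ z, F z ∂ν
      ≤ ⨆ i : (k : ℕ) × (Fin (k + 1) → ℚ), |∫ z, Dfun e L M i z ∂μ - ∫ z, Dfun e L M i z ∂ν| := by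
  classical
  have intD : ∀ (κ : Measure X) [IsProbabilityMeasure κ] (i : (k : ℕ) × (Fin (k + 1) → ℚ)),
      Integrable (Dfun e L M i) κ := by
    intro κ hκ i
    refine Integrable.mono' (integrable_const M)
      ((Dfun_continuous e hL.le M i).aestronglyMeasurable) ?_
    exact Eventually.of_forall fun z => by
      rw [Real.norm_eq_abs]; exact Dfun_abs_le e L hM i z
  have absD_le : ∀ i, |∫ z, Dfun e L M i z ∂μ - ∫ z, Dfun e L M i z ∂ν| ≤ 2 * M := by
    intro i
    have h1 : ∀ (κ : Measure X) [IsProbabilityMeasure κ], |∫ z, Dfun e L M i z ∂κ| ≤ M := by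
      intro κ hκ
      have := norm_integral_le_of_norm_le_const (μ := κ) (f := Dfun e L M i) (C := M)
        (Eventually.of_forall fun z => by rw [Real.norm_eq_abs]; exact Dfun_abs_le e L hM i z)
      simpa using this
    calc |∫ z, Dfun e L M i z ∂μ - ∫ z, Dfun e L M i z ∂ν|
        ≤ |∫ z, Dfun e L M i z ∂μ| + |∫ z, Dfun e L M i z ∂ν| := abs_sub _ _
    _ ≤ M + M := add_le_add (h1 μ) (h1 ν)
    _ = 2 * M := by ring
  have hbdd : BddAbove (Set.range fun i : (k : ℕ) × (Fin (k + 1) → ℚ) =>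
      |∫ z, Dfun e L M i z ∂μ - ∫ z, Dfun e L M i z ∂ν|) := by
    refine ⟨2 * M, ?_⟩
    rintro r ⟨i, rfl⟩
    exact absD_le i
  refine le_of_forall_pos_le_add fun δ hδ => ?_
  -- choose rationals above the values of F at the dense sequence
  have hq : ∀ j : ℕ, ∃ q : ℚ, F (e j) < (q : ℝ) ∧ (q : ℝ) < F (e j) + δ := by
    intro j
    obtain ⟨q, hq1, hq2⟩ := exists_rat_btwn (show F (e j) < F (e j) + δ by linarith)
    exact ⟨q, hq1, hq2⟩
  choose q hq1 hq2 using hq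
  -- the limit function
  have hφ_lb : ∀ z j, F z ≤ (q j : ℝ) + L * dist z (e j) := by
    intro z j
    have h1 : F z - F (e j) ≤ L * dist z (e j) := (abs_le.mp (hLip z (e j))).2
    have := hq1 j
    linarith
  set φ : ℕ → X → ℝ := fun j z => (q j : ℝ) + L * dist z (e j) with hφ
  have hbb : ∀ z, BddBelow (Set.range fun j => φ j z) := by
    intro z
    exact ⟨F z, by rintro r ⟨j, rfl⟩; exact hφ_lb z j⟩
  set ulim : X → ℝ := fun z => ⨅ j : ℕ, φ j z with hulim
  have hulim_lb : ∀ z, F z ≤ ulim z := fun z => le_ciInf (hφ_lb z)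
  have hulim_ub : ∀ z, ulim z ≤ F z + δ := by
    intro z
    refine le_of_forall_pos_le_add fun η hη => ?_
    obtain ⟨j, hj⟩ := (Metric.denseRange_iff.mp he) z (η / (2 * L)) (by positivity)
    have h1 : ulim z ≤ φ j z := ciInf_le (hbb z) j
    have h2 : (q j : ℝ) < F (e j) + δ := hq2 j
    have h3 : F (e j) - F z ≤ L * dist (e j) z := (abs_le.mp (hLip (e j) z)).2
    rw [dist_comm] at h3
    have h4 : L * dist z (e j) ≤ L * (η / (2 * L)) := mul_le_mul_of_nonneg_left hj.le hL.le
    have h5 : L * (η / (2 * L)) = η / 2 := by field_simp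
    simp only [hφ] at h1
    linarith
  set Flim : X → ℝ := fun z => clampD M (ulim z) with hFlim
  have hF_le_Flim : ∀ z, F z ≤ Flim z := by
    intro z
    calc F z = clampD M (F z) := (clampD_eq (hbd z)).symm
    _ ≤ clampD M (ulim z) := clampD_mono M (hulim_lb z)
  have hFlim_le : ∀ z, Flim z ≤ F z + δ := by
    intro z
    have h0 : -M ≤ ulim z := by
      have := (abs_le.mp (hbd z)).1
      linarith [hulim_lb z]
    calc Flim z ≤ ulim z := clampD_le h0
    _ ≤ F z + δ := hulim_ub z
  -- the approximating sequence
  set ik : ℕ → (k : ℕ) × (Fin (k + 1) → ℚ) := fun k => ⟨k, fun j => q (j : ℕ)⟩ with hik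
  have hDk_eq : ∀ k z, Dfun e L M (ik k) z
      = clampD M (Finset.univ.inf' Finset.univ_nonempty
          (fun j : Fin (k + 1) => φ (j : ℕ) z)) := fun k z => rfl
  -- pointwise convergence of premins to ulim
  have hpre_tend : ∀ z, Tendsto (fun k => premin e L (ik k) z) atTop (𝓝 (ulim z)) := by
    intro z
    set m : ℕ → ℝ := fun k => premin e L (ik k) z with hm
    have hm_eq : ∀ k, m k = Finset.univ.inf' Finset.univ_nonempty
        (fun j : Fin (k + 1) => φ (j : ℕ) z) := fun k => rfl
    have hm_ge : ∀ k, ulim z ≤ m k := by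
      intro k
      rw [hm_eq k]
      exact Finset.le_inf' _ _ (fun j _ => ciInf_le (hbb z) (j : ℕ))
    have hm_le : ∀ j : ℕ, m j ≤ φ j z := by
      intro j
      rw [hm_eq j]
      exact Finset.inf'_le _ (Finset.mem_univ (⟨j, Nat.lt_succ_self j⟩ : Fin (j + 1)))
    have hanti : Antitone m := by
      intro a b hab
      rw [hm_eq a, hm_eq b]
      apply Finset.le_inf'
      intro j _
      exact Finset.inf'_le _ (Finset.mem_univ (⟨(j : ℕ), by omega⟩ : Fin (b + 1)))
    have hbdd_m : BddBelow (Set.range m) := ⟨ulim z, by rintro r ⟨k, rfl⟩; exact hm_ge k⟩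
    have htend : Tendsto m atTop (𝓝 (⨅ k, m k)) := tendsto_atTop_ciInf hanti hbdd_m
    have : (⨅ k, m k) = ulim z := by
      apply le_antisymm
      · refine le_ciInf fun j => ?_
        exact (ciInf_le ⟨ulim z, by rintro r ⟨k, rfl⟩; exact hm_ge k⟩ j).trans (hm_le j)
      · exact le_ciInf hm_ge
    rwa [this] at htend
  have hclamp_cont : Continuous (clampD M) :=
    continuous_const.max (continuous_const.min continuous_id)
  have hDk_tend : ∀ z, Tendsto (fun k => Dfun e L M (ik k) z) atTop (𝓝 (Flim z)) := by
    intro z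
    exact (hclamp_cont.tendsto (ulim z)).comp (hpre_tend z)
  -- integrability and integral convergence
  have hmeas_ulim : Measurable ulim := by
    apply Measurable.iInf
    intro j
    exact (continuous_const.add (continuous_const.mul (continuous_id.dist continuous_const))).measurable
  have hmeas_Flim : Measurable Flim :=
    (measurable_const.max (measurable_const.min hmeas_ulim))
  have hFlim_bd : ∀ z, |Flim z| ≤ M := fun z => clampD_abs_le hM
  have hint_Flim : ∀ (κ : Measure X) [IsProbabilityMeasure κ], Integrable Flim κ := by
    intro κ hκ
    refine Integrable.mono' (integrable_const M) hmeas_Flim.aestronglyMeasurable ?_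
    exact Eventually.of_forall fun z => by rw [Real.norm_eq_abs]; exact hFlim_bd z
  have hFcont : Continuous F := by
    have : LipschitzWith (Real.toNNReal L) F := by
      apply LipschitzWith.of_dist_le_mul
      intro x y
      rw [Real.dist_eq, Real.coe_toNNReal _ hL.le]
      exact hLip x y
    exact this.continuous
  have hint_F : ∀ (κ : Measure X) [IsProbabilityMeasure κ], Integrable F κ := by
    intro κ hκ
    refine Integrable.mono' (integrable_const M) hFcont.aestronglyMeasurable ?_
    exact Eventually.of_forall fun z => by rw [Real.norm_eq_abs]; exact hbd z
  have htend_int : ∀ (κ : Measure X) [IsProbabilityMeasure κ],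
      Tendsto (fun k => ∫ z, Dfun e L M (ik k) z ∂κ) atTop (𝓝 (∫ z, Flim z ∂κ)) := by
    intro κ hκ
    apply tendsto_integral_of_dominated_convergence (fun _ => M)
    · exact fun k => (Dfun_continuous e hL.le M (ik k)).aestronglyMeasurable
    · exact integrable_const M
    · exact fun k => Eventually.of_forall fun z => by
        rw [Real.norm_eq_abs]; exact Dfun_abs_le e L hM (ik k) z
    · exact Eventually.of_forall hDk_tend
  -- conclude
  have hdiff_tend : Tendsto (fun k => ∫ z, Dfun e L M (ik k) z ∂μ - ∫ z, Dfun e L M (ik k) z ∂ν)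
      atTop (𝓝 (∫ z, Flim z ∂μ - ∫ z, Flim z ∂ν)) := (htend_int μ).sub (htend_int ν)
  have hlim_le : ∫ z, Flim z ∂μ - ∫ z, Flim z ∂ν
      ≤ ⨆ i : (k : ℕ) × (Fin (k + 1) → ℚ), |∫ z, Dfun e L M i z ∂μ - ∫ z, Dfun e L M i z ∂ν| := by
    apply le_of_tendsto hdiff_tend
    apply Eventually.of_forall fun k => ?_
    exact (le_abs_self _).trans (le_ciSup hbdd (ik k))
  have h1 : ∫ z, F z ∂μ ≤ ∫ z, Flim z ∂μ := integral_mono (hint_F μ) (hint_Flim μ) hF_le_Flim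
  have h2 : ∫ z, Flim z ∂ν ≤ ∫ z, F z ∂ν + δ := by
    have h2' : ∫ z, Flim z ∂ν ≤ ∫ z, (F z + δ) ∂ν :=
      integral_mono (hint_Flim ν) ((hint_F ν).add (integrable_const δ)) hFlim_le
    rwa [integral_add (hint_F ν) (integrable_const δ), integral_const, probReal_univ,
      one_smul] at h2'
  linarith
end Dom


section Cubes
variable {d : ℕ}

/-- The discrete cube of radius `m` centered at `y` in `ℤ^d`. -/
noncomputable def cube (y : Fin d → ℤ) (m : ℕ) : Finset (Fin d → ℤ) :=
  Finset.Icc (fun i => y i - m) (fun i => y i + m)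

lemma mem_cube {y x : Fin d → ℤ} {m : ℕ} :
    x ∈ cube y m ↔ ∀ i, y i - m ≤ x i ∧ x i ≤ y i + m := by
  simp only [cube, Finset.mem_Icc, Pi.le_def, ← forall_and]

lemma self_mem_cube (y : Fin d → ℤ) (m : ℕ) : y ∈ cube y m := by
  rw [mem_cube]
  intro i
  constructor <;> omega

lemma card_cube (y : Fin d → ℤ) (m : ℕ) : (cube y m).card = (2 * m + 1) ^ d := by
  classical
  rw [cube, Pi.card_Icc]
  have : ∀ i : Fin d, (Finset.Icc (y i - m) (y i + m)).card = 2 * m + 1 := by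
    intro i
    rw [Int.card_Icc]
    omega
  simp only [this, Finset.prod_const, Finset.card_univ, Fintype.card_fin]

lemma cube_subset_of_touch {a b : Fin d → ℤ} {ma mb : ℕ} (hm : ma ≤ mb)
    (h : ¬ Disjoint (cube a ma) (cube b mb)) : cube a ma ⊆ cube b (3 * mb) := by
  rw [Finset.not_disjoint_iff] at h
  obtain ⟨p, hpa, hpb⟩ := h
  rw [mem_cube] at hpa hpb
  intro x hx
  rw [mem_cube] at hx ⊢
  intro i
  have h1 := hpa i
  have h2 := hpb i
  have h3 := hx i
  constructor <;> [skip; skip] <;> push_cast <;> push_cast at h1 h2 h3 <;> omega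

/-- Discrete Vitali covering lemma for cubes in `ℤ^d` (greedy selection). -/
lemma vitali_cubes (t : Finset (Fin d → ℤ)) (ρ : (Fin d → ℤ) → ℕ) :
    ∃ u ⊆ t, (∀ a ∈ u, ∀ b ∈ u, a ≠ b → Disjoint (cube a (ρ a)) (cube b (ρ b))) ∧
      (∀ a ∈ t, ∃ b ∈ u, ρ a ≤ ρ b ∧ ¬ Disjoint (cube a (ρ a)) (cube b (ρ b))) := by
  classical
  induction t using Finset.strongInduction with
  | _ s ih =>
    rcases s.eq_empty_or_nonempty with rfl | hne
    · exact ⟨∅, by simp⟩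
    · obtain ⟨a₀, ha₀s, ha₀max⟩ := s.exists_max_image ρ hne
      set s' := s.filter (fun a => Disjoint (cube a (ρ a)) (cube a₀ (ρ a₀))) with hs'
      have hss : s' ⊂ s := by
        rw [Finset.filter_ssubset]
        refine ⟨a₀, ha₀s, fun hdisj => ?_⟩
        have := Finset.disjoint_left.mp hdisj (self_mem_cube a₀ (ρ a₀))
        exact this (self_mem_cube a₀ (ρ a₀))
      obtain ⟨u', hu's, hdisj', hcov'⟩ := ih s' hss
      refine ⟨insert a₀ u', ?_, ?_, ?_⟩
      · intro x hx
        rcases Finset.mem_insert.mp hx with rfl | hx'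
        · exact ha₀s
        · exact (Finset.filter_subset _ _) (hu's hx')
      · intro a ha b hb hab
        rcases Finset.mem_insert.mp ha with rfl | ha' <;>
          rcases Finset.mem_insert.mp hb with rfl | hb'
        · exact absurd rfl hab
        · exact ((Finset.mem_filter.mp (hu's hb')).2).symm
        · exact (Finset.mem_filter.mp (hu's ha')).2
        · exact hdisj' a ha' b hb' hab
      · intro a ha
        by_cases hd : Disjoint (cube a (ρ a)) (cube a₀ (ρ a₀))
        · obtain ⟨b, hbu, hb1, hb2⟩ := hcov' a (Finset.mem_filter.mpr ⟨ha, hd⟩)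
          exact ⟨b, Finset.mem_insert_of_mem hbu, hb1, hb2⟩
        · exact ⟨a₀, Finset.mem_insert_self _ _, ha₀max a ha, hd⟩

open Classical in
/-- The deterministic counting estimate via the Vitali covering lemma. -/
lemma count_lemma {d : ℕ} (G : (Fin d → ℤ) → ℝ) (hG0 : ∀ x, 0 ≤ G x)
    (r : ℕ → ℕ) (hr : Monotone r) (c lam : ℝ)
    (hc : ∀ n : ℕ, 1 ≤ n → ((6 * r n + 1 : ℕ) : ℝ) ^ d ≤ c * (n : ℝ) ^ d)
    (hc0 : 0 ≤ c) (hlam : 0 < lam) (N R : ℕ) :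
    lam * (((cube (0 : Fin d → ℤ) R).filter
        (fun y => ∃ n, 1 ≤ n ∧ n ≤ N ∧
          lam * (n : ℝ) ^ d < ∑ x ∈ cube y (r n), G x)).card : ℝ)
      ≤ c * ∑ z ∈ cube (0 : Fin d → ℤ) (R + r N), G z := by
  classical
  set p : (Fin d → ℤ) → Prop := fun y => ∃ n, 1 ≤ n ∧ n ≤ N ∧
    lam * (n : ℝ) ^ d < ∑ x ∈ cube y (r n), G x with hp
  set S := (cube (0 : Fin d → ℤ) R).filter p with hS
  set nn : (Fin d → ℤ) → ℕ := fun y => if h : p y then h.choose else 1 with hnn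
  have hnn_spec : ∀ y ∈ S, 1 ≤ nn y ∧ nn y ≤ N ∧
      lam * ((nn y : ℝ)) ^ d < ∑ x ∈ cube y (r (nn y)), G x := by
    intro y hy
    have hpy : p y := (Finset.mem_filter.mp hy).2
    simp only [hnn, dif_pos hpy]
    exact hpy.choose_spec
  set ρ : (Fin d → ℤ) → ℕ := fun y => r (nn y) with hρ
  obtain ⟨u, huS, hdisj, hcov⟩ := vitali_cubes S ρ
  -- S is covered by the enlarged cubes
  have hScover : S ⊆ u.biUnion (fun b => cube b (3 * ρ b)) := by
    intro y hy
    obtain ⟨b, hbu, hb1, hb2⟩ := hcov y hy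
    rw [Finset.mem_biUnion]
    exact ⟨b, hbu, cube_subset_of_touch hb1 hb2 (self_mem_cube y (ρ y))⟩
  have hcard : (S.card : ℝ) ≤ ∑ b ∈ u, (((2 * (3 * ρ b) + 1) ^ d : ℕ) : ℝ) := by
    have h1 : S.card ≤ ∑ b ∈ u, (cube b (3 * ρ b)).card :=
      (Finset.card_le_card hScover).trans (Finset.card_biUnion_le)
    have h2 : ∀ b, (cube b (3 * ρ b)).card = (2 * (3 * ρ b) + 1) ^ d := fun b => card_cube _ _
    calc (S.card : ℝ) ≤ ((∑ b ∈ u, (cube b (3 * ρ b)).card : ℕ) : ℝ) := by exact_mod_cast h1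
    _ = ∑ b ∈ u, (((2 * (3 * ρ b) + 1) ^ d : ℕ) : ℝ) := by
        push_cast [h2]; rfl
  -- per-cube estimate
  have hper : ∀ b ∈ u, lam * (((2 * (3 * ρ b) + 1) ^ d : ℕ) : ℝ)
      ≤ c * ∑ x ∈ cube b (ρ b), G x := by
    intro b hbu
    obtain ⟨h1, h2, h3⟩ := hnn_spec b (huS hbu)
    have heq : 2 * (3 * ρ b) + 1 = 6 * r (nn b) + 1 := by rw [hρ]; ring
    have hcb := hc (nn b) h1
    calc lam * (((2 * (3 * ρ b) + 1) ^ d : ℕ) : ℝ)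
        = lam * (((6 * r (nn b) + 1 : ℕ) : ℝ) ^ d) := by rw [heq]; push_cast; ring
    _ ≤ lam * (c * (nn b : ℝ) ^ d) := by
        apply mul_le_mul_of_nonneg_left hcb hlam.le
    _ = c * (lam * (nn b : ℝ) ^ d) := by ring
    _ ≤ c * ∑ x ∈ cube b (ρ b), G x := mul_le_mul_of_nonneg_left h3.le hc0
  -- sum over the disjoint cubes
  have hsum_disj : ∑ b ∈ u, ∑ x ∈ cube b (ρ b), G x
      = ∑ z ∈ u.biUnion (fun b => cube b (ρ b)), G z := by
    rw [Finset.sum_biUnion]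
    intro a ha b hb hab
    exact hdisj a ha b hb hab
  have hsub : u.biUnion (fun b => cube b (ρ b)) ⊆ cube (0 : Fin d → ℤ) (R + r N) := by
    intro z hz
    rw [Finset.mem_biUnion] at hz
    obtain ⟨b, hbu, hzb⟩ := hz
    have hbbox : b ∈ cube (0 : Fin d → ℤ) R := (Finset.mem_filter.mp (huS hbu)).1
    have hρb : ρ b ≤ r N := hr (hnn_spec b (huS hbu)).2.1
    rw [mem_cube] at hbbox hzb ⊢
    intro i
    have h1 := hbbox i
    have h2 := hzb i
    simp only [Pi.zero_apply, zero_sub, zero_add] at h1 ⊢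
    push_cast at h1 h2 ⊢
    omega
  have hsum_le : ∑ z ∈ u.biUnion (fun b => cube b (ρ b)), G z
      ≤ ∑ z ∈ cube (0 : Fin d → ℤ) (R + r N), G z :=
    Finset.sum_le_sum_of_subset_of_nonneg hsub (fun z _ _ => hG0 z)
  calc lam * (S.card : ℝ) ≤ lam * ∑ b ∈ u, (((2 * (3 * ρ b) + 1) ^ d : ℕ) : ℝ) :=
        mul_le_mul_of_nonneg_left hcard hlam.le
  _ = ∑ b ∈ u, lam * (((2 * (3 * ρ b) + 1) ^ d : ℕ) : ℝ) := Finset.mul_sum _ _ _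
  _ ≤ ∑ b ∈ u, c * ∑ x ∈ cube b (ρ b), G x := Finset.sum_le_sum hper
  _ = c * ∑ b ∈ u, ∑ x ∈ cube b (ρ b), G x := (Finset.mul_sum _ _ _).symm
  _ = c * ∑ z ∈ u.biUnion (fun b => cube b (ρ b)), G z := by rw [hsum_disj]
  _ ≤ c * ∑ z ∈ cube (0 : Fin d → ℤ) (R + r N), G z :=
      mul_le_mul_of_nonneg_left hsum_le hc0

end Cubes

section Maximal
variable {d : ℕ} {Ω : Type*} [MeasurableSpace Ω]

lemma sum_cube_translate {d : ℕ} (f : (Fin d → ℤ) → ℝ) (y : Fin d → ℤ) (m : ℕ) :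
    ∑ z ∈ cube y m, f z = ∑ x ∈ cube (0 : Fin d → ℤ) m, f (y + x) := by
  apply Finset.sum_nbij' (fun z => z - y) (fun x => y + x)
  · intro z hz
    rw [mem_cube] at hz ⊢
    intro i
    have := hz i
    simp only [Pi.zero_apply, Pi.sub_apply, zero_sub, zero_add]
    omega
  · intro x hx
    rw [mem_cube] at hx ⊢
    intro i
    have := hx i
    simp only [Pi.zero_apply, Pi.add_apply, zero_sub, zero_add] at *
    omega
  · intro z _; funext i; simp
  · intro x _; funext i; simp
  · intro z _; congr 1; funext i; simp

open Classical in
lemma maximal_ineq (Q : Measure Ω) [IsProbabilityMeasure Q]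
    (τ : (Fin d → ℤ) → Ω → Ω) (hτ_meas : ∀ z, Measurable (τ z))
    (hτ_zero : τ 0 = id) (hτ_add : ∀ z w, τ (z + w) = τ z ∘ τ w)
    (hτ_pres : ∀ z, MeasurePreserving (τ z) Q Q)
    (g : Ω → ℝ) (hg : Measurable g) (hg0 : ∀ ω, 0 ≤ g ω) (hg1 : ∀ ω, g ω ≤ 1)
    (r : ℕ → ℕ) (hr : Monotone r) (c lam : ℝ)
    (hc : ∀ n : ℕ, 1 ≤ n → ((6 * r n + 1 : ℕ) : ℝ) ^ d ≤ c * (n : ℝ) ^ d) (hc0 : 0 ≤ c)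
    (hlam : 0 < lam) :
    Q {ω | ∃ n : ℕ, 1 ≤ n ∧ lam * (n : ℝ) ^ d < ∑ x ∈ cube (0 : Fin d → ℤ) (r n), g (τ x ω)}
      ≤ ENNReal.ofReal (c * (∫ ω, g ω ∂Q) / lam) := by
  -- measurable embedding property of the action
  have hτ_emb : ∀ z, MeasurableEmbedding (τ z) := by
    intro z
    have h1 : ∀ w w' ω, τ w (τ w' ω) = τ (w + w') ω := fun w w' ω =>
      (congrFun (hτ_add w w') ω).symm
    have hli : Function.LeftInverse (τ (-z)) (τ z) := fun ω => by
      rw [h1, neg_add_cancel, hτ_zero]; rfl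
    have hri : Function.RightInverse (τ (-z)) (τ z) := fun ω => by
      rw [h1, add_neg_cancel, hτ_zero]; rfl
    exact (MeasurableEquiv.mk ⟨τ z, τ (-z), hli, hri⟩ (hτ_meas z) (hτ_meas (-z))).measurableEmbedding
  -- integrability of g
  have hg_int : Integrable g Q := by
    refine Integrable.mono' (integrable_const 1) hg.aestronglyMeasurable ?_
    exact Eventually.of_forall fun ω => by
      rw [Real.norm_eq_abs, abs_of_nonneg (hg0 ω)]; exact hg1 ω
  have hgτ_int : ∀ z, Integrable (fun ω => g (τ z ω)) Q := by
    intro z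
    exact ((hτ_pres z).integrable_comp_emb (hτ_emb z)).mpr hg_int
  have hgτ_eq : ∀ z, ∫ ω, g (τ z ω) ∂Q = ∫ ω, g ω ∂Q := fun z =>
    (hτ_pres z).integral_comp (hτ_emb z) g
  have hI0 : 0 ≤ ∫ ω, g ω ∂Q := integral_nonneg hg0
  set I := ∫ ω, g ω ∂Q with hIdef
  -- the partial maximal sets
  have hSn_meas : ∀ n : ℕ, Measurable (fun ω => ∑ x ∈ cube (0 : Fin d → ℤ) (r n), g (τ x ω)) :=
    fun n => Finset.measurable_sum _ (fun x _ => hg.comp (hτ_meas x))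
  set EN : ℕ → Set Ω := fun N => {ω | ∃ n, 1 ≤ n ∧ n ≤ N ∧
    lam * (n : ℝ) ^ d < ∑ x ∈ cube (0 : Fin d → ℤ) (r n), g (τ x ω)} with hEN
  have hEN_meas : ∀ N, MeasurableSet (EN N) := by
    intro N
    have : EN N = ⋃ n, ⋃ (_ : 1 ≤ n ∧ n ≤ N),
        {ω | lam * (n : ℝ) ^ d < ∑ x ∈ cube (0 : Fin d → ℤ) (r n), g (τ x ω)} := by
      ext ω
      simp only [hEN, Set.mem_setOf_eq, Set.mem_iUnion]
      tauto
    rw [this]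
    exact MeasurableSet.iUnion fun n => MeasurableSet.iUnion fun _ =>
      measurableSet_lt measurable_const (hSn_meas n)
  -- pointwise counting bound
  have hpoint : ∀ (N R : ℕ) (ω : Ω),
      lam * (((cube (0 : Fin d → ℤ) R).filter (fun y => τ y ω ∈ EN N)).card : ℝ)
        ≤ c * ∑ z ∈ cube (0 : Fin d → ℤ) (R + r N), g (τ z (ω)) := by
    intro N R ω
    have key := count_lemma (fun x => g (τ x ω)) (fun x => hg0 _) r hr c lam hc hc0 hlam N R
    have hfil : (cube (0 : Fin d → ℤ) R).filter
          (fun y => ∃ n, 1 ≤ n ∧ n ≤ N ∧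
            lam * (n : ℝ) ^ d < ∑ x ∈ cube y (r n), g (τ x ω))
        = (cube (0 : Fin d → ℤ) R).filter (fun y => τ y ω ∈ EN N) := by
      apply Finset.filter_congr
      intro y _
      have hsum : ∀ n : ℕ, ∑ x ∈ cube y (r n), g (τ x ω)
          = ∑ x ∈ cube (0 : Fin d → ℤ) (r n), g (τ x (τ y ω)) := by
        intro n
        rw [sum_cube_translate (fun z => g (τ z ω)) y (r n)]
        apply Finset.sum_congr rfl
        intro x _
        rw [add_comm y x, hτ_add x y]
        rfl
      simp only [hEN, Set.mem_setOf_eq]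
      constructor
      · rintro ⟨n, h1, h2, h3⟩; exact ⟨n, h1, h2, by rwa [hsum n] at h3⟩
      · rintro ⟨n, h1, h2, h3⟩; exact ⟨n, h1, h2, by rwa [← hsum n] at h3⟩
    rwa [hfil] at key
  -- integrate the counting bound
  have hint_bound : ∀ N R : ℕ,
      lam * ((cube (0 : Fin d → ℤ) R).card : ℝ) * (Q (EN N)).toReal
        ≤ c * ((cube (0 : Fin d → ℤ) (R + r N)).card : ℝ) * I := by
    intro N R
    -- LHS as an integral
    have hLHS : ∀ ω, lam * (((cube (0 : Fin d → ℤ) R).filter (fun y => τ y ω ∈ EN N)).card : ℝ)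
        = lam * ∑ y ∈ cube (0 : Fin d → ℤ) R, (EN N).indicator (fun _ => (1:ℝ)) (τ y ω) := by
      intro ω
      congr 1
      rw [Finset.card_filter]
      push_cast
      apply Finset.sum_congr rfl
      intro y _
      simp [Set.indicator_apply]
    have hind_int : ∀ y : Fin d → ℤ,
        Integrable (fun ω => (EN N).indicator (fun _ => (1:ℝ)) (τ y ω)) Q := by
      intro y
      have h0 : Integrable ((EN N).indicator (fun _ => (1:ℝ))) Q :=
        (integrable_const (1:ℝ)).indicator (hEN_meas N)
      exact ((hτ_pres y).integrable_comp_emb (hτ_emb y)).mpr h0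
    have hind_val : ∀ y : Fin d → ℤ,
        ∫ ω, (EN N).indicator (fun _ => (1:ℝ)) (τ y ω) ∂Q = (Q (EN N)).toReal := by
      intro y
      rw [(hτ_pres y).integral_comp (hτ_emb y) ((EN N).indicator (fun _ => (1:ℝ)))]
      rw [integral_indicator_const (1:ℝ) (hEN_meas N)]
      simp [measureReal_def]
    have hmono := integral_mono
      (μ := Q)
      (f := fun ω => lam * (((cube (0 : Fin d → ℤ) R).filter (fun y => τ y ω ∈ EN N)).card : ℝ))
      (g := fun ω => c * ∑ z ∈ cube (0 : Fin d → ℤ) (R + r N), g (τ z ω))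
      ?_ ?_ (fun ω => hpoint N R ω)
    · -- compute both integrals
      have hL : ∫ ω, lam * (((cube (0 : Fin d → ℤ) R).filter
            (fun y => τ y ω ∈ EN N)).card : ℝ) ∂Q
          = lam * ((cube (0 : Fin d → ℤ) R).card : ℝ) * (Q (EN N)).toReal := by
        rw [integral_congr_ae (Eventually.of_forall hLHS), integral_const_mul,
          integral_finset_sum _ (fun y _ => hind_int y)]
        rw [Finset.sum_congr rfl (fun y _ => hind_val y), Finset.sum_const, nsmul_eq_mul]
        ring
      have hR : ∫ ω, c * ∑ z ∈ cube (0 : Fin d → ℤ) (R + r N), g (τ z ω) ∂Q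
          = c * ((cube (0 : Fin d → ℤ) (R + r N)).card : ℝ) * I := by
        rw [integral_const_mul, integral_finset_sum _ (fun z _ => hgτ_int z),
          Finset.sum_congr rfl (fun z _ => hgτ_eq z), Finset.sum_const, nsmul_eq_mul]
        ring
      rw [hL, hR] at hmono
      exact hmono
    · -- integrability of LHS
      apply Integrable.const_mul
      have : (fun ω => (((cube (0 : Fin d → ℤ) R).filter (fun y => τ y ω ∈ EN N)).card : ℝ))
          = fun ω => ∑ y ∈ cube (0 : Fin d → ℤ) R, (EN N).indicator (fun _ => (1:ℝ)) (τ y ω) := by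
        funext ω
        have := hLHS ω
        -- cancel lam
        exact mul_left_cancel₀ hlam.ne' this
      rw [this]
      exact integrable_finset_sum _ (fun y _ => hind_int y)
    · exact (integrable_finset_sum _ (fun z _ => hgτ_int z)).const_mul c
  -- per-N bound after letting R → ∞
  have hQEN : ∀ N, (Q (EN N)).toReal ≤ c * I / lam := by
    intro N
    have hRb : ∀ R : ℕ, (Q (EN N)).toReal
        ≤ (c * I / lam) * ((((2 * (R + r N) + 1 : ℕ) : ℝ)) ^ d / (((2 * R + 1 : ℕ) : ℝ)) ^ d) := by
      intro R
      have h2 := hint_bound N R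
      rw [card_cube, card_cube] at h2
      have ha : (0:ℝ) < (((2 * R + 1 : ℕ) : ℝ)) ^ d := by positivity
      rw [div_mul_div_comm, le_div_iff₀ (by positivity)]
      calc (Q (EN N)).toReal * (lam * (((2 * R + 1 : ℕ) : ℝ)) ^ d)
          = lam * ((((2 * R + 1) ^ d : ℕ) : ℝ)) * (Q (EN N)).toReal := by push_cast; ring
      _ ≤ c * ((((2 * (R + r N) + 1) ^ d : ℕ) : ℝ)) * I := h2
      _ = c * I * (((2 * (R + r N) + 1 : ℕ) : ℝ)) ^ d := by push_cast; ring
    have hA : Tendsto (fun R : ℕ => (2 * (R : ℝ) + 1)) atTop atTop :=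
      tendsto_atTop_add_const_right atTop 1
        (tendsto_natCast_atTop_atTop.const_mul_atTop two_pos)
    have hratio : Tendsto (fun R : ℕ => (((2 * (R + r N) + 1 : ℕ) : ℝ)) / (((2 * R + 1 : ℕ) : ℝ)))
        atTop (𝓝 1) := by
      have heq : (fun R : ℕ => (((2 * (R + r N) + 1 : ℕ) : ℝ)) / (((2 * R + 1 : ℕ) : ℝ)))
          = fun R : ℕ => 1 + (2 * (r N : ℝ)) / (2 * (R : ℝ) + 1) := by
        funext R
        have hne : (2 * (R : ℝ) + 1) ≠ 0 := by positivity
        push_cast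
        field_simp
        ring
      rw [heq]
      have h0 : Tendsto (fun R : ℕ => (2 * (r N : ℝ)) / (2 * (R : ℝ) + 1)) atTop (𝓝 0) :=
        Tendsto.div_atTop tendsto_const_nhds hA
      simpa using tendsto_const_nhds.add h0
    have hlim : Tendsto (fun R : ℕ =>
        (c * I / lam) * ((((2 * (R + r N) + 1 : ℕ) : ℝ)) ^ d / (((2 * R + 1 : ℕ) : ℝ)) ^ d))
        atTop (𝓝 (c * I / lam)) := by
      have h1 : Tendsto (fun R : ℕ =>
          ((((2 * (R + r N) + 1 : ℕ) : ℝ)) / (((2 * R + 1 : ℕ) : ℝ))) ^ d) atTop (𝓝 1) := by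
        have := hratio.pow d
        simpa using this
      have h2 : (fun R : ℕ =>
          (c * I / lam) * ((((2 * (R + r N) + 1 : ℕ) : ℝ)) ^ d / (((2 * R + 1 : ℕ) : ℝ)) ^ d))
          = fun R : ℕ => (c * I / lam) *
            ((((2 * (R + r N) + 1 : ℕ) : ℝ)) / (((2 * R + 1 : ℕ) : ℝ))) ^ d := by
        funext R
        rw [div_pow]
      rw [h2]
      simpa using tendsto_const_nhds.mul h1
    exact ge_of_tendsto hlim (Eventually.of_forall hRb)
  -- union over N
  have hEU : {ω | ∃ n : ℕ, 1 ≤ n ∧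
      lam * (n : ℝ) ^ d < ∑ x ∈ cube (0 : Fin d → ℤ) (r n), g (τ x ω)} = ⋃ N, EN N := by
    ext ω
    simp only [Set.mem_iUnion, hEN, Set.mem_setOf_eq]
    constructor
    · rintro ⟨n, h1, h2⟩; exact ⟨n, n, h1, le_rfl, h2⟩
    · rintro ⟨N, n, h1, _, h3⟩; exact ⟨n, h1, h3⟩
  rw [hEU]
  have hmono : Monotone EN := by
    intro N N' h ω hω
    obtain ⟨n, h1, h2, h3⟩ := hω
    exact ⟨n, h1, h2.trans h, h3⟩
  rw [hmono.measure_iUnion]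
  apply iSup_le
  intro N
  rw [← ENNReal.ofReal_toReal (measure_ne_top Q (EN N))]
  exact ENNReal.ofReal_le_ofReal (hQEN N)

end Maximal

/-- Symmetric bounded-Lipschitz estimate. -/
lemma bl_abs_le {X : Type*} [MeasurableSpace X] [PseudoMetricSpace X] [OpensMeasurableSpace X]
    (μ ν : Measure X) [IsProbabilityMeasure μ] [IsProbabilityMeasure ν]
    {F : X → ℝ} {L M : ℝ} (hL : 0 ≤ L) (hM : 0 ≤ M)
    (hLip : ∀ z w, |F z - F w| ≤ L * dist z w) (hbd : ∀ z, |F z| ≤ M)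
    {ε : ℝ} (hε : 0 < ε) (hlt : levyProkhorovEDist μ ν < ENNReal.ofReal ε) :
    |∫ z, F z ∂μ - ∫ z, F z ∂ν| ≤ (L + 2 * M) * ε := by
  rw [abs_sub_le_iff]
  constructor
  · exact bl_diff_le μ ν hL hM hLip hbd hε hlt
  · exact bl_diff_le ν μ hL hM hLip hbd hε (by rwa [levyProkhorovEDist_comm])

/-- Two-sided domination by the countable family. -/
lemma dom_abs {X : Type*} [MetricSpace X] [MeasurableSpace X] [OpensMeasurableSpace X]
    (μ ν : Measure X) [IsProbabilityMeasure μ] [IsProbabilityMeasure ν]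
    {e : ℕ → X} (he : DenseRange e) {F : X → ℝ} {L M : ℝ} (hL : 0 < L) (hM : 0 ≤ M)
    (hLip : ∀ z w, |F z - F w| ≤ L * dist z w) (hbd : ∀ z, |F z| ≤ M) :
    |∫ z, F z ∂μ - ∫ z, F z ∂ν|
      ≤ ⨆ i : (k : ℕ) × (Fin (k + 1) → ℚ), |∫ z, Dfun e L M i z ∂μ - ∫ z, Dfun e L M i z ∂ν| := by
  rw [abs_sub_le_iff]
  constructor
  · exact dom_one_sided μ ν he hL hM hLip hbd
  · have h := dom_one_sided ν μ he hL hM hLip hbd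
    have heq : (⨆ i : (k : ℕ) × (Fin (k + 1) → ℚ),
          |∫ z, Dfun e L M i z ∂ν - ∫ z, Dfun e L M i z ∂μ|)
        = ⨆ i : (k : ℕ) × (Fin (k + 1) → ℚ),
          |∫ z, Dfun e L M i z ∂μ - ∫ z, Dfun e L M i z ∂ν| := by
      apply iSup_congr
      intro i
      exact abs_sub_comm _ _
    rwa [heq] at h

set_option maxHeartbeats 2000000 in
/-- For all `K, L, M > 0` there is a full-measure set `Ω^{K,L,M}` such that
for every `ω` in it, every compact `A` inside the closed ball of radius `K`, and every
`L`-Lipschitz function `G` bounded by `M`, the spatially-averaged `L¹` difference of the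
translated expectations vanishes. -/
theorem stmt1
    (d : ℕ) (hd : 1 ≤ d)
    {Ω : Type*} [MeasurableSpace Ω] (Q : Measure Ω) [IsProbabilityMeasure Q]
    (τ : (Fin d → ℤ) → Ω → Ω)
    (hτ_meas : ∀ z, Measurable (τ z))
    (hτ_zero : τ 0 = id)
    (hτ_add : ∀ z w, τ (z + w) = τ z ∘ τ w)
    (hτ_pres : ∀ z, MeasurePreserving (τ z) Q Q)
    (hτ_erg : ∀ A : Set Ω, MeasurableSet A → (∀ z, τ z ⁻¹' A = A) → Q A = 0 ∨ Q A = 1)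
    {E : Type*} [MetricSpace E] [CompleteSpace E] [TopologicalSpace.SeparableSpace E]
    [MeasurableSpace E] [BorelSpace E]
    (T : EuclideanSpace ℝ (Fin d) → E → E)
    (hT_isom : ∀ v, Isometry (T v))
    (hT_zero : T 0 = id)
    (hT_add : ∀ v w, T (v + w) = T v ∘ T w)
    (Ω₀ : Set Ω) (hΩ₀_meas : MeasurableSet Ω₀) (hΩ₀_pos : 0 < Q Ω₀)
    (μ : ℕ → Kernel Ω E) (hμ : ∀ n, IsMarkovKernel (μ n))
    (P : Measure E) [IsProbabilityMeasure P]
    (hweak : ∀ᵐ ω ∂Q, ω ∈ Ω₀ → ∀ G : E → ℝ, Continuous G → (∃ M, ∀ z, |G z| ≤ M) →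
      Tendsto (fun n => ∫ z, G z ∂(μ n ω)) atTop (𝓝 (∫ z, G z ∂P))) :
    ∀ K L M : ℝ, 0 < K → 0 < L → 0 < M →
      ∃ Ω' : Set Ω, MeasurableSet Ω' ∧ Q Ω' = 1 ∧
        ∀ ω ∈ Ω', ∀ A : Set (EuclideanSpace ℝ (Fin d)), IsCompact A →
          A ⊆ Metric.closedBall 0 K →
          ∀ G : E → ℝ, (∀ z w, |G z - G w| ≤ L * dist z w) → (∀ z, |G z| ≤ M) →
          Tendsto (fun n : ℕ =>
            (1 / (n : ℝ) ^ d) * ∑' x : Fin d → ℤ,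
              (A.indicator (fun _ => (1 : ℝ)) (WithLp.toLp 2 (fun i => (x i : ℝ) / n)) *
                Ω₀.indicator (fun _ => (1 : ℝ)) (τ x ω)) *
              |(∫ z, G (T (WithLp.toLp 2 (fun i => (x i : ℝ) / n)) z) ∂(μ n (τ x ω))) -
                ∫ z, G (T (WithLp.toLp 2 (fun i => (x i : ℝ) / n)) z) ∂P|)
            atTop (𝓝 0) := by
  classical
  intro K L M hK hL hM
  -- E is nonempty
  have hEne : Nonempty E := by
    by_contra hc
    rw [not_nonempty_iff] at hc
    have h1 : P Set.univ = 1 := measure_univ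
    rw [Set.univ_eq_empty_iff.mpr hc, measure_empty] at h1
    exact zero_ne_one h1
  set e : ℕ → E := TopologicalSpace.denseSeq E with he_def
  have he : DenseRange e := TopologicalSpace.denseRange_denseSeq E
  haveI : ∀ n, IsMarkovKernel (μ n) := hμ
  -- the countable family of discrepancies
  set hvals : ℕ → ((k : ℕ) × (Fin (k + 1) → ℚ)) → Ω → ℝ := fun n i ω =>
    |(∫ z, Dfun e L M i z ∂(μ n ω)) - ∫ z, Dfun e L M i z ∂P| with hvals_def
  have hvals_meas : ∀ n i, Measurable (hvals n i) := by
    intro n i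
    have hsm : StronglyMeasurable (Function.uncurry fun (_ : Ω) (z : E) => Dfun e L M i z) :=
      (((Dfun_continuous e hL.le M i).measurable).comp measurable_snd).stronglyMeasurable
    have h1 := hsm.integral_kernel_prod_right (κ := μ n)
    simp only [hvals_def]
    exact (h1.measurable.sub measurable_const).abs
  have hvals_le : ∀ n i ω, hvals n i ω ≤ 2 * M := by
    intro n i ω
    have hb : ∀ (κm : Measure E) [IsProbabilityMeasure κm], |∫ z, Dfun e L M i z ∂κm| ≤ M := by
      intro κm hκm
      have := norm_integral_le_of_norm_le_const (μ := κm) (f := fun z => Dfun e L M i z) (C := M)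
        (Eventually.of_forall fun z => by rw [Real.norm_eq_abs]; exact Dfun_abs_le e L hM.le i z)
      simpa using this
    simp only [hvals_def]
    calc |(∫ z, Dfun e L M i z ∂(μ n ω)) - ∫ z, Dfun e L M i z ∂P|
        ≤ |∫ z, Dfun e L M i z ∂(μ n ω)| + |∫ z, Dfun e L M i z ∂P| := abs_sub _ _
    _ ≤ M + M := add_le_add (hb _) (hb _)
    _ = 2 * M := by ring
  have hvals_nonneg : ∀ n i ω, 0 ≤ hvals n i ω := fun n i ω => abs_nonneg _
  have hbddA : ∀ n ω, BddAbove (Set.range fun i => hvals n i ω) := by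
    intro n ω
    exact ⟨2 * M, by rintro x ⟨i, rfl⟩; exact hvals_le n i ω⟩
  -- the dominating functions h n
  set h : ℕ → Ω → ℝ := fun n => Ω₀.indicator (fun ω => ⨆ i, hvals n i ω) with hh_def
  have hsup_nonneg : ∀ n ω, 0 ≤ ⨆ i, hvals n i ω := by
    intro n ω
    have := le_ciSup (hbddA n ω) (⟨0, fun _ => 0⟩ : (k : ℕ) × (Fin (k + 1) → ℚ))
    exact le_trans (hvals_nonneg n _ ω) this
  have hsup_le : ∀ n ω, (⨆ i, hvals n i ω) ≤ 2 * M := fun n ω =>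
    ciSup_le fun i => hvals_le n i ω
  have hh_meas : ∀ n, Measurable (h n) := fun n =>
    (Measurable.iSup (fun i => hvals_meas n i)).indicator hΩ₀_meas
  have hh_nonneg : ∀ n ω, 0 ≤ h n ω := by
    intro n ω
    simp only [hh_def]
    exact Set.indicator_nonneg (fun ω' _ => hsup_nonneg n ω') ω
  have hh_le : ∀ n ω, h n ω ≤ 2 * M := by
    intro n ω
    simp only [hh_def]
    by_cases hω : ω ∈ Ω₀
    · rw [Set.indicator_of_mem hω]; exact hsup_le n ω
    · rw [Set.indicator_of_notMem hω]; linarith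
  -- domination of all Lipschitz discrepancies
  have hdom : ∀ (n : ℕ) (ω' : Ω) (F : E → ℝ), (∀ z w, |F z - F w| ≤ L * dist z w) →
      (∀ z, |F z| ≤ M) →
      |(∫ z, F z ∂(μ n ω')) - ∫ z, F z ∂P| ≤ ⨆ i, hvals n i ω' := by
    intro n ω' F hLip hbd
    exact dom_abs (μ n ω') P he hL hM.le hLip hbd
  -- a.e. convergence of h n to 0
  have hconv : ∀ᵐ ω ∂Q, Tendsto (fun n => h n ω) atTop (𝓝 0) := by
    filter_upwards [hweak] with ω hw
    by_cases hΩm : ω ∈ Ω₀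
    · have hql := hw hΩm
      set Pn : ℕ → ProbabilityMeasure E := fun n => ⟨μ n ω, inferInstance⟩ with hPn
      set P' : ProbabilityMeasure E := ⟨P, inferInstance⟩ with hP'
      have hPm : Tendsto Pn atTop (𝓝 P') := by
        rw [MeasureTheory.ProbabilityMeasure.tendsto_iff_forall_integral_tendsto]
        intro f
        have hbb : ∃ Mf, ∀ z, |f z| ≤ Mf := ⟨‖f‖, fun z => by
          rw [← Real.norm_eq_abs]; exact f.norm_coe_le_norm z⟩
        exact hql f f.continuous hbb
      have h2 : Tendsto (fun n => (LevyProkhorov.probabilityMeasureHomeomorph (Ω := E)) (Pn n))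
          atTop (𝓝 ((LevyProkhorov.probabilityMeasureHomeomorph (Ω := E)) P')) :=
        ((LevyProkhorov.probabilityMeasureHomeomorph (Ω := E)).continuous.tendsto P').comp hPm
      have h3 : Tendsto (fun n => dist ((LevyProkhorov.probabilityMeasureHomeomorph (Ω := E)) (Pn n))
          ((LevyProkhorov.probabilityMeasureHomeomorph (Ω := E)) P')) atTop (𝓝 0) :=
        tendsto_iff_dist_tendsto_zero.mp h2
      have hdist_eq : (fun n => dist ((LevyProkhorov.probabilityMeasureHomeomorph (Ω := E)) (Pn n))
          ((LevyProkhorov.probabilityMeasureHomeomorph (Ω := E)) P'))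
          = fun n => levyProkhorovDist (μ n ω) P := by
        funext n
        exact LevyProkhorov.dist_probabilityMeasure_def _ _
      rw [hdist_eq] at h3
      have hLPnn : ∀ n, 0 ≤ levyProkhorovDist (μ n ω) P := fun n => ENNReal.toReal_nonneg
      have hub : ∀ n, h n ω ≤ (L + 2 * M) * levyProkhorovDist (μ n ω) P := by
        intro n
        simp only [hh_def, Set.indicator_of_mem hΩm]
        apply ciSup_le
        intro i
        refine le_of_forall_pos_le_add fun δ hδ => ?_
        have hLM : (0:ℝ) < L + 2 * M := by linarith
        have hδ' : 0 < δ / (L + 2 * M) := by positivity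
        have hεpos : 0 < levyProkhorovDist (μ n ω) P + δ / (L + 2 * M) := by
          linarith [hLPnn n]
        have hedist : levyProkhorovEDist (μ n ω) P
            < ENNReal.ofReal (levyProkhorovDist (μ n ω) P + δ / (L + 2 * M)) := by
          rw [ENNReal.lt_ofReal_iff_toReal_lt (levyProkhorovEDist_ne_top _ _)]
          have hq : (levyProkhorovEDist (μ n ω) P).toReal = levyProkhorovDist (μ n ω) P := rfl
          rw [hq]
          linarith
        have hkey := bl_abs_le (μ n ω) P hL.le hM.le (Dfun_lip e hL.le M i)
          (Dfun_abs_le e L hM.le i) hεpos hedist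
        calc hvals n i ω ≤ (L + 2 * M) * (levyProkhorovDist (μ n ω) P + δ / (L + 2 * M)) := hkey
        _ = (L + 2 * M) * levyProkhorovDist (μ n ω) P + δ := by
            rw [mul_add, mul_div_cancel₀ _ hLM.ne']
      have hdist0 : Tendsto (fun n => (L + 2 * M) * levyProkhorovDist (μ n ω) P) atTop (𝓝 0) := by
        have := h3.const_mul (L + 2 * M)
        simpa using this
      exact squeeze_zero (fun n => hh_nonneg n ω) hub hdist0
    · have hzero : ∀ n, h n ω = 0 := fun n => by
        simp only [hh_def]; exact Set.indicator_of_notMem hΩm _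
      rw [show (fun n => h n ω) = fun _ => (0:ℝ) from funext hzero]
      exact tendsto_const_nhds
  -- geometry constants
  set r : ℕ → ℕ := fun n => ⌈K * n⌉₊ with hr_def
  have hr_mono : Monotone r := by
    intro a b hab
    exact Nat.ceil_le_ceil (mul_le_mul_of_nonneg_left (by exact_mod_cast hab) hK.le)
  have hrK : ∀ n : ℕ, K * n ≤ r n := fun n => Nat.le_ceil _
  have hr_lt : ∀ n : ℕ, (r n : ℝ) < K * n + 1 := fun n =>
    Nat.ceil_lt_add_one (by positivity)
  set V : ℝ := (2 * K + 3) ^ d with hV_def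
  have hV_pos : 0 < V := by positivity
  have hV : ∀ n : ℕ, 1 ≤ n → ((cube (0 : Fin d → ℤ) (r n)).card : ℝ) ≤ V * (n : ℝ) ^ d := by
    intro n hn
    rw [card_cube]
    have hn' : (1:ℝ) ≤ (n:ℝ) := by exact_mod_cast hn
    have h1 : ((2 * r n + 1 : ℕ) : ℝ) ≤ (2 * K + 3) * n := by
      have h2 := hr_lt n
      push_cast
      nlinarith
    calc (((2 * r n + 1) ^ d : ℕ) : ℝ) = ((2 * r n + 1 : ℕ) : ℝ) ^ d := by push_cast; ring
    _ ≤ ((2 * K + 3) * n) ^ d := pow_le_pow_left₀ (by positivity) h1 d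
    _ = V * (n:ℝ) ^ d := by rw [mul_pow, hV_def]
  set c : ℝ := (6 * K + 7) ^ d with hc_def
  have hc0 : 0 ≤ c := by positivity
  have hc : ∀ n : ℕ, 1 ≤ n → ((6 * r n + 1 : ℕ) : ℝ) ^ d ≤ c * (n : ℝ) ^ d := by
    intro n hn
    have hn' : (1:ℝ) ≤ (n:ℝ) := by exact_mod_cast hn
    have h1 : ((6 * r n + 1 : ℕ) : ℝ) ≤ (6 * K + 7) * n := by
      have h2 := hr_lt n
      push_cast
      nlinarith
    calc ((6 * r n + 1 : ℕ) : ℝ) ^ d ≤ ((6 * K + 7) * n) ^ d :=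
        pow_le_pow_left₀ (by positivity) h1 d
    _ = c * (n:ℝ) ^ d := by rw [mul_pow, hc_def]
  -- the averaged process
  set Tav : ℕ → Ω → ℝ := fun n ω =>
    (1 / (n : ℝ) ^ d) * ∑ x ∈ cube (0 : Fin d → ℤ) (r n), h n (τ x ω) with hTav_def
  have hTav_meas : ∀ n, Measurable (Tav n) := by
    intro n
    exact (Finset.measurable_sum _ (fun x _ => (hh_meas n).comp (hτ_meas x))).const_mul _
  have hTav_nonneg : ∀ n ω, 0 ≤ Tav n ω := by
    intro n ω
    apply mul_nonneg (by positivity)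
    exact Finset.sum_nonneg fun x _ => hh_nonneg n _
  -- the good set
  set Ω' : Set Ω := ⋂ k : ℕ, ⋃ N : ℕ, ⋂ n : ℕ, ⋂ (_ : N ≤ n),
    {ω | Tav n ω ≤ 1 / ((k : ℝ) + 1)} with hΩ'_def
  have hΩ'_meas : MeasurableSet Ω' := by
    apply MeasurableSet.iInter
    intro k
    apply MeasurableSet.iUnion
    intro N
    apply MeasurableSet.iInter
    intro n
    apply MeasurableSet.iInter
    intro _
    exact measurableSet_le (hTav_meas n) measurable_const
  have hΩ'_tendsto : ∀ ω ∈ Ω', Tendsto (fun n => Tav n ω) atTop (𝓝 0) := by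
    intro ω hω
    rw [Metric.tendsto_atTop]
    intro ε hε
    obtain ⟨k, hk⟩ := exists_nat_one_div_lt hε
    simp only [hΩ'_def, Set.mem_iInter, Set.mem_iUnion, Set.mem_setOf_eq] at hω
    obtain ⟨N, hN⟩ := hω k
    refine ⟨N, fun n hn => ?_⟩
    rw [Real.dist_eq, sub_zero, abs_of_nonneg (hTav_nonneg n ω)]
    exact lt_of_le_of_lt (hN n hn) hk
  have hΩ'_full : Q Ω' = 1 := by
    set Bad : ℕ → Set Ω := fun k =>
      {ω | ∀ N, ∃ n, N ≤ n ∧ 1 / ((k : ℝ) + 1) < Tav n ω} with hBad_def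
    have hcompl : Ω'ᶜ ⊆ ⋃ k, Bad k := by
      intro ω hω
      simp only [hΩ'_def, Set.mem_compl_iff, Set.mem_iInter, Set.mem_iUnion,
        Set.mem_setOf_eq] at hω
      push_neg at hω
      obtain ⟨k, hk⟩ := hω
      rw [Set.mem_iUnion]
      refine ⟨k, fun N => ?_⟩
      obtain ⟨n, h1, h2⟩ := hk N
      exact ⟨n, h1, h2⟩
    have hBadnull : ∀ k, Q (Bad k) = 0 := by
      intro k
      set δ : ℝ := 1 / ((k : ℝ) + 1) with hδdef
      have hδ : 0 < δ := by positivity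
      set ε : ℝ := δ / (2 * V) with hεdef
      have hε : 0 < ε := by positivity
      set C : ℕ → Set Ω := fun N => ⋃ m, ⋃ (_ : N ≤ m), {ω | ε < h m ω} with hCdef
      have hC_meas : ∀ N, MeasurableSet (C N) := fun N =>
        MeasurableSet.iUnion fun m => MeasurableSet.iUnion fun _ =>
          measurableSet_lt measurable_const (hh_meas m)
      have hC_anti : Antitone C := by
        intro N N' hNN' ω hω
        simp only [hCdef, Set.mem_iUnion, Set.mem_setOf_eq] at hω ⊢
        obtain ⟨m, h1, h2⟩ := hω
        exact ⟨m, hNN'.trans h1, h2⟩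
      have hC_inter : Q (⋂ N, C N) = 0 := by
        have hsub : (⋂ N, C N) ⊆ {ω | ¬ Tendsto (fun n => h n ω) atTop (𝓝 0)} := by
          intro ω hω hten
          rw [Metric.tendsto_atTop] at hten
          obtain ⟨N, hN⟩ := hten ε hε
          have hmem := Set.mem_iInter.mp hω N
          simp only [hCdef, Set.mem_iUnion, Set.mem_setOf_eq] at hmem
          obtain ⟨m, h1, h2⟩ := hmem
          have h3 := hN m h1
          rw [Real.dist_eq, sub_zero] at h3
          have h4 := le_abs_self (h m ω)
          linarith
        exact measure_mono_null hsub (ae_iff.mp hconv)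
      have hC_tend : Tendsto (fun N => Q (C N)) atTop (𝓝 0) := by
        have := tendsto_measure_iInter_atTop (μ := Q) (fun N => (hC_meas N).nullMeasurableSet) hC_anti
          ⟨0, measure_ne_top _ _⟩
        rwa [hC_inter] at this
      set lam : ℝ := δ / (4 * M) with hlamdef
      have hlam : 0 < lam := by positivity
      have hBadsub : ∀ N : ℕ, Bad k ⊆ {ω | ∃ n : ℕ, 1 ≤ n ∧ lam * (n : ℝ) ^ d <
          ∑ x ∈ cube (0 : Fin d → ℤ) (r n), ((C N).indicator (fun _ => (1:ℝ))) (τ x ω)} := by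
        intro N ω hω
        obtain ⟨n, hn1, hn2⟩ := hω (max N 1)
        have hnN : N ≤ n := le_trans (le_max_left _ _) hn1
        have hn1' : 1 ≤ n := le_trans (le_max_right _ _) hn1
        refine ⟨n, hn1', ?_⟩
        have hpt : ∀ x : Fin d → ℤ, h n (τ x ω)
            ≤ ε + 2 * M * ((C N).indicator (fun _ => (1:ℝ)) (τ x ω)) := by
          intro x
          by_cases hcase : ε < h n (τ x ω)
          · have hmem : τ x ω ∈ C N := by
              simp only [hCdef, Set.mem_iUnion, Set.mem_setOf_eq]
              exact ⟨n, hnN, hcase⟩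
            rw [Set.indicator_of_mem hmem]
            have := hh_le n (τ x ω)
            linarith
          · push_neg at hcase
            have hind : 0 ≤ (C N).indicator (fun _ => (1:ℝ)) (τ x ω) :=
              Set.indicator_nonneg (by intros; norm_num) _
            nlinarith
        set Sg : ℝ := ∑ x ∈ cube (0 : Fin d → ℤ) (r n),
          (C N).indicator (fun _ => (1:ℝ)) (τ x ω) with hSgdef
        have hSg0 : 0 ≤ Sg :=
          Finset.sum_nonneg fun x _ => Set.indicator_nonneg (by intros; norm_num) _
        have hnd : (0:ℝ) < (n:ℝ) ^ d := by
          have h0 : (0:ℝ) < (n:ℝ) := by exact_mod_cast hn1'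
          positivity
        have hsum : Tav n ω ≤ (1 / (n:ℝ) ^ d) * (((cube (0 : Fin d → ℤ) (r n)).card : ℝ) * ε
            + 2 * M * Sg) := by
          simp only [hTav_def]
          apply mul_le_mul_of_nonneg_left _ (by positivity)
          calc ∑ x ∈ cube (0 : Fin d → ℤ) (r n), h n (τ x ω)
              ≤ ∑ x ∈ cube (0 : Fin d → ℤ) (r n),
                (ε + 2 * M * (C N).indicator (fun _ => (1:ℝ)) (τ x ω)) :=
              Finset.sum_le_sum (fun x _ => hpt x)
          _ = ((cube (0 : Fin d → ℤ) (r n)).card : ℝ) * ε + 2 * M * Sg := by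
              rw [Finset.sum_add_distrib, Finset.sum_const, nsmul_eq_mul, hSgdef,
                Finset.mul_sum]
        have hcard := hV n hn1'
        have h5 : δ < (1 / (n:ℝ) ^ d) * (((cube (0 : Fin d → ℤ) (r n)).card : ℝ) * ε
            + 2 * M * Sg) := lt_of_lt_of_le hn2 hsum
        rw [one_div_mul_eq_div, lt_div_iff₀ hnd] at h5
        have h6 : ((cube (0 : Fin d → ℤ) (r n)).card : ℝ) * ε ≤ V * (n:ℝ) ^ d * ε := by
          nlinarith
        have h8 : V * (n:ℝ) ^ d * ε = (δ / 2) * (n:ℝ) ^ d := by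
          rw [hεdef]
          field_simp
        have h9 : (δ / 2) * (n:ℝ) ^ d < 2 * M * Sg := by nlinarith
        rw [hlamdef, div_mul_eq_mul_div, div_lt_iff₀ (by positivity)]
        nlinarith
      have hmax : ∀ N, Q (Bad k) ≤ ENNReal.ofReal (c * (Q (C N)).toReal / lam) := by
        intro N
        have hind_le_one : ∀ ω, (C N).indicator (fun _ => (1:ℝ)) ω ≤ 1 := by
          intro ω
          rw [Set.indicator_apply]
          split <;> norm_num
        have h1 := maximal_ineq Q τ hτ_meas hτ_zero hτ_add hτ_pres
          ((C N).indicator (fun _ => (1:ℝ))) (measurable_const.indicator (hC_meas N))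
          (fun ω => Set.indicator_nonneg (by intros; norm_num) _)
          hind_le_one r hr_mono c lam hc hc0 hlam
        have h2 : ∫ ω, (C N).indicator (fun _ => (1:ℝ)) ω ∂Q = (Q (C N)).toReal := by
          rw [integral_indicator_const (1:ℝ) (hC_meas N)]
          simp [measureReal_def]
        rw [h2] at h1
        exact le_trans (measure_mono (hBadsub N)) h1
      have htend2 : Tendsto (fun N => ENNReal.ofReal (c * (Q (C N)).toReal / lam))
          atTop (𝓝 0) := by
        have h1 : Tendsto (fun N => (Q (C N)).toReal) atTop (𝓝 0) := by
          have := (ENNReal.tendsto_toReal (ENNReal.zero_ne_top)).comp hC_tend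
          exact this
        have h2 : Tendsto (fun N => c * (Q (C N)).toReal / lam) atTop (𝓝 0) := by
          have := (h1.const_mul c).div_const lam
          simpa using this
        have h3 := ENNReal.tendsto_ofReal h2
        simpa using h3
      have hfinal : Q (Bad k) ≤ 0 :=
        ge_of_tendsto htend2 (Eventually.of_forall hmax)
      exact le_zero_iff.mp hfinal
    have hQcompl : Q Ω'ᶜ = 0 :=
      measure_mono_null hcompl (measure_iUnion_null hBadnull)
    exact (prob_compl_eq_zero_iff hΩ'_meas).mp hQcompl
  refine ⟨Ω', hΩ'_meas, hΩ'_full, ?_⟩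
  intro ω hω A hA hAK G hGLip hGbd
  have hcoord : ∀ (v : EuclideanSpace ℝ (Fin d)) (i : Fin d), |v i| ≤ ‖v‖ := by
    intro v i
    rw [EuclideanSpace.norm_eq, ← Real.sqrt_sq_eq_abs]
    apply Real.sqrt_le_sqrt
    have h1 : v i ^ 2 = ‖v i‖ ^ 2 := by rw [Real.norm_eq_abs, sq_abs]
    rw [h1]
    exact Finset.single_le_sum (f := fun j => ‖v j‖ ^ 2) (fun j _ => sq_nonneg _)
      (Finset.mem_univ i)
  apply squeeze_zero' ?_ ?_ (hΩ'_tendsto ω hω)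
  · apply Eventually.of_forall
    intro n
    apply mul_nonneg (by positivity)
    apply tsum_nonneg
    intro x
    apply mul_nonneg
    · apply mul_nonneg
      · exact Set.indicator_nonneg (by intros; norm_num) _
      · exact Set.indicator_nonneg (by intros; norm_num) _
    · exact abs_nonneg _
  · rw [eventually_atTop]
    refine ⟨1, fun n hn => ?_⟩
    set f : (Fin d → ℤ) → ℝ := fun x =>
      (A.indicator (fun _ => (1 : ℝ)) (WithLp.toLp 2 (fun i => (x i : ℝ) / n)) *
        Ω₀.indicator (fun _ => (1 : ℝ)) (τ x ω)) *
      |(∫ z, G (T (WithLp.toLp 2 (fun i => (x i : ℝ) / n)) z) ∂(μ n (τ x ω))) -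
        ∫ z, G (T (WithLp.toLp 2 (fun i => (x i : ℝ) / n)) z) ∂P| with hf
    set ψ : (Fin d → ℤ) → ℝ := fun x =>
      if x ∈ cube (0 : Fin d → ℤ) (r n) then h n (τ x ω) else 0 with hψ
    have hf0 : ∀ x, 0 ≤ f x := by
      intro x
      apply mul_nonneg
      · apply mul_nonneg
        · exact Set.indicator_nonneg (by intros; norm_num) _
        · exact Set.indicator_nonneg (by intros; norm_num) _
      · exact abs_nonneg _
    have hψ0 : ∀ x, 0 ≤ ψ x := by
      intro x
      simp only [hψ]
      split
      · exact hh_nonneg n _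
      · exact le_refl 0
    have hfψ : ∀ x, f x ≤ ψ x := by
      intro x
      by_cases hmemA : (WithLp.toLp 2 (fun i => ((x i : ℝ) / n))) ∈ A
      · have hcube : x ∈ cube (0 : Fin d → ℤ) (r n) := by
          rw [mem_cube]
          intro i
          have hvA := hAK hmemA
          rw [Metric.mem_closedBall, dist_zero_right] at hvA
          have h1 : |((x i : ℝ) / n)| ≤ K :=
            le_trans (hcoord (WithLp.toLp 2 (fun i => ((x i : ℝ) / n))) i) hvA
          have hn0 : (0:ℝ) < (n:ℝ) := by exact_mod_cast hn
          rw [abs_div, abs_of_nonneg hn0.le, div_le_iff₀ hn0] at h1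
          have h2 : |(x i : ℝ)| ≤ (r n : ℝ) := h1.trans (hrK n)
          have h3 := abs_le.mp h2
          constructor
          · have := h3.1
            have hcast : ((0:ℤ) - (r n : ℤ) : ℤ) ≤ x i := by
              rw [zero_sub]
              exact_mod_cast this
            simpa using hcast
          · have := h3.2
            have hcast : x i ≤ ((0:ℤ) + (r n : ℤ) : ℤ) := by
              rw [zero_add]
              exact_mod_cast this
            simpa using hcast
        by_cases hmemΩ : τ x ω ∈ Ω₀
        · have hva : f x = |(∫ z, G (T (WithLp.toLp 2 (fun i => (x i : ℝ) / n)) z) ∂(μ n (τ x ω))) -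
              ∫ z, G (T (WithLp.toLp 2 (fun i => (x i : ℝ) / n)) z) ∂P| := by
            simp only [hf, Set.indicator_of_mem hmemA, Set.indicator_of_mem hmemΩ, one_mul]
          have hψv : ψ x = h n (τ x ω) := by simp only [hψ, if_pos hcube]
          rw [hva, hψv]
          have hhe : h n (τ x ω) = ⨆ i, hvals n i (τ x ω) := by
            simp only [hh_def]
            rw [Set.indicator_of_mem hmemΩ]
          rw [hhe]
          apply hdom n (τ x ω) (fun z => G (T (WithLp.toLp 2 (fun i => (x i : ℝ) / n)) z))
          · intro z w
            have hiso := (hT_isom (WithLp.toLp 2 (fun i => (x i : ℝ) / n))).dist_eq z w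
            rw [← hiso]
            exact hGLip _ _
          · intro z
            exact hGbd _
        · have hva : f x = 0 := by
            simp only [hf, Set.indicator_of_notMem hmemΩ, mul_zero, zero_mul]
          rw [hva]
          exact hψ0 x
      · have hva : f x = 0 := by
          simp only [hf, Set.indicator_of_notMem hmemA, zero_mul]
        rw [hva]
        exact hψ0 x
    have hψ_sum : Summable ψ :=
      summable_of_ne_finset_zero (s := cube (0 : Fin d → ℤ) (r n))
        (fun x hx => by simp only [hψ, if_neg hx])
    have hf_sum : Summable f := Summable.of_nonneg_of_le hf0 hfψ hψ_sum
    have htsumψ : ∑' x, ψ x = ∑ x ∈ cube (0 : Fin d → ℤ) (r n), h n (τ x ω) := by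
      rw [tsum_eq_sum (s := cube (0 : Fin d → ℤ) (r n))
        (fun x hx => by simp only [hψ, if_neg hx])]
      apply Finset.sum_congr rfl
      intro x hx
      simp only [hψ, if_pos hx]
    calc (1 / (n : ℝ) ^ d) * ∑' x, f x
        ≤ (1 / (n : ℝ) ^ d) * ∑' x, ψ x := by
          apply mul_le_mul_of_nonneg_left (hf_sum.tsum_le_tsum hfψ hψ_sum) (by positivity)
    _ = Tav n ω := by rw [htsumψ]
end

section
/- Let (Ω, 𝓕, Q) satisfy the ergodic environment assumption, let Ω₀ ∈ 𝓕, let C > 0, and for each n ∈ ℕ and x ∈ ℤ^d let f_{n,x} : Ω → [0, C] be measurable. For k ∈ ℕ, define g_k(ω) := sup{ f_{n,y}(ω) : n ≥ k, y ∈ ℤ^d, |y| ≥ k }. Assume that for Q-almost every ω, 1_{Ω₀}(ω) · g_k(ω) → 0 as k → ∞. Then for Q-almost every ω and for every K > 0, one has (1/n^d) · Σ_{x ∈ ℤ^d, |x| ≤ Kn} 1_{Ω₀}(τ_x ω) · f_{n,x}(τ_x ω) → 0 as n → ∞. -/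
open MeasureTheory Filter Topology

/-- The lattice point `x ∈ ℤ^d` viewed in `ℝ^d` (Euclidean space), so that `‖ZdEmbed d x‖`
is the Euclidean norm `|x|`. -/
noncomputable def ZdEmbed (d : ℕ) (x : Fin d → ℤ) : EuclideanSpace ℝ (Fin d) :=
  WithLp.toLp 2 (fun i => (x i : ℝ))


namespace Stmt2Aux

variable {d : ℕ}

lemma zd_apply (x : Fin d → ℤ) (i : Fin d) : ZdEmbed d x i = (x i : ℝ) := rfl

lemma zd_add (x z : Fin d → ℤ) : ZdEmbed d (x + z) = ZdEmbed d x + ZdEmbed d z := by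
  ext i; simp [ZdEmbed]

lemma zd_sub (x z : Fin d → ℤ) : ZdEmbed d (x - z) = ZdEmbed d x - ZdEmbed d z := by
  ext i; simp [ZdEmbed]

lemma abs_coord_le (x : Fin d → ℤ) (c : EuclideanSpace ℝ (Fin d)) (i : Fin d) :
    |(x i : ℝ) - c i| ≤ ‖ZdEmbed d x - c‖ := by
  have h := EuclideanSpace.norm_eq (ZdEmbed d x - c)
  have hco : (ZdEmbed d x - c) i = (x i : ℝ) - c i := rfl
  have h1 : ‖(ZdEmbed d x - c) i‖ ^ 2 ≤ ∑ j, ‖(ZdEmbed d x - c) j‖ ^ 2 :=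
    Finset.single_le_sum (f := fun j => ‖(ZdEmbed d x - c) j‖ ^ 2)
      (fun j _ => sq_nonneg _) (Finset.mem_univ i)
  calc |(x i : ℝ) - c i| = Real.sqrt (‖(ZdEmbed d x - c) i‖ ^ 2) := by
        rw [Real.sqrt_sq_eq_abs]; rw [hco]; exact (abs_abs _).symm
    _ ≤ Real.sqrt (∑ j, ‖(ZdEmbed d x - c) j‖ ^ 2) := Real.sqrt_le_sqrt h1
    _ = ‖ZdEmbed d x - c‖ := h.symm

lemma finite_latticeBall (c : EuclideanSpace ℝ (Fin d)) (ρ : ℝ) :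
    {x : Fin d → ℤ | ‖ZdEmbed d x - c‖ ≤ ρ}.Finite := by
  apply Set.Finite.subset
    (Set.finite_coe_iff.mp ?_ :
      (↑(Finset.Icc (fun i => ⌈c i - ρ⌉) (fun i => ⌊c i + ρ⌋)) : Set (Fin d → ℤ)).Finite)
  · intro x hx
    simp only [Set.mem_setOf_eq] at hx
    simp only [Finset.coe_Icc, Set.mem_Icc, Pi.le_def]
    constructor
    · intro i
      have := (abs_le.mp ((abs_coord_le x c i).trans hx)).1
      exact Int.ceil_le.mpr (by linarith)
    · intro i
      have := (abs_le.mp ((abs_coord_le x c i).trans hx)).2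
      exact Int.le_floor.mpr (by linarith)
  · exact (Finset.Icc _ _).finite_toSet.to_subtype

noncomputable def latticeBall (d : ℕ) (c : EuclideanSpace ℝ (Fin d)) (ρ : ℝ) :
    Finset (Fin d → ℤ) := (finite_latticeBall c ρ).toFinset

lemma mem_latticeBall {c : EuclideanSpace ℝ (Fin d)} {ρ : ℝ} {x : Fin d → ℤ} :
    x ∈ latticeBall d c ρ ↔ ‖ZdEmbed d x - c‖ ≤ ρ := by
  simp [latticeBall, Set.Finite.mem_toFinset]

lemma card_latticeBall_le {c : EuclideanSpace ℝ (Fin d)} {ρ : ℝ} (hρ : 0 ≤ ρ) :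
    ((latticeBall d c ρ).card : ℝ) ≤ (2 * ρ + 1) ^ d := by
  have hsub : latticeBall d c ρ ⊆ Finset.Icc (fun i => ⌈c i - ρ⌉) (fun i => ⌊c i + ρ⌋) := by
    intro x hx
    rw [mem_latticeBall] at hx
    simp only [Finset.mem_Icc, Pi.le_def]
    constructor
    · intro i
      have := (abs_le.mp ((abs_coord_le x c i).trans hx)).1
      exact Int.ceil_le.mpr (by linarith)
    · intro i
      have := (abs_le.mp ((abs_coord_le x c i).trans hx)).2
      exact Int.le_floor.mpr (by linarith)
  have h1 : ((latticeBall d c ρ).card : ℝ) ≤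
      ((Finset.Icc (fun i => ⌈c i - ρ⌉) (fun i => ⌊c i + ρ⌋)).card : ℝ) := by
    exact_mod_cast Finset.card_le_card hsub
  refine h1.trans ?_
  rw [Pi.card_Icc]
  push_cast
  calc (∏ i : Fin d, ((Finset.Icc (⌈c i - ρ⌉) (⌊c i + ρ⌋)).card : ℝ))
      ≤ ∏ i : Fin d, (2 * ρ + 1) := by
        apply Finset.prod_le_prod (fun i _ => by positivity)
        intro i _
        rw [Int.card_Icc]
        have hfl : (⌊c i + ρ⌋ : ℝ) ≤ c i + ρ := Int.floor_le _
        have hce : c i - ρ ≤ (⌈c i - ρ⌉ : ℝ) := Int.le_ceil _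
        rcases le_or_gt (⌊c i + ρ⌋ + 1 - ⌈c i - ρ⌉) 0 with h | h
        · rw [Int.toNat_of_nonpos h]; push_cast; positivity
        · have : ((⌊c i + ρ⌋ + 1 - ⌈c i - ρ⌉).toNat : ℝ) = ((⌊c i + ρ⌋ + 1 - ⌈c i - ρ⌉ : ℤ) : ℝ) := by
            exact_mod_cast congrArg (Int.cast : ℤ → ℝ) (Int.toNat_of_nonneg h.le)
          rw [this]; push_cast; linarith
    _ = (2 * ρ + 1) ^ d := by simp [Finset.prod_const]

noncomputable def box (d R : ℕ) : Finset (Fin d → ℤ) :=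
  Finset.Icc (fun _ => -(R : ℤ)) (fun _ => (R : ℤ))

lemma mem_box {R : ℕ} {x : Fin d → ℤ} : x ∈ box d R ↔ ∀ i, |x i| ≤ (R : ℤ) := by
  simp only [box, Finset.mem_Icc, Pi.le_def]
  constructor
  · rintro ⟨h1, h2⟩ i; exact abs_le.mpr ⟨h1 i, h2 i⟩
  · intro h; exact ⟨fun i => (abs_le.mp (h i)).1, fun i => (abs_le.mp (h i)).2⟩

lemma card_box (d R : ℕ) : (box d R).card = (2 * R + 1) ^ d := by
  rw [box, Pi.card_Icc]
  have h : (Finset.Icc (-(R:ℤ)) (R:ℤ)).card = 2 * R + 1 := by rw [Int.card_Icc]; omega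
  simp [h]

/-- Deterministic covering inequality. -/
lemma covering (d K T : ℕ) (hK : 1 ≤ K) (hT : 1 ≤ T) (lam : ℝ) (hlam : 0 < lam)
    (φ : (Fin d → ℤ) → ℝ) (hφ : ∀ y, 0 ≤ φ y) (R : ℕ) (E : Finset (Fin d → ℤ))
    (hE : ∀ z ∈ E, z ∈ box d R)
    (hsel : ∀ z ∈ E, ∃ n : ℕ, 1 ≤ n ∧ n ≤ T ∧
      lam * (n : ℝ) ^ d < ∑ y ∈ latticeBall d (ZdEmbed d z) ((K : ℝ) * n), φ y) :
    (E.card : ℝ) * lam ≤ (9 * K : ℝ) ^ d * ∑ y ∈ box d (R + K * T), φ y := by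
  classical
  -- choose radii
  have hsel' : ∀ z : Fin d → ℤ, ∃ n : ℕ, 1 ≤ n ∧ (z ∈ E → (n ≤ T ∧
      lam * (n : ℝ) ^ d < ∑ y ∈ latticeBall d (ZdEmbed d z) ((K : ℝ) * n), φ y)) := by
    intro z
    by_cases hz : z ∈ E
    · obtain ⟨n, h1, h2, h3⟩ := hsel z hz
      exact ⟨n, h1, fun _ => ⟨h2, h3⟩⟩
    · exact ⟨1, le_refl 1, fun h => absurd h hz⟩
  choose nn hnn1 hnn2 using hsel'
  set r : (Fin d → ℤ) → ℝ := fun z => (K : ℝ) * nn z with hr_def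
  have hr_nonneg : ∀ z, 0 ≤ r z := fun z => by positivity
  have hr_pos : ∀ z, (1 : ℝ) ≤ r z := by
    intro z
    have h1 : (1 : ℝ) ≤ (K : ℝ) := by exact_mod_cast hK
    have h2 : (1 : ℝ) ≤ (nn z : ℝ) := by exact_mod_cast hnn1 z
    calc (1:ℝ) = 1 * 1 := by ring
      _ ≤ (K : ℝ) * nn z := by apply mul_le_mul h1 h2 zero_le_one (by positivity)
  have hr_le : ∀ z ∈ (E : Set (Fin d → ℤ)), r z ≤ (K : ℝ) * T := by
    intro z hz
    have := (hnn2 z hz).1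
    have : (nn z : ℝ) ≤ (T : ℝ) := by exact_mod_cast this
    exact mul_le_mul_of_nonneg_left this (by positivity)
  obtain ⟨u, huE, hdisj, hcov⟩ :=
    Vitali.exists_disjoint_subfamily_covering_enlargement_closedBall (E : Set (Fin d → ℤ))
      (ZdEmbed d) r ((K : ℝ) * T) hr_le 4 (by norm_num)
  have hufin : u.Finite := E.finite_toSet.subset huE
  set U : Finset (Fin d → ℤ) := hufin.toFinset with hU_def
  have hUE : ∀ b ∈ U, b ∈ E := by
    intro b hb
    rw [hU_def, Set.Finite.mem_toFinset] at hb
    exact huE hb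
  -- E is covered by lattice balls of radius 4 r b, b ∈ U
  have hcover : E ⊆ U.biUnion (fun b => latticeBall d (ZdEmbed d b) (4 * r b)) := by
    intro a ha
    obtain ⟨b, hbu, hsub⟩ := hcov a ha
    have : ZdEmbed d a ∈ Metric.closedBall (ZdEmbed d a) (r a) :=
      Metric.mem_closedBall_self (hr_nonneg a)
    have hmem := hsub this
    rw [Metric.mem_closedBall, dist_eq_norm] at hmem
    rw [Finset.mem_biUnion]
    exact ⟨b, by rw [hU_def, Set.Finite.mem_toFinset]; exact hbu, mem_latticeBall.mpr hmem⟩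
  -- count
  have hcard : (E.card : ℝ) ≤ ∑ b ∈ U, ((latticeBall d (ZdEmbed d b) (4 * r b)).card : ℝ) := by
    have h1 : E.card ≤ (U.biUnion (fun b => latticeBall d (ZdEmbed d b) (4 * r b))).card :=
      Finset.card_le_card hcover
    have h2 := Finset.card_biUnion_le
      (s := U) (t := fun b => latticeBall d (ZdEmbed d b) (4 * r b))
    exact_mod_cast h1.trans h2
  have hcount : ∀ b ∈ U, ((latticeBall d (ZdEmbed d b) (4 * r b)).card : ℝ) ≤
      (9 * K : ℝ) ^ d / lam * ∑ y ∈ latticeBall d (ZdEmbed d b) (r b), φ y := by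
    intro b hb
    have hbE := hUE b hb
    have hK1 : (1 : ℝ) ≤ (K : ℝ) * nn b := hr_pos b
    have step1 : ((latticeBall d (ZdEmbed d b) (4 * r b)).card : ℝ) ≤ (2 * (4 * r b) + 1) ^ d :=
      card_latticeBall_le (by positivity)
    have step2 : (2 * (4 * r b) + 1 : ℝ) ≤ 9 * (K : ℝ) * nn b := by
      rw [hr_def]; dsimp only; nlinarith [hr_pos b]
    have step3 : ((2 * (4 * r b) + 1 : ℝ)) ^ d ≤ (9 * (K : ℝ)) ^ d * (nn b : ℝ) ^ d := by
      rw [← mul_pow]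
      exact pow_le_pow_left₀ (by positivity) step2 d
    have step4 : (nn b : ℝ) ^ d ≤ (∑ y ∈ latticeBall d (ZdEmbed d b) (r b), φ y) / lam := by
      rw [le_div_iff₀ hlam]
      have := (hnn2 b hbE).2
      rw [hr_def]
      calc (nn b:ℝ)^d * lam = lam * (nn b:ℝ)^d := by ring
        _ ≤ _ := this.le
    calc ((latticeBall d (ZdEmbed d b) (4 * r b)).card : ℝ)
        ≤ (2 * (4 * r b) + 1) ^ d := step1
      _ ≤ (9 * (K : ℝ)) ^ d * (nn b : ℝ) ^ d := step3
      _ ≤ (9 * (K : ℝ)) ^ d * ((∑ y ∈ latticeBall d (ZdEmbed d b) (r b), φ y) / lam) :=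
          mul_le_mul_of_nonneg_left step4 (by positivity)
      _ = (9 * K : ℝ) ^ d / lam * ∑ y ∈ latticeBall d (ZdEmbed d b) (r b), φ y := by ring
  -- the small balls are disjoint and inside the big box
  have hdisj' : (U : Set (Fin d → ℤ)).PairwiseDisjoint
      (fun b => latticeBall d (ZdEmbed d b) (r b)) := by
    intro b1 hb1 b2 hb2 hne
    have hb1u : b1 ∈ u := by
      rw [hU_def] at hb1; exact (Set.Finite.mem_toFinset _).mp (by exact_mod_cast hb1)
    have hb2u : b2 ∈ u := by
      rw [hU_def] at hb2; exact (Set.Finite.mem_toFinset _).mp (by exact_mod_cast hb2)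
    have hd := hdisj hb1u hb2u hne
    rw [Function.onFun] at hd ⊢
    rw [Finset.disjoint_left]
    intro y hy1 hy2
    rw [mem_latticeBall] at hy1 hy2
    have h1 : ZdEmbed d y ∈ Metric.closedBall (ZdEmbed d b1) (r b1) := by
      rw [Metric.mem_closedBall, dist_eq_norm]; exact hy1
    have h2 : ZdEmbed d y ∈ Metric.closedBall (ZdEmbed d b2) (r b2) := by
      rw [Metric.mem_closedBall, dist_eq_norm]; exact hy2
    exact Set.disjoint_left.mp hd h1 h2
  have hsubbox : ∀ b ∈ U, latticeBall d (ZdEmbed d b) (r b) ⊆ box d (R + K * T) := by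
    intro b hb y hy
    rw [mem_latticeBall] at hy
    rw [mem_box]
    intro i
    have hby : |(y i : ℝ) - (ZdEmbed d b) i| ≤ (K : ℝ) * T :=
      (abs_coord_le y (ZdEmbed d b) i).trans (hy.trans (hr_le b (by exact_mod_cast hUE b hb)))
    have hzb : (ZdEmbed d b) i = ((b i : ℤ) : ℝ) := rfl
    rw [hzb] at hby
    have hbox := mem_box.mp (hE b (hUE b hb)) i
    have : |(y i : ℝ) - (b i : ℝ)| ≤ ((K * T : ℕ) : ℝ) := by push_cast; exact_mod_cast hby
    have h2 : |y i - b i| ≤ ((K * T : ℕ) : ℤ) := by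
      have := this
      rw [← Int.cast_sub] at this
      exact_mod_cast (by exact_mod_cast this : |((y i - b i : ℤ) : ℝ)| ≤ ((K*T : ℕ) : ℝ))
    calc |y i| = |y i - b i + b i| := by ring_nf
      _ ≤ |y i - b i| + |b i| := abs_add_le _ _
      _ ≤ ((K * T : ℕ) : ℤ) + R := add_le_add h2 hbox
      _ = ((R + K * T : ℕ) : ℤ) := by push_cast; ring
  have hsum : ∑ b ∈ U, ∑ y ∈ latticeBall d (ZdEmbed d b) (r b), φ y ≤
      ∑ y ∈ box d (R + K * T), φ y := by
    rw [← Finset.sum_biUnion hdisj']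
    apply Finset.sum_le_sum_of_subset_of_nonneg
    · intro y hy
      rw [Finset.mem_biUnion] at hy
      obtain ⟨b, hb, hyb⟩ := hy
      exact hsubbox b hb hyb
    · intro y _ _; exact hφ y
  have final : (E.card : ℝ) ≤ (9 * K : ℝ) ^ d / lam * ∑ y ∈ box d (R + K * T), φ y := by
    calc (E.card : ℝ) ≤ ∑ b ∈ U, ((latticeBall d (ZdEmbed d b) (4 * r b)).card : ℝ) := hcard
      _ ≤ ∑ b ∈ U, (9 * K : ℝ) ^ d / lam * ∑ y ∈ latticeBall d (ZdEmbed d b) (r b), φ y :=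
          Finset.sum_le_sum hcount
      _ = (9 * K : ℝ) ^ d / lam * ∑ b ∈ U, ∑ y ∈ latticeBall d (ZdEmbed d b) (r b), φ y := by
          rw [Finset.mul_sum]
      _ ≤ (9 * K : ℝ) ^ d / lam * ∑ y ∈ box d (R + K * T), φ y := by
          apply mul_le_mul_of_nonneg_left hsum (by positivity)
  calc (E.card : ℝ) * lam ≤ ((9 * K : ℝ) ^ d / lam * ∑ y ∈ box d (R + K * T), φ y) * lam :=
        mul_le_mul_of_nonneg_right final hlam.le
    _ = (9 * K : ℝ) ^ d * ∑ y ∈ box d (R + K * T), φ y := by field_simp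

lemma latticeBall_translate (d : ℕ) (z : Fin d → ℤ) (ρ : ℝ) :
    latticeBall d (ZdEmbed d z) ρ = (latticeBall d 0 ρ).map (addRightEmbedding z) := by
  ext y
  rw [mem_latticeBall, Finset.mem_map]
  constructor
  · intro hy
    refine ⟨y - z, ?_, by simp [addRightEmbedding_apply]⟩
    rw [mem_latticeBall, sub_zero, zd_sub]
    exact hy
  · rintro ⟨x, hx, rfl⟩
    rw [mem_latticeBall, sub_zero] at hx
    rw [addRightEmbedding_apply, zd_add]
    simpa using hx

lemma sum_translate (d : ℕ) (z : Fin d → ℤ) (ρ : ℝ) (ψ : (Fin d → ℤ) → ℝ) :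
    ∑ y ∈ latticeBall d (ZdEmbed d z) ρ, ψ y = ∑ x ∈ latticeBall d 0 ρ, ψ (x + z) := by
  rw [latticeBall_translate, Finset.sum_map]
  simp [addRightEmbedding_apply]

/-- Weak type (1,1) maximal inequality via the transfer principle. -/
lemma maximal_ineq (d K T : ℕ) (hK : 1 ≤ K) (hT : 1 ≤ T)
    {Ω : Type*} [MeasurableSpace Ω] (Q : Measure Ω) [IsProbabilityMeasure Q]
    (τ : (Fin d → ℤ) → Ω → Ω)
    (hτ_meas : ∀ z, Measurable (τ z))
    (hτ_add : ∀ z w, τ (z + w) = τ z ∘ τ w)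
    (hτ_pres : ∀ z, MeasurePreserving (τ z) Q Q)
    (h : Ω → ℝ) (hmeas : Measurable h) (h0 : ∀ ω, 0 ≤ h ω) (C : ℝ) (hCb : ∀ ω, h ω ≤ C)
    (lam : ℝ) (hlam : 0 < lam) :
    Q {ω | ∃ n : ℕ, 1 ≤ n ∧ n ≤ T ∧
        lam * (n : ℝ) ^ d < ∑ x ∈ latticeBall d 0 ((K : ℝ) * n), h (τ x ω)} ≤
      ENNReal.ofReal ((9 * K : ℝ) ^ d / lam * ∫ ω, h ω ∂Q) := by
  classical
  set G : Set Ω := {ω | ∃ n : ℕ, 1 ≤ n ∧ n ≤ T ∧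
      lam * (n : ℝ) ^ d < ∑ x ∈ latticeBall d 0 ((K : ℝ) * n), h (τ x ω)} with hG_def
  have hSn_meas : ∀ n : ℕ, Measurable (fun ω => ∑ x ∈ latticeBall d 0 ((K : ℝ) * n), h (τ x ω)) :=
    fun n => Finset.measurable_sum _ (fun x _ => hmeas.comp (hτ_meas x))
  have hG_meas : MeasurableSet G := by
    have : G = ⋃ n : ℕ, {ω | 1 ≤ n ∧ n ≤ T ∧
        lam * (n : ℝ) ^ d < ∑ x ∈ latticeBall d 0 ((K : ℝ) * n), h (τ x ω)} := by
      ext ω; simp only [hG_def, Set.mem_setOf_eq, Set.mem_iUnion]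
    rw [this]
    refine MeasurableSet.iUnion (fun n => ?_)
    by_cases hn : 1 ≤ n ∧ n ≤ T
    · have : {ω | 1 ≤ n ∧ n ≤ T ∧
          lam * (n : ℝ) ^ d < ∑ x ∈ latticeBall d 0 ((K : ℝ) * n), h (τ x ω)} =
          {ω | lam * (n : ℝ) ^ d < ∑ x ∈ latticeBall d 0 ((K : ℝ) * n), h (τ x ω)} := by
        ext ω; simp [hn.1, hn.2]
      rw [this]
      exact measurableSet_lt measurable_const (hSn_meas n)
    · have : {ω | 1 ≤ n ∧ n ≤ T ∧
          lam * (n : ℝ) ^ d < ∑ x ∈ latticeBall d 0 ((K : ℝ) * n), h (τ x ω)} = ∅ := by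
        ext ω; simp only [Set.mem_setOf_eq, Set.mem_empty_iff_false, iff_false]
        intro hcon; exact hn ⟨hcon.1, hcon.2.1⟩
      rw [this]; exact MeasurableSet.empty
  -- pointwise covering bound
  have hptwise : ∀ (R : ℕ) (ω : Ω),
      ((((box d R).filter (fun z => τ z ω ∈ G)).card : ℝ)) * lam ≤
        (9 * K : ℝ) ^ d * ∑ y ∈ box d (R + K * T), h (τ y ω) := by
    intro R ω
    apply covering d K T hK hT lam hlam _ (fun y => h0 _) R
    · intro z hz; exact Finset.mem_of_mem_filter z hz |> fun hz' => (Finset.mem_filter.mp hz).1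
    · intro z hz
      have hzG : τ z ω ∈ G := (Finset.mem_filter.mp hz).2
      obtain ⟨n, h1, h2, h3⟩ := hzG
      refine ⟨n, h1, h2, ?_⟩
      rw [sum_translate]
      calc lam * (n : ℝ) ^ d < ∑ x ∈ latticeBall d 0 ((K : ℝ) * n), h (τ x (τ z ω)) := h3
        _ = ∑ x ∈ latticeBall d 0 ((K : ℝ) * n), h (τ (x + z) ω) := by
            apply Finset.sum_congr rfl
            intro x _
            rw [hτ_add x z]; rfl
  -- integrate the pointwise bound
  have hcard_eq : ∀ (R : ℕ) (ω : Ω),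
      ((((box d R).filter (fun z => τ z ω ∈ G)).card : ℝ)) =
        ∑ z ∈ box d R, (τ z ⁻¹' G).indicator (fun _ => (1 : ℝ)) ω := by
    intro R ω
    rw [Finset.card_filter]
    push_cast
    apply Finset.sum_congr rfl
    intro z _
    by_cases hz : τ z ω ∈ G
    · simp [Set.indicator_apply, hz]
    · simp [Set.indicator_apply, hz]
  have hind_int : ∀ z : Fin d → ℤ,
      Integrable ((τ z ⁻¹' G).indicator (fun _ => (1 : ℝ))) Q :=
    fun z => (integrable_const (1 : ℝ)).indicator (hτ_meas z hG_meas)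
  have hint_ind : ∀ z : Fin d → ℤ,
      ∫ ω, (τ z ⁻¹' G).indicator (fun _ => (1 : ℝ)) ω ∂Q = (Q G).toReal := by
    intro z
    rw [MeasureTheory.integral_indicator_const (1 : ℝ) (hτ_meas z hG_meas)]
    rw [smul_eq_mul, mul_one]
    rw [measureReal_def]
    congr 1
    exact (hτ_pres z).measure_preimage hG_meas.nullMeasurableSet
  have hcomp_int : ∀ y : Fin d → ℤ, Integrable (fun ω => h (τ y ω)) Q := by
    intro y
    have : Integrable h Q := by
      apply Integrable.mono' (integrable_const (max C 0))
      · exact hmeas.aestronglyMeasurable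
      · filter_upwards with ω
        rw [Real.norm_eq_abs, abs_of_nonneg (h0 ω)]
        exact (hCb ω).trans (le_max_left _ _)
    have hmap : Integrable h (Q.map (τ y)) := by rwa [(hτ_pres y).map_eq]
    exact hmap.comp_measurable (hτ_meas y)
  have hint_comp : ∀ y : Fin d → ℤ, ∫ ω, h (τ y ω) ∂Q = ∫ ω, h ω ∂Q := by
    intro y
    rw [← MeasureTheory.integral_map (hτ_meas y).aemeasurable hmeas.aestronglyMeasurable,
      (hτ_pres y).map_eq]
  have hineq : ∀ R : ℕ, ((box d R).card : ℝ) * (Q G).toReal * lam ≤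
      (9 * K : ℝ) ^ d * ((box d (R + K * T)).card : ℝ) * ∫ ω, h ω ∂Q := by
    intro R
    have hL : ∫ ω, (∑ z ∈ box d R, (τ z ⁻¹' G).indicator (fun _ => (1 : ℝ)) ω) * lam ∂Q =
        ((box d R).card : ℝ) * (Q G).toReal * lam := by
      rw [integral_mul_const, integral_finset_sum _ (fun z _ => hind_int z)]
      rw [Finset.sum_congr rfl (fun z _ => hint_ind z)]
      rw [Finset.sum_const, nsmul_eq_mul]
    have hR : ∫ ω, (9 * K : ℝ) ^ d * ∑ y ∈ box d (R + K * T), h (τ y ω) ∂Q =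
        (9 * K : ℝ) ^ d * ((box d (R + K * T)).card : ℝ) * ∫ ω, h ω ∂Q := by
      rw [integral_const_mul, integral_finset_sum _ (fun y _ => hcomp_int y)]
      rw [Finset.sum_congr rfl (fun y _ => hint_comp y), Finset.sum_const, nsmul_eq_mul]
      ring
    rw [← hL, ← hR]
    apply integral_mono
    · exact (MeasureTheory.integrable_finset_sum _ (fun z _ => hind_int z)).mul_const lam
    · exact (MeasureTheory.integrable_finset_sum _ (fun y _ => hcomp_int y)).const_mul _
    · intro ω
      have := hptwise R ω
      rw [hcard_eq R ω] at this
      exact this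
  -- take R → ∞
  set a : ℝ := (Q G).toReal * lam with ha_def
  set c : ℝ := (9 * K : ℝ) ^ d * ∫ ω, h ω ∂Q with hc_def
  have hc_nonneg : 0 ≤ c := by
    apply mul_nonneg (by positivity)
    exact integral_nonneg h0
  set s : ℕ := K * T with hs_def
  have hbound : ∀ R : ℕ, a ≤ c * ((2 * ((R : ℝ) + s) + 1) / (2 * R + 1)) ^ d := by
    intro R
    have hiq := hineq R
    rw [card_box, card_box] at hiq
    have hpos : (0 : ℝ) < (2 * (R : ℝ) + 1) ^ d := by positivity
    have hrw : c * ((2 * ((R : ℝ) + s) + 1) / (2 * R + 1)) ^ d =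
        c * (2 * ((R : ℝ) + s) + 1) ^ d / (2 * (R : ℝ) + 1) ^ d := by
      rw [div_pow]; ring
    rw [hrw, le_div_iff₀ hpos]
    have h2 : (((2 * R + 1) ^ d : ℕ) : ℝ) = (2 * (R : ℝ) + 1) ^ d := by push_cast; ring
    have h3 : (((2 * (R + K * T) + 1) ^ d : ℕ) : ℝ) = (2 * ((R : ℝ) + s) + 1) ^ d := by
      rw [hs_def]; push_cast; ring
    calc a * (2 * (R : ℝ) + 1) ^ d = (((2 * R + 1) ^ d : ℕ) : ℝ) * (Q G).toReal * lam := by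
          rw [ha_def, h2]; ring
      _ ≤ (9 * K : ℝ) ^ d * (((2 * (R + K * T) + 1) ^ d : ℕ) : ℝ) * ∫ ω, h ω ∂Q := hiq
      _ = c * (2 * ((R : ℝ) + s) + 1) ^ d := by rw [hc_def, ← h3]; ring
  have htend : Tendsto (fun R : ℕ => c * ((2 * ((R : ℝ) + s) + 1) / (2 * R + 1)) ^ d)
      atTop (𝓝 c) := by
    have h1 : Tendsto (fun R : ℕ => (2 * (R : ℝ) + 1)) atTop atTop := by
      apply Filter.tendsto_atTop_add_const_right
      exact Tendsto.const_mul_atTop two_pos tendsto_natCast_atTop_atTop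
    have h2 : Tendsto (fun R : ℕ => (2 * (s : ℝ)) / (2 * R + 1)) atTop (𝓝 0) := by
      apply Tendsto.div_atTop tendsto_const_nhds h1
    have h3 : Tendsto (fun R : ℕ => 1 + (2 * (s : ℝ)) / (2 * R + 1)) atTop (𝓝 1) := by
      have := Tendsto.const_add (1 : ℝ) h2
      simpa using this
    have heq : ∀ R : ℕ, (2 * ((R : ℝ) + s) + 1) / (2 * R + 1) =
        1 + (2 * (s : ℝ)) / (2 * R + 1) := by
      intro R
      have hne : (2 * (R : ℝ) + 1) ≠ 0 := by positivity
      field_simp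
      ring
    have h4 : Tendsto (fun R : ℕ => ((2 * ((R : ℝ) + s) + 1) / (2 * R + 1)) ^ d)
        atTop (𝓝 1) := by
      have := h3.pow d
      simp only [one_pow] at this
      apply this.congr
      intro R
      rw [heq R]
    have := h4.const_mul c
    simpa using this
  have hac : a ≤ c := ge_of_tendsto' htend hbound
  have hQG : (Q G).toReal ≤ (9 * K : ℝ) ^ d / lam * ∫ ω, h ω ∂Q := by
    rw [ha_def] at hac
    calc (Q G).toReal = (Q G).toReal * lam / lam := by field_simp
      _ ≤ c / lam := by apply div_le_div_of_nonneg_right hac hlam.le |>.trans_eq rfl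
      _ = (9 * K : ℝ) ^ d / lam * ∫ ω, h ω ∂Q := by rw [hc_def]; ring
  calc Q G = ENNReal.ofReal ((Q G).toReal) := (ENNReal.ofReal_toReal (measure_ne_top Q G)).symm
    _ ≤ ENNReal.ofReal ((9 * K : ℝ) ^ d / lam * ∫ ω, h ω ∂Q) := ENNReal.ofReal_le_ofReal hQG

end Stmt2Aux

open Stmt2Aux

/-- Ergodic-averaging core: if `1_{Ω₀} · g_k → 0` `Q`-a.s., where
`g_k(ω) = sup{ f_{n,y}(ω) : n ≥ k, |y| ≥ k }`, then for `Q`-a.e. `ω` and every `K > 0`,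
`(1/n^d) ∑_{|x| ≤ Kn} 1_{Ω₀}(τ_x ω) f_{n,x}(τ_x ω) → 0`. -/
theorem stmt2
    (d : ℕ) (hd : 1 ≤ d)
    {Ω : Type*} [MeasurableSpace Ω] (Q : Measure Ω) [IsProbabilityMeasure Q]
    (τ : (Fin d → ℤ) → Ω → Ω)
    (hτ_meas : ∀ z, Measurable (τ z))
    (hτ_zero : τ 0 = id)
    (hτ_add : ∀ z w, τ (z + w) = τ z ∘ τ w)
    (hτ_pres : ∀ z, MeasurePreserving (τ z) Q Q)
    (hτ_erg : ∀ A : Set Ω, MeasurableSet A → (∀ z, τ z ⁻¹' A = A) → Q A = 0 ∨ Q A = 1)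
    (Ω₀ : Set Ω) (hΩ₀_meas : MeasurableSet Ω₀)
    (C : ℝ) (hC : 0 < C)
    (f : ℕ → (Fin d → ℤ) → Ω → ℝ)
    (hf_meas : ∀ n x, Measurable (f n x))
    (hf_nonneg : ∀ n x ω, 0 ≤ f n x ω)
    (hf_bdd : ∀ n x ω, f n x ω ≤ C)
    (g : ℕ → Ω → ℝ)
    (hg : ∀ k ω, g k ω =
      sSup { r : ℝ | ∃ n : ℕ, ∃ y : Fin d → ℤ, k ≤ n ∧
        (k : ℝ) ≤ ‖ZdEmbed d y‖ ∧ r = f n y ω })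
    (hg_to_zero : ∀ᵐ ω ∂Q,
      Tendsto (fun k : ℕ => Ω₀.indicator (fun _ => (1 : ℝ)) ω * g k ω) atTop (𝓝 0)) :
    ∀ᵐ ω ∂Q, ∀ K : ℝ, 0 < K →
      Tendsto (fun n : ℕ =>
        (1 / (n : ℝ) ^ d) * ∑' x : Fin d → ℤ,
          Set.indicator { x : Fin d → ℤ |
              ‖ZdEmbed d x‖ ≤ K * n }
            (fun x => Ω₀.indicator (fun _ => (1 : ℝ)) (τ x ω) * f n x (τ x ω)) x)
        atTop (𝓝 0) := by
  classical
  have hd0 : 0 < d := hd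
  set i0 : Fin d := ⟨0, hd0⟩ with hi0_def
  -- the indicator function and the dominating functions H k
  set ind : Ω → ℝ := Ω₀.indicator (fun _ => (1 : ℝ)) with hind_def
  have hind_nonneg : ∀ ω, 0 ≤ ind ω := by
    intro ω; rw [hind_def]; exact Set.indicator_nonneg (fun _ _ => zero_le_one) ω
  have hind_le_one : ∀ ω, ind ω ≤ 1 := by
    intro ω; rw [hind_def, Set.indicator_apply]
    split <;> norm_num
  have hind_meas : Measurable ind := by
    rw [hind_def]; exact measurable_const.indicator hΩ₀_meas
  set H : ℕ → Ω → ℝ := fun k ω => ind ω * g k ω with hH_def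
  -- nonemptiness witness for the sup-defining set
  have hy0 : ∀ k : ℕ, (k : ℝ) ≤ ‖ZdEmbed d (fun _ => (k : ℤ))‖ := by
    intro k
    have h1 := abs_coord_le (d := d) (fun _ => (k : ℤ)) 0 i0
    have h2 : ((0 : EuclideanSpace ℝ (Fin d))) i0 = 0 := rfl
    rw [h2, sub_zero, sub_zero] at h1
    have h3 : |(((fun _ : Fin d => (k : ℤ)) i0 : ℤ) : ℝ)| = (k : ℝ) := by
      simp
    rw [h3] at h1
    exact h1
  have hSne : ∀ k (ω : Ω), { r : ℝ | ∃ n : ℕ, ∃ y : Fin d → ℤ, k ≤ n ∧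
      (k : ℝ) ≤ ‖ZdEmbed d y‖ ∧ r = f n y ω }.Nonempty := by
    intro k ω
    exact ⟨f k (fun _ => (k : ℤ)) ω, ⟨k, fun _ => (k : ℤ), le_rfl, hy0 k, rfl⟩⟩
  have hSbdd : ∀ k (ω : Ω), BddAbove { r : ℝ | ∃ n : ℕ, ∃ y : Fin d → ℤ, k ≤ n ∧
      (k : ℝ) ≤ ‖ZdEmbed d y‖ ∧ r = f n y ω } := by
    intro k ω
    refine ⟨C, ?_⟩
    rintro r ⟨n, y, -, -, rfl⟩
    exact hf_bdd n y ω
  have hg_nonneg : ∀ k ω, 0 ≤ g k ω := by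
    intro k ω
    rw [hg]
    exact (hf_nonneg k (fun _ => (k : ℤ)) ω).trans
      (le_csSup (hSbdd k ω) ⟨k, fun _ => (k : ℤ), le_rfl, hy0 k, rfl⟩)
  have hg_le : ∀ k ω, g k ω ≤ C := by
    intro k ω
    rw [hg]
    exact csSup_le (hSne k ω) (by rintro r ⟨n, y, -, -, rfl⟩; exact hf_bdd n y ω)
  have hfg : ∀ (k n : ℕ) (x : Fin d → ℤ) (ω : Ω), k ≤ n → (k : ℝ) ≤ ‖ZdEmbed d x‖ →
      f n x ω ≤ g k ω := by
    intro k n x ω hkn hkx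
    rw [hg]
    exact le_csSup (hSbdd k ω) ⟨n, x, hkn, hkx, rfl⟩
  -- measurability of g and H
  have hg_meas : ∀ k, Measurable (g k) := by
    intro k
    have hrw : g k = fun ω => ⨆ p : {p : ℕ × (Fin d → ℤ) //
        k ≤ p.1 ∧ (k : ℝ) ≤ ‖ZdEmbed d p.2‖}, f p.1.1 p.1.2 ω := by
      funext ω
      rw [hg, iSup]
      congr 1
      ext r
      constructor
      · rintro ⟨n, y, h1, h2, rfl⟩
        exact ⟨⟨(n, y), h1, h2⟩, rfl⟩
      · rintro ⟨⟨⟨n, y⟩, h1, h2⟩, rfl⟩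
        exact ⟨n, y, h1, h2, rfl⟩
    rw [hrw]
    exact Measurable.iSup (fun p => hf_meas p.1.1 p.1.2)
  have hH_meas : ∀ k, Measurable (H k) := fun k => hind_meas.mul (hg_meas k)
  have hH_nonneg : ∀ k ω, 0 ≤ H k ω := fun k ω =>
    mul_nonneg (hind_nonneg ω) (hg_nonneg k ω)
  have hH_le : ∀ k ω, H k ω ≤ C := by
    intro k ω
    calc H k ω ≤ 1 * C := mul_le_mul (hind_le_one ω) (hg_le k ω) (hg_nonneg k ω) zero_le_one
      _ = C := one_mul C
  -- the integrals of H k tend to 0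
  have hH_int : ∀ k, Integrable (H k) Q := by
    intro k
    apply Integrable.mono' (integrable_const C)
    · exact (hH_meas k).aestronglyMeasurable
    · filter_upwards with ω
      rw [Real.norm_eq_abs, abs_of_nonneg (hH_nonneg k ω)]
      exact hH_le k ω
  have hint_tendsto : Tendsto (fun k => ∫ ω, H k ω ∂Q) atTop (𝓝 0) := by
    have h0 : (0 : ℝ) = ∫ _ω, (0 : ℝ) ∂Q := by rw [integral_zero]
    rw [h0]
    apply MeasureTheory.tendsto_integral_of_dominated_convergence (fun _ => C)
    · exact fun k => (hH_meas k).aestronglyMeasurable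
    · exact integrable_const C
    · intro k
      filter_upwards with ω
      rw [Real.norm_eq_abs, abs_of_nonneg (hH_nonneg k ω)]
      exact hH_le k ω
    · exact hg_to_zero
  -- the key a.e. statement via the maximal inequality
  have key : ∀ᵐ ω ∂Q, ∀ K' m : ℕ, ∃ k : ℕ, ∀ n : ℕ, 1 ≤ n →
      ∑ x ∈ latticeBall d 0 (((K' + 1 : ℕ) : ℝ) * n), H k (τ x ω) ≤
        (1 / ((m : ℝ) + 1)) * (n : ℝ) ^ d := by
    rw [MeasureTheory.ae_all_iff]
    intro K'
    rw [MeasureTheory.ae_all_iff]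
    intro m
    set lam : ℝ := 1 / ((m : ℝ) + 1) with hlam_def
    have hlam : 0 < lam := by rw [hlam_def]; positivity
    set D : ℕ → Set Ω := fun k => {ω | ∃ n : ℕ, 1 ≤ n ∧
        lam * (n : ℝ) ^ d < ∑ x ∈ latticeBall d 0 (((K' + 1 : ℕ) : ℝ) * n), H k (τ x ω)}
      with hD_def
    have hDk : ∀ k, Q (D k) ≤ ENNReal.ofReal
        ((9 * (K' + 1 : ℕ) : ℝ) ^ d / lam * ∫ ω, H k ω ∂Q) := by
      intro k
      set GT : ℕ → Set Ω := fun T => {ω | ∃ n : ℕ, 1 ≤ n ∧ n ≤ T + 1 ∧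
          lam * (n : ℝ) ^ d < ∑ x ∈ latticeBall d 0 (((K' + 1 : ℕ) : ℝ) * n), H k (τ x ω)}
        with hGT_def
      have hDU : D k = ⋃ T : ℕ, GT T := by
        ext ω
        simp only [hD_def, hGT_def, Set.mem_setOf_eq, Set.mem_iUnion]
        constructor
        · rintro ⟨n, h1, h2⟩
          exact ⟨n, n, h1, Nat.le_succ n, h2⟩
        · rintro ⟨T, n, h1, _, h2⟩
          exact ⟨n, h1, h2⟩
      have hmono : Monotone GT := by
        intro T T' hTT'
        rintro ω ⟨n, h1, h2, h3⟩
        exact ⟨n, h1, h2.trans (by omega), h3⟩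
      have hGTbound : ∀ T, Q (GT T) ≤ ENNReal.ofReal
          ((9 * (K' + 1 : ℕ) : ℝ) ^ d / lam * ∫ ω, H k ω ∂Q) := by
        intro T
        exact maximal_ineq d (K' + 1) (T + 1) (Nat.le_add_left 1 K') (Nat.le_add_left 1 T)
          Q τ hτ_meas hτ_add hτ_pres (H k) (hH_meas k) (hH_nonneg k) C (hH_le k) lam hlam
      rw [hDU, Directed.measure_iUnion (hmono.directed_le)]
      exact iSup_le hGTbound
    have hnull : Q (⋂ k, D k) = 0 := by
      have hb : Tendsto (fun k => ENNReal.ofReal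
          ((9 * (K' + 1 : ℕ) : ℝ) ^ d / lam * ∫ ω, H k ω ∂Q)) atTop (𝓝 0) := by
        have h1 : Tendsto (fun k => (9 * (K' + 1 : ℕ) : ℝ) ^ d / lam * ∫ ω, H k ω ∂Q)
            atTop (𝓝 0) := by
          have := hint_tendsto.const_mul ((9 * (K' + 1 : ℕ) : ℝ) ^ d / lam)
          simpa using this
        have := ENNReal.tendsto_ofReal h1
        rwa [ENNReal.ofReal_zero] at this
      have hle : ∀ k, Q (⋂ j, D j) ≤ ENNReal.ofReal
          ((9 * (K' + 1 : ℕ) : ℝ) ^ d / lam * ∫ ω, H k ω ∂Q) :=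
        fun k => (measure_mono (Set.iInter_subset D k)).trans (hDk k)
      exact le_antisymm (ge_of_tendsto' hb hle) zero_le
    have : ∀ᵐ ω ∂Q, ω ∉ ⋂ k, D k := by
      rw [← MeasureTheory.measure_eq_zero_iff_ae_notMem]
      exact hnull
    filter_upwards [this] with ω hω
    rw [Set.mem_iInter] at hω
    push_neg at hω
    obtain ⟨k, hk⟩ := hω
    refine ⟨k, ?_⟩
    intro n hn
    rw [hD_def] at hk
    simp only [Set.mem_setOf_eq, not_exists, not_and, not_lt] at hk
    exact hk n hn
  -- final assembly
  filter_upwards [key] with ω hω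
  intro K hK
  set K' : ℕ := ⌈K⌉₊ with hK'_def
  have hK'pos : 0 < K' := Nat.ceil_pos.mpr hK
  have hKK' : K ≤ (K' : ℝ) := Nat.le_ceil K
  rw [Metric.tendsto_atTop]
  intro ε hε
  obtain ⟨m, hm⟩ := exists_nat_one_div_lt (half_pos hε)
  obtain ⟨k, hk⟩ := hω (K' - 1) m
  have hK'eq : K' - 1 + 1 = K' := Nat.succ_pred_eq_of_pos hK'pos
  rw [hK'eq] at hk
  set Nk : ℝ := ((latticeBall d 0 (k : ℝ)).card : ℝ) with hNk_def
  have hNk_nonneg : 0 ≤ Nk := by rw [hNk_def]; positivity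
  have hNtend : Tendsto (fun n : ℕ => C * Nk / (n : ℝ) ^ d) atTop (𝓝 0) := by
    have h1 : Tendsto (fun n : ℕ => ((n : ℝ)) ^ d) atTop atTop :=
      (tendsto_pow_atTop hd0.ne').comp tendsto_natCast_atTop_atTop
    exact Tendsto.div_atTop tendsto_const_nhds h1
  have hNev : ∀ᶠ n : ℕ in atTop, C * Nk / (n : ℝ) ^ d < ε / 2 :=
    hNtend.eventually_lt_const (half_pos hε)
  obtain ⟨N1, hN1⟩ := eventually_atTop.mp hNev
  refine ⟨max (max N1 k) 1, ?_⟩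
  intro n hn
  have hn1 : 1 ≤ n := le_trans (le_max_right _ 1) hn
  have hnk : k ≤ n := le_trans ((le_max_right N1 k).trans (le_max_left _ 1)) hn
  have hnN1 : N1 ≤ n := le_trans ((le_max_left N1 k).trans (le_max_left _ 1)) hn
  have hnpos : (0 : ℝ) < (n : ℝ) ^ d := by
    have : (0 : ℝ) < (n : ℝ) := by exact_mod_cast hn1
    positivity
  -- compute the tsum as a finite sum
  set F : (Fin d → ℤ) → ℝ := Set.indicator { x : Fin d → ℤ | ‖ZdEmbed d x‖ ≤ K * n }
      (fun x => ind (τ x ω) * f n x (τ x ω)) with hF_def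
  set sK : Finset (Fin d → ℤ) := latticeBall d 0 (K * n) with hsK_def
  have htsum : ∑' x : Fin d → ℤ, F x = ∑ x ∈ sK, F x := by
    apply tsum_eq_sum
    intro x hx
    rw [hsK_def, mem_latticeBall, sub_zero] at hx
    rw [hF_def]
    exact Set.indicator_of_notMem (by exact hx) _
  have hF_nonneg : ∀ x, 0 ≤ F x := by
    intro x
    rw [hF_def]
    exact Set.indicator_nonneg
      (fun x _ => mul_nonneg (hind_nonneg _) (hf_nonneg n x _)) x
  -- bound the finite sum
  have hsum_bound : ∑ x ∈ sK, F x ≤ C * Nk +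
      ∑ x ∈ latticeBall d 0 ((K' : ℝ) * n), H k (τ x ω) := by
    rw [← Finset.sum_filter_add_sum_filter_not sK (fun x => ‖ZdEmbed d x‖ < (k : ℝ))]
    apply add_le_add
    · -- near part
      calc ∑ x ∈ sK.filter (fun x => ‖ZdEmbed d x‖ < (k : ℝ)), F x
          ≤ ∑ _x ∈ sK.filter (fun x => ‖ZdEmbed d x‖ < (k : ℝ)), C := by
            apply Finset.sum_le_sum
            intro x hx
            rw [hF_def, Set.indicator_apply]
            split_ifs
            · calc ind (τ x ω) * f n x (τ x ω) ≤ 1 * C :=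
                  mul_le_mul (hind_le_one _) (hf_bdd n x _) (hf_nonneg n x _) zero_le_one
                _ = C := one_mul C
            · exact hC.le
        _ = (sK.filter (fun x => ‖ZdEmbed d x‖ < (k : ℝ))).card * C := by
            rw [Finset.sum_const, nsmul_eq_mul]
        _ ≤ Nk * C := by
            apply mul_le_mul_of_nonneg_right _ hC.le
            rw [hNk_def]
            have hsub : sK.filter (fun x => ‖ZdEmbed d x‖ < (k : ℝ)) ⊆
                latticeBall d 0 (k : ℝ) := by
              intro x hx
              have := (Finset.mem_filter.mp hx).2
              rw [mem_latticeBall, sub_zero]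
              exact this.le
            exact_mod_cast Finset.card_le_card hsub
        _ = C * Nk := mul_comm _ _
    · -- far part
      calc ∑ x ∈ sK.filter (fun x => ¬ ‖ZdEmbed d x‖ < (k : ℝ)), F x
          ≤ ∑ x ∈ sK.filter (fun x => ¬ ‖ZdEmbed d x‖ < (k : ℝ)), H k (τ x ω) := by
            apply Finset.sum_le_sum
            intro x hx
            have hxk : (k : ℝ) ≤ ‖ZdEmbed d x‖ := not_lt.mp (Finset.mem_filter.mp hx).2
            rw [hF_def, Set.indicator_apply]
            split_ifs
            · exact mul_le_mul_of_nonneg_left (hfg k n x (τ x ω) hnk hxk) (hind_nonneg _)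
            · exact hH_nonneg k _
        _ ≤ ∑ x ∈ latticeBall d 0 ((K' : ℝ) * n), H k (τ x ω) := by
            apply Finset.sum_le_sum_of_subset_of_nonneg
            · intro x hx
              have hx1 := Finset.mem_filter.mp hx |>.1
              rw [hsK_def, mem_latticeBall, sub_zero] at hx1
              rw [mem_latticeBall, sub_zero]
              refine hx1.trans ?_
              apply mul_le_mul_of_nonneg_right hKK' (by positivity)
            · intro x _ _
              exact mul_nonneg (hind_nonneg _) (hg_nonneg k _)
  -- conclude
  have hfar : (1 / (n : ℝ) ^ d) * ∑ x ∈ latticeBall d 0 ((K' : ℝ) * n), H k (τ x ω) ≤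
      1 / ((m : ℝ) + 1) := by
    have := hk n hn1
    calc (1 / (n : ℝ) ^ d) * ∑ x ∈ latticeBall d 0 ((K' : ℝ) * n), H k (τ x ω)
        ≤ (1 / (n : ℝ) ^ d) * ((1 / ((m : ℝ) + 1)) * (n : ℝ) ^ d) := by
          apply mul_le_mul_of_nonneg_left _ (by positivity)
          exact_mod_cast this
      _ = 1 / ((m : ℝ) + 1) := by field_simp
  have hval_nonneg : 0 ≤ (1 / (n : ℝ) ^ d) * ∑' x : Fin d → ℤ, F x := by
    apply mul_nonneg (by positivity)
    rw [htsum]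
    exact Finset.sum_nonneg (fun x _ => hF_nonneg x)
  have hval_lt : (1 / (n : ℝ) ^ d) * ∑' x : Fin d → ℤ, F x < ε := by
    rw [htsum]
    calc (1 / (n : ℝ) ^ d) * ∑ x ∈ sK, F x
        ≤ (1 / (n : ℝ) ^ d) * (C * Nk +
            ∑ x ∈ latticeBall d 0 ((K' : ℝ) * n), H k (τ x ω)) :=
          mul_le_mul_of_nonneg_left hsum_bound (by positivity)
      _ = C * Nk / (n : ℝ) ^ d +
            (1 / (n : ℝ) ^ d) * ∑ x ∈ latticeBall d 0 ((K' : ℝ) * n), H k (τ x ω) := by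
          ring
      _ < ε / 2 + ε / 2 := by
          apply add_lt_add_of_lt_of_le (hN1 n hnN1)
          exact hfar.trans hm.le
      _ = ε := add_halves ε
  rw [Real.dist_eq, sub_zero, abs_of_nonneg hval_nonneg]
  exact hval_lt
end
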